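/- arXiv:1507.02980 — 7 statements merged into one kernel-verified Lean document; each statement's English description precedes it below -/
import Mathlib

section
/- Let d = 4N for an integer N ≥ 1, and let γ, ξ, η, D > 0 with kernel C(z) = γξ e^{-ηz}/(4πDz) for z > 0. Fix y₀ ∈ ℝ^d and a, b > 0. Suppose q : ℝ^d → ℝ^d is continuous and satisfies ‖q(y₁) - q(y₂)‖ ≤ L₁‖y₁ - y₂‖ for all y₁, y₂ in the closed ball B̄(y₀, b), and p : (0,∞) × ℝ^d × ℝ^d → ℝ^d is continuous with ‖p(h, u, v)‖ ≤ M̄√(2N)·√(4Dh) for all h > 0 and all u, v ∈ B̄(y₀, b), and ‖p(h, u₁, v₁) - p(h, u₂, v₂)‖ ≤ √(4Dh)·L₂(‖u₁ - u₂‖ + ‖v₁ - v₂‖) for all h > 0 and u₁, u₂, v₁, v₂ ∈ B̄(y₀, b), where L₁, L₂, M̄ > 0. Let M₁ = sup of ‖q(y)‖ over B̄(y₀, b), M₂ = sup over 0 ≤ τ ≤ t ≤ a and y-values in B̄(y₀, b) of ‖∫_τ^t C(s-τ) p(s-τ, y(s), y(τ)) ds‖, M = ∫₀^∞ C(z)√(4Dz)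 dz, and T = min(a, b/(M₁+M₂), 1/(L₁ + 2L₂M)). Then the integral equation y(t) = y₀ + ∫₀^t [q(y(τ)) + ∫_τ^t C(s-τ) p(s-τ, y(s), y(τ)) ds] dτ has exactly one continuous solution y : [0,T] → ℝ^d with ‖y(t) - y₀‖ ≤ b for all t ∈ [0,T]. -/
open MeasureTheory Metric Set Filter

namespace VolterraAux

/-- Auxiliary: `√x - √y ≤ √(x - y)`. -/
lemma sqrt_sub_le {x y : ℝ} (h0 : 0 ≤ y) (h : y ≤ x) :
    Real.sqrt x - Real.sqrt y ≤ Real.sqrt (x - y) := by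
  have h1 : x ≤ (Real.sqrt y + Real.sqrt (x - y)) ^ 2 := by
    have hy := Real.sq_sqrt h0
    have hxy := Real.sq_sqrt (sub_nonneg.2 h)
    have := Real.sqrt_nonneg y
    have := Real.sqrt_nonneg (x - y)
    nlinarith
  have h2 : Real.sqrt x ≤ Real.sqrt y + Real.sqrt (x - y) := by
    have := Real.sqrt_le_sqrt h1
    rwa [Real.sqrt_sq (by positivity)] at this
  linarith

structure Data (E : Type*) [NormedAddCommGroup E] [NormedSpace ℝ E] where
  C : ℝ → ℝ
  p : ℝ → E → E → E
  q : E → E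
  y₀ : E
  b : ℝ
  c : ℝ
  D : ℝ
  L₁ : ℝ
  L₂ : ℝ
  M₁ : ℝ
  M₂ : ℝ
  M : ℝ
  T : ℝ
  A' : ℝ
  hb : 0 < b
  hT0 : 0 ≤ T
  hqc : Continuous q
  hpc : ContinuousOn (fun x : ℝ × E × E => p x.1 x.2.1 x.2.2) (Set.Ioi (0:ℝ) ×ˢ Set.univ)
  hCc : ContinuousOn C (Set.Ioi 0)
  hc : 0 ≤ c
  hA' : 0 ≤ A'
  hMnn : 0 ≤ M
  hM₁nn : 0 ≤ M₁
  hM₂nn : 0 ≤ M₂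
  hL₁ : 0 < L₁
  hL₂ : 0 < L₂
  hgint : MeasureTheory.IntegrableOn (fun z => C z * Real.sqrt (4 * D * z)) (Set.Ioi 0)
  hgnn : ∀ z > (0:ℝ), 0 ≤ C z * Real.sqrt (4 * D * z)
  hCnn : ∀ z > (0:ℝ), 0 ≤ C z
  hG_le : ∀ w : ℝ, (∫ z in Set.Ioc 0 w, C z * Real.sqrt (4 * D * z)) ≤ M
  hG_tail : ∀ w₁ w₂ : ℝ, 0 ≤ w₁ → w₁ ≤ w₂ →
    (∫ z in Set.Ioc w₁ w₂, C z * Real.sqrt (4 * D * z)) ≤ A' * Real.sqrt (w₂ - w₁)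
  hpB : ∀ h > (0:ℝ), ∀ u ∈ Metric.closedBall y₀ b, ∀ v ∈ Metric.closedBall y₀ b,
    ‖p h u v‖ ≤ c * Real.sqrt (4 * D * h)
  hpL : ∀ h > (0:ℝ), ∀ u₁ ∈ Metric.closedBall y₀ b, ∀ u₂ ∈ Metric.closedBall y₀ b,
    ∀ v₁ ∈ Metric.closedBall y₀ b, ∀ v₂ ∈ Metric.closedBall y₀ b,
    ‖p h u₁ v₁ - p h u₂ v₂‖ ≤ Real.sqrt (4 * D * h) * (L₂ * (‖u₁ - u₂‖ + ‖v₁ - v₂‖))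
  hqL : ∀ y₁ ∈ Metric.closedBall y₀ b, ∀ y₂ ∈ Metric.closedBall y₀ b,
    ‖q y₁ - q y₂‖ ≤ L₁ * ‖y₁ - y₂‖
  hqM₁ : ∀ v ∈ Metric.closedBall y₀ b, ‖q v‖ ≤ M₁
  hMM : (M₁ + M₂) * T ≤ b
  hL₂MT : L₂ * M * T ≤ 1/2
  hM₂bd : ∀ y : ℝ → E, Continuous y → (∀ s, y s ∈ Metric.closedBall y₀ b) →
    ∀ τ t : ℝ, 0 ≤ τ → τ ≤ t → t ≤ T →
    ‖∫ u in Set.Ioc 0 (t - τ), C u • p u (y (u + τ)) (y τ)‖ ≤ M₂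

variable {E : Type*} [NormedAddCommGroup E] [NormedSpace ℝ E]

noncomputable def Data.g (S : Data E) : ℝ → ℝ := fun z => S.C z * Real.sqrt (4 * S.D * z)

def Data.Adm (S : Data E) (y : ℝ → E) : Prop :=
  Continuous y ∧ ∀ s, y s ∈ Metric.closedBall S.y₀ S.b

def Data.F (S : Data E) (y : ℝ → E) (τ : ℝ) : ℝ → E :=
  fun u => S.C u • S.p u (y (u + τ)) (y τ)

noncomputable def Data.Ibar [CompleteSpace E] (S : Data E) (y : ℝ → E) (τ t : ℝ) : E :=
  ∫ u in Set.Ioc 0 (t - τ), S.F y τ u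

noncomputable def Data.Phi [CompleteSpace E] (S : Data E) (y : ℝ → E) (t : ℝ) : E :=
  S.y₀ + ∫ τ in Set.Ioc 0 t, (S.q (y τ) + S.Ibar y τ t)

noncomputable def Data.lam (S : Data E) : ℝ := 4 * (S.L₁ + S.L₂ * S.M)

variable (S : Data E)

lemma Data.hgint' : IntegrableOn (fun z => S.c * S.g z) (Set.Ioi 0) :=
  (S.hgint.const_mul _)

lemma Data.lam_pos : 0 < S.lam := by
  have := S.hL₁; have := S.hL₂; have := S.hMnn
  have : 0 < S.L₁ + S.L₂ * S.M := by nlinarith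
  simp only [Data.lam]; linarith

/-- Continuity of the inner integrand on `Ioi 0`. -/
lemma Data.F_contOn (hy : S.Adm y) (τ : ℝ) : ContinuousOn (S.F y τ) (Set.Ioi 0) := by
  have h1 : ContinuousOn (fun u : ℝ => S.p u (y (u + τ)) (y τ)) (Set.Ioi 0) := by
    have hmap : ∀ u ∈ Set.Ioi (0:ℝ), ((u, (y (u + τ), y τ)) : ℝ × E × E) ∈
        Set.Ioi (0:ℝ) ×ˢ (Set.univ : Set (E × E)) := fun u hu => ⟨hu, trivial⟩
    have hcont : Continuous (fun u : ℝ => ((u, (y (u + τ), y τ)) : ℝ × E × E)) := by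
      exact continuous_id.prodMk ((hy.1.comp (continuous_id.add continuous_const)).prodMk
        continuous_const)
    exact (S.hpc.comp hcont.continuousOn hmap)
  exact S.hCc.smul h1

lemma Data.F_bound (hy : S.Adm y) (τ : ℝ) {u : ℝ} (hu : u ∈ Set.Ioi (0:ℝ)) :
    ‖S.F y τ u‖ ≤ S.c * S.g u := by
  have hu' : (0:ℝ) < u := hu
  have : ‖S.F y τ u‖ = |S.C u| * ‖S.p u (y (u + τ)) (y τ)‖ := norm_smul _ _
  rw [this, abs_of_nonneg (S.hCnn u hu')]
  have hb := S.hpB u hu' (y (u + τ)) (hy.2 _) (y τ) (hy.2 _)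
  calc S.C u * ‖S.p u (y (u + τ)) (y τ)‖ ≤ S.C u * (S.c * Real.sqrt (4 * S.D * u)) := by
        exact mul_le_mul_of_nonneg_left hb (S.hCnn u hu')
    _ = S.c * S.g u := by simp only [Data.g]; ring

lemma Data.F_int (hy : S.Adm y) (τ w : ℝ) : IntegrableOn (S.F y τ) (Set.Ioc 0 w) := by
  have hsub : Set.Ioc (0:ℝ) w ⊆ Set.Ioi 0 := Set.Ioc_subset_Ioi_self
  have hmeas : AEStronglyMeasurable (S.F y τ) (volume.restrict (Set.Ioc 0 w)) :=
    ((S.F_contOn hy τ).mono hsub).aestronglyMeasurable measurableSet_Ioc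
  refine Integrable.mono' (S.hgint'.mono_set hsub) hmeas ?_
  exact (ae_restrict_iff' measurableSet_Ioc).2
    (ae_of_all _ fun u hu => S.F_bound hy τ (hsub hu))

variable {E : Type*} [NormedAddCommGroup E] [NormedSpace ℝ E] [CompleteSpace E]
variable (S : Data E) {y z : ℝ → E}

omit [CompleteSpace E] in
lemma Data.G_nonneg (w : ℝ) : 0 ≤ ∫ u in Set.Ioc 0 w, S.g u :=
  setIntegral_nonneg measurableSet_Ioc fun u hu => S.hgnn u hu.1

/-- crude bound on the inner integral. -/
lemma Data.Ibar_le_cM (hy : S.Adm y) (τ t : ℝ) : ‖S.Ibar y τ t‖ ≤ S.c * S.M := by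
  have h1 : ‖S.Ibar y τ t‖ ≤ ∫ u in Set.Ioc 0 (t - τ), S.c * S.g u := by
    refine norm_integral_le_of_norm_le (S.hgint'.mono_set Set.Ioc_subset_Ioi_self) ?_
    exact (ae_restrict_iff' measurableSet_Ioc).2
      (ae_of_all _ fun u hu => S.F_bound hy τ (Set.Ioc_subset_Ioi_self hu))
  have h2 : (∫ u in Set.Ioc 0 (t - τ), S.c * S.g u) = S.c * ∫ u in Set.Ioc 0 (t - τ), S.g u :=
    MeasureTheory.integral_const_mul _ _
  have h3 := S.hG_le (t - τ)
  calc ‖S.Ibar y τ t‖ ≤ S.c * ∫ u in Set.Ioc 0 (t - τ), S.g u := by rw [← h2]; exact h1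
    _ ≤ S.c * S.M := mul_le_mul_of_nonneg_left h3 S.hc

/-- Lipschitz-type bound on the inner integral. -/
lemma Data.Ibar_lip (hy : S.Adm y) (hz : S.Adm z) {τ t δ : ℝ} (hτ0 : 0 ≤ τ) (hτt : τ ≤ t)
    (hd : ∀ σ ∈ Set.Icc 0 t, ‖y σ - z σ‖ ≤ δ) :
    ‖S.Ibar y τ t - S.Ibar z τ t‖ ≤ S.L₂ * S.M * (δ + ‖y τ - z τ‖) := by
  have hδ0 : 0 ≤ δ := le_trans (norm_nonneg _) (hd τ ⟨hτ0, hτt⟩)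
  set K : ℝ := S.L₂ * (δ + ‖y τ - z τ‖) with hK
  have hK0 : 0 ≤ K := mul_nonneg S.hL₂.le (by positivity)
  have hsub : Set.Ioc (0:ℝ) (t - τ) ⊆ Set.Ioi 0 := Set.Ioc_subset_Ioi_self
  have h1 : ‖S.Ibar y τ t - S.Ibar z τ t‖ ≤ ∫ u in Set.Ioc 0 (t - τ), K * S.g u := by
    rw [Data.Ibar, Data.Ibar, ← integral_sub (S.F_int hy τ _) (S.F_int hz τ _)]
    have hKint : IntegrableOn (fun u => K * S.g u) (Set.Ioi 0) := S.hgint.const_mul K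
    refine norm_integral_le_of_norm_le (hKint.mono_set hsub) ?_
    refine (ae_restrict_iff' measurableSet_Ioc).2 (ae_of_all _ fun u hu => ?_)
    have hu0 : (0:ℝ) < u := hu.1
    have huτ : u + τ ∈ Set.Icc (0:ℝ) t := ⟨by linarith, by linarith [hu.2]⟩
    have hdiff : S.F y τ u - S.F z τ u
        = S.C u • (S.p u (y (u + τ)) (y τ) - S.p u (z (u + τ)) (z τ)) := by
      simp [Data.F, smul_sub]
    rw [hdiff, norm_smul, Real.norm_eq_abs, abs_of_nonneg (S.hCnn u hu0)]
    have hlip := S.hpL u hu0 (y (u + τ)) (hy.2 _) (z (u + τ)) (hz.2 _) (y τ) (hy.2 _)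
      (z τ) (hz.2 _)
    have hsum : ‖y (u + τ) - z (u + τ)‖ + ‖y τ - z τ‖ ≤ δ + ‖y τ - z τ‖ := by
      have := hd (u + τ) huτ; linarith
    calc S.C u * ‖S.p u (y (u + τ)) (y τ) - S.p u (z (u + τ)) (z τ)‖
        ≤ S.C u * (Real.sqrt (4 * S.D * u) * (S.L₂ * (‖y (u+τ) - z (u+τ)‖ + ‖y τ - z τ‖))) :=
          mul_le_mul_of_nonneg_left hlip (S.hCnn u hu0)
      _ ≤ S.C u * (Real.sqrt (4 * S.D * u) * (S.L₂ * (δ + ‖y τ - z τ‖))) := by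
          have h4 : (0:ℝ) ≤ S.C u * Real.sqrt (4 * S.D * u) := S.hgnn u hu0
          have h5 : S.L₂ * (‖y (u+τ) - z (u+τ)‖ + ‖y τ - z τ‖) ≤ S.L₂ * (δ + ‖y τ - z τ‖) :=
            mul_le_mul_of_nonneg_left hsum S.hL₂.le
          calc S.C u * (Real.sqrt (4 * S.D * u) * (S.L₂ * (‖y (u+τ) - z (u+τ)‖ + ‖y τ - z τ‖)))
              = (S.C u * Real.sqrt (4 * S.D * u)) * (S.L₂ * (‖y (u+τ) - z (u+τ)‖ + ‖y τ - z τ‖)) := by ring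
            _ ≤ (S.C u * Real.sqrt (4 * S.D * u)) * (S.L₂ * (δ + ‖y τ - z τ‖)) :=
                mul_le_mul_of_nonneg_left h5 h4
            _ = S.C u * (Real.sqrt (4 * S.D * u) * (S.L₂ * (δ + ‖y τ - z τ‖))) := by ring
      _ = K * S.g u := by simp only [hK, Data.g]; ring
  have h2 : (∫ u in Set.Ioc 0 (t - τ), K * S.g u) = K * ∫ u in Set.Ioc 0 (t - τ), S.g u :=
    MeasureTheory.integral_const_mul _ _
  calc ‖S.Ibar y τ t - S.Ibar z τ t‖ ≤ K * ∫ u in Set.Ioc 0 (t - τ), S.g u := by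
        rw [← h2]; exact h1
    _ ≤ K * S.M := mul_le_mul_of_nonneg_left (S.hG_le _) hK0
    _ = S.L₂ * S.M * (δ + ‖y τ - z τ‖) := by rw [hK]; ring

/-- Hölder-type tail bound for the inner integral as the upper limit varies. -/
lemma Data.Ibar_tail (hy : S.Adm y) {τ t₁ t₂ : ℝ} (hτ0 : 0 ≤ τ) (h1 : τ ≤ t₁) (h2 : t₁ ≤ t₂) :
    ‖S.Ibar y τ t₂ - S.Ibar y τ t₁‖ ≤ S.c * S.A' * Real.sqrt (t₂ - t₁) := by
  have hw1 : (0:ℝ) ≤ t₁ - τ := by linarith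
  have hw2 : t₁ - τ ≤ t₂ - τ := by linarith
  have hunion : Set.Ioc (0:ℝ) (t₁ - τ) ∪ Set.Ioc (t₁ - τ) (t₂ - τ) = Set.Ioc 0 (t₂ - τ) :=
    Set.Ioc_union_Ioc_eq_Ioc hw1 hw2
  have hsplit : S.Ibar y τ t₂ = S.Ibar y τ t₁ + ∫ u in Set.Ioc (t₁ - τ) (t₂ - τ), S.F y τ u := by
    rw [Data.Ibar, Data.Ibar, ← hunion,
      setIntegral_union (Set.Ioc_disjoint_Ioc_of_le le_rfl) measurableSet_Ioc (S.F_int hy τ _)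
        ((S.F_int hy τ (t₂ - τ)).mono_set
          (fun x hx => ⟨by linarith [hx.1], hx.2⟩))]
  rw [hsplit, add_sub_cancel_left]
  have hsub' : Set.Ioc (t₁ - τ) (t₂ - τ) ⊆ Set.Ioi (0:ℝ) := fun x hx => by
    simp only [Set.mem_Ioi]; linarith [hx.1]
  have hb : ‖∫ u in Set.Ioc (t₁ - τ) (t₂ - τ), S.F y τ u‖
      ≤ ∫ u in Set.Ioc (t₁ - τ) (t₂ - τ), S.c * S.g u := by
    refine norm_integral_le_of_norm_le (S.hgint'.mono_set hsub') ?_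
    exact (ae_restrict_iff' measurableSet_Ioc).2
      (ae_of_all _ fun u hu => S.F_bound hy τ (hsub' hu))
  have hgt := S.hG_tail (t₁ - τ) (t₂ - τ) hw1 hw2
  have heq : t₂ - τ - (t₁ - τ) = t₂ - t₁ := by ring
  rw [heq] at hgt
  calc ‖∫ u in Set.Ioc (t₁ - τ) (t₂ - τ), S.F y τ u‖
      ≤ S.c * ∫ u in Set.Ioc (t₁ - τ) (t₂ - τ), S.g u := by
        rw [← MeasureTheory.integral_const_mul]; exact hb
    _ ≤ S.c * (S.A' * Real.sqrt (t₂ - t₁)) := mul_le_mul_of_nonneg_left hgt S.hc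
    _ = S.c * S.A' * Real.sqrt (t₂ - t₁) := by ring



/-- Continuity of the inner integral in the delay variable. -/
lemma Data.Ibar_cont (hy : S.Adm y) (t : ℝ) : Continuous (fun τ => S.Ibar y τ t) := by
  rw [continuous_iff_continuousAt]
  intro τ₀
  have hrepr : ∀ τ : ℝ, S.Ibar y τ t
      = ∫ u, (Set.Ioc (0:ℝ) (t - τ)).indicator (S.F y τ) u ∂(volume.restrict (Set.Ioi 0)) := by
    intro τ
    rw [integral_indicator measurableSet_Ioc, Measure.restrict_restrict measurableSet_Ioc,
      Set.inter_eq_self_of_subset_left Set.Ioc_subset_Ioi_self]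
    rfl
  have key : ContinuousAt (fun τ => ∫ u, (Set.Ioc (0:ℝ) (t - τ)).indicator (S.F y τ) u
      ∂(volume.restrict (Set.Ioi 0))) τ₀ := by
    apply continuousAt_of_dominated (bound := fun u => S.c * S.g u)
    · filter_upwards with τ
      exact ((S.F_contOn hy τ).aestronglyMeasurable measurableSet_Ioi).indicator
        measurableSet_Ioc
    · filter_upwards with τ
      refine (ae_restrict_iff' measurableSet_Ioi).2 (ae_of_all _ fun u hu => ?_)
      by_cases h : u ∈ Set.Ioc (0:ℝ) (t - τ)
      · rw [Set.indicator_of_mem h]; exact S.F_bound hy τ hu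
      · rw [Set.indicator_of_notMem h, norm_zero]
        exact mul_nonneg S.hc (S.hgnn u hu)
    · exact S.hgint'
    · have hae : ∀ᵐ u ∂(volume.restrict (Set.Ioi (0:ℝ))), u ∈ Set.Ioi (0:ℝ) ∧ u ≠ t - τ₀ := by
        refine ((ae_restrict_mem measurableSet_Ioi).and ?_)
        refine ae_restrict_of_ae ?_
        rw [ae_iff]
        have : {u : ℝ | ¬ u ≠ t - τ₀} = {t - τ₀} := by ext u; simp
        rw [this]; exact Real.volume_singleton
      filter_upwards [hae] with u hu
      obtain ⟨hu0, hune⟩ := hu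
      have hcontF : ContinuousAt (fun τ => S.F y τ u) τ₀ := by
        have hpt : ((u, (y (u + τ₀), y τ₀)) : ℝ × E × E) ∈ Set.Ioi (0:ℝ) ×ˢ
            (Set.univ : Set (E × E)) := ⟨hu0, trivial⟩
        have hopen : IsOpen (Set.Ioi (0:ℝ) ×ˢ (Set.univ : Set (E × E))) :=
          isOpen_Ioi.prod isOpen_univ
        have hpa : ContinuousAt (fun x : ℝ × E × E => S.p x.1 x.2.1 x.2.2)
            ((u, (y (u + τ₀), y τ₀)) : ℝ × E × E) :=
          S.hpc.continuousAt (hopen.mem_nhds hpt)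
        have hmap : Continuous (fun τ : ℝ => ((u, (y (u + τ), y τ)) : ℝ × E × E)) :=
          continuous_const.prodMk ((hy.1.comp (continuous_const.add continuous_id)).prodMk hy.1)
        have hcomp : ContinuousAt ((fun x : ℝ × E × E => S.p x.1 x.2.1 x.2.2) ∘
            (fun τ : ℝ => ((u, (y (u + τ), y τ)) : ℝ × E × E))) τ₀ :=
          ContinuousAt.comp (g := fun x : ℝ × E × E => S.p x.1 x.2.1 x.2.2)
            (f := fun τ : ℝ => ((u, (y (u + τ), y τ)) : ℝ × E × E)) (x := τ₀)
            hpa hmap.continuousAt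
        have : ContinuousAt (fun τ : ℝ => S.p u (y (u + τ)) (y τ)) τ₀ := hcomp
        exact (continuousAt_const.smul this)
      rcases lt_or_gt_of_ne hune with hlt | hgt
      · -- u < t - τ₀ : indicator is eventually the function itself
        have hev : ∀ᶠ τ in nhds τ₀, u ∈ Set.Ioc (0:ℝ) (t - τ) := by
          have hcont2 : ContinuousAt (fun τ : ℝ => t - τ) τ₀ :=
            (continuous_const.sub continuous_id).continuousAt
          filter_upwards [hcont2.eventually (lt_mem_nhds hlt)] with τ h
          exact ⟨hu0, le_of_lt h⟩
        refine hcontF.congr ?_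
        filter_upwards [hev] with τ h
        rw [Set.indicator_of_mem h]
      · -- u > t - τ₀ : indicator is eventually 0
        have hev : ∀ᶠ τ in nhds τ₀, u ∉ Set.Ioc (0:ℝ) (t - τ) := by
          have hcont2 : ContinuousAt (fun τ : ℝ => t - τ) τ₀ :=
            (continuous_const.sub continuous_id).continuousAt
          filter_upwards [hcont2.eventually (gt_mem_nhds hgt)] with τ h hmem
          exact absurd hmem.2 (not_le.2 h)
        refine ContinuousAt.congr (continuousAt_const (y := (0:E))) ?_
        filter_upwards [hev] with τ h
        rw [Set.indicator_of_notMem h]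
  have heq : (fun τ => S.Ibar y τ t) = (fun τ => ∫ u, (Set.Ioc (0:ℝ) (t - τ)).indicator
      (S.F y τ) u ∂(volume.restrict (Set.Ioi 0))) := funext hrepr
  rw [heq]
  exact key

lemma Data.outer_cont (hy : S.Adm y) (t : ℝ) :
    Continuous (fun τ => S.q (y τ) + S.Ibar y τ t) :=
  (S.hqc.comp hy.1).add (S.Ibar_cont hy t)

lemma Data.outer_int (hy : S.Adm y) (t t' : ℝ) :
    IntegrableOn (fun τ => S.q (y τ) + S.Ibar y τ t) (Set.Ioc 0 t') :=
  (S.outer_cont hy t).integrableOn_Ioc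

lemma Data.outer_bound (hy : S.Adm y) {τ t : ℝ} (hτ0 : 0 ≤ τ) (hτt : τ ≤ t) (ht : t ≤ S.T) :
    ‖S.q (y τ) + S.Ibar y τ t‖ ≤ S.M₁ + S.M₂ := by
  have h1 : ‖S.q (y τ)‖ ≤ S.M₁ := S.hqM₁ _ (hy.2 τ)
  have h2 : ‖S.Ibar y τ t‖ ≤ S.M₂ := S.hM₂bd y hy.1 hy.2 τ t hτ0 hτt ht
  calc ‖S.q (y τ) + S.Ibar y τ t‖ ≤ ‖S.q (y τ)‖ + ‖S.Ibar y τ t‖ := norm_add_le _ _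
    _ ≤ S.M₁ + S.M₂ := add_le_add h1 h2

/-- The Picard operator maps into the closed ball. -/
lemma Data.Phi_mem (hy : S.Adm y) {t : ℝ} (ht : t ∈ Set.Icc 0 S.T) :
    S.Phi y t ∈ Metric.closedBall S.y₀ S.b := by
  rw [Metric.mem_closedBall, dist_eq_norm, Data.Phi, add_sub_cancel_left]
  have h1 : ‖∫ τ in Set.Ioc 0 t, (S.q (y τ) + S.Ibar y τ t)‖
      ≤ ∫ τ in Set.Ioc 0 t, (S.M₁ + S.M₂) := by
    refine norm_integral_le_of_norm_le (integrableOn_const ?_) ?_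
    · rw [Real.volume_Ioc]; exact ENNReal.ofReal_ne_top
    · refine (ae_restrict_iff' measurableSet_Ioc).2 (ae_of_all _ fun τ hτ => ?_)
      exact S.outer_bound hy hτ.1.le hτ.2 ht.2
  have h2 : (∫ τ in Set.Ioc 0 t, (S.M₁ + S.M₂) : ℝ) = (S.M₁ + S.M₂) * t := by
    rw [setIntegral_const, Real.volume_real_Ioc, smul_eq_mul, max_eq_left (by linarith [ht.1])]
    ring
  have h3 : (S.M₁ + S.M₂) * t ≤ (S.M₁ + S.M₂) * S.T :=
    mul_le_mul_of_nonneg_left ht.2 (by linarith [S.hM₁nn, S.hM₂nn])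
  calc ‖∫ τ in Set.Ioc 0 t, (S.q (y τ) + S.Ibar y τ t)‖ ≤ (S.M₁ + S.M₂) * t := h2 ▸ h1
    _ ≤ S.b := le_trans h3 S.hMM



/-- The core contraction-type estimate. -/
lemma Data.core (hy : S.Adm y) (hz : S.Adm z) {t δ : ℝ} (ht : t ∈ Set.Icc 0 S.T)
    (hd : ∀ σ ∈ Set.Icc 0 t, ‖y σ - z σ‖ ≤ δ) :
    ‖S.Phi y t - S.Phi z t‖
      ≤ (S.L₁ + S.L₂ * S.M) * (∫ τ in Set.Ioc 0 t, ‖y τ - z τ‖) + S.L₂ * S.M * t * δ := by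
  have hδ0 : 0 ≤ δ := le_trans (norm_nonneg _) (hd 0 ⟨le_refl _, ht.1⟩)
  have hdiff : S.Phi y t - S.Phi z t
      = ∫ τ in Set.Ioc 0 t, ((S.q (y τ) + S.Ibar y τ t) - (S.q (z τ) + S.Ibar z τ t)) := by
    rw [Data.Phi, Data.Phi, add_sub_add_left_eq_sub,
      integral_sub (S.outer_int hy t t) (S.outer_int hz t t)]
  have hbound : ∀ τ ∈ Set.Ioc (0:ℝ) t,
      ‖(S.q (y τ) + S.Ibar y τ t) - (S.q (z τ) + S.Ibar z τ t)‖
        ≤ (S.L₁ + S.L₂ * S.M) * ‖y τ - z τ‖ + S.L₂ * S.M * δ := by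
    intro τ hτ
    have h1 : ‖S.q (y τ) - S.q (z τ)‖ ≤ S.L₁ * ‖y τ - z τ‖ :=
      S.hqL _ (hy.2 τ) _ (hz.2 τ)
    have h2 : ‖S.Ibar y τ t - S.Ibar z τ t‖ ≤ S.L₂ * S.M * (δ + ‖y τ - z τ‖) :=
      S.Ibar_lip hy hz hτ.1.le hτ.2 hd
    have h3 : (S.q (y τ) + S.Ibar y τ t) - (S.q (z τ) + S.Ibar z τ t)
        = (S.q (y τ) - S.q (z τ)) + (S.Ibar y τ t - S.Ibar z τ t) := by abel
    rw [h3]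
    calc ‖(S.q (y τ) - S.q (z τ)) + (S.Ibar y τ t - S.Ibar z τ t)‖
        ≤ ‖S.q (y τ) - S.q (z τ)‖ + ‖S.Ibar y τ t - S.Ibar z τ t‖ := norm_add_le _ _
      _ ≤ S.L₁ * ‖y τ - z τ‖ + S.L₂ * S.M * (δ + ‖y τ - z τ‖) := add_le_add h1 h2
      _ = (S.L₁ + S.L₂ * S.M) * ‖y τ - z τ‖ + S.L₂ * S.M * δ := by ring
  have hdint : IntegrableOn (fun τ => ‖y τ - z τ‖) (Set.Ioc 0 t) :=
    ((hy.1.sub hz.1).norm).integrableOn_Ioc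
  have hbint : IntegrableOn (fun τ => (S.L₁ + S.L₂ * S.M) * ‖y τ - z τ‖ + S.L₂ * S.M * δ)
      (Set.Ioc 0 t) := (hdint.const_mul _).add (integrableOn_const (by
        rw [Real.volume_Ioc]; exact ENNReal.ofReal_ne_top))
  have h4 : ‖S.Phi y t - S.Phi z t‖
      ≤ ∫ τ in Set.Ioc 0 t, ((S.L₁ + S.L₂ * S.M) * ‖y τ - z τ‖ + S.L₂ * S.M * δ) := by
    rw [hdiff]
    refine norm_integral_le_of_norm_le hbint ?_
    exact (ae_restrict_iff' measurableSet_Ioc).2 (ae_of_all _ hbound)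
  have h5 : (∫ τ in Set.Ioc 0 t, ((S.L₁ + S.L₂ * S.M) * ‖y τ - z τ‖ + S.L₂ * S.M * δ))
      = (S.L₁ + S.L₂ * S.M) * (∫ τ in Set.Ioc 0 t, ‖y τ - z τ‖) + S.L₂ * S.M * t * δ := by
    rw [integral_add (hdint.const_mul _) (integrableOn_const (by
        rw [Real.volume_Ioc]; exact ENNReal.ofReal_ne_top)),
      MeasureTheory.integral_const_mul, setIntegral_const, Real.volume_real_Ioc, smul_eq_mul,
      max_eq_left (by linarith [ht.1] : (0:ℝ) ≤ t - 0)]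
    ring
  rw [← h5]; exact h4

/-- The weighted (exponential norm) contraction estimate, with factor `3/4`. -/
lemma Data.contraction (hy : S.Adm y) (hz : S.Adm z) {t β : ℝ} (ht : t ∈ Set.Icc 0 S.T)
    (hβ : 0 ≤ β) (hd : ∀ σ ∈ Set.Icc 0 t, ‖y σ - z σ‖ ≤ β * Real.exp (S.lam * σ)) :
    ‖S.Phi y t - S.Phi z t‖ ≤ (3/4) * β * Real.exp (S.lam * t) := by
  have hlam := S.lam_pos
  have hL : 0 < S.L₁ + S.L₂ * S.M := by
    have := S.hL₁; have := S.hL₂; have := S.hMnn; nlinarith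
  have hδ : ∀ σ ∈ Set.Icc 0 t, ‖y σ - z σ‖ ≤ β * Real.exp (S.lam * t) := by
    intro σ hσ
    refine le_trans (hd σ hσ) (mul_le_mul_of_nonneg_left ?_ hβ)
    exact Real.exp_le_exp.2 (mul_le_mul_of_nonneg_left hσ.2 hlam.le)
  have hcore := S.core hy hz ht hδ
  -- bound the integral of the norm by the integral of the exponential
  have hint1 : (∫ τ in Set.Ioc 0 t, ‖y τ - z τ‖)
      ≤ ∫ τ in Set.Ioc 0 t, β * Real.exp (S.lam * τ) := by
    refine setIntegral_mono_on ((hy.1.sub hz.1).norm).integrableOn_Ioc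
      ((continuous_const.mul ((Real.continuous_exp).comp
        (continuous_const.mul continuous_id))).integrableOn_Ioc) measurableSet_Ioc ?_
    intro τ hτ
    exact hd τ ⟨hτ.1.le, hτ.2⟩
  have hint2 : (∫ τ in Set.Ioc 0 t, β * Real.exp (S.lam * τ))
      = β * ((Real.exp (S.lam * t) - 1) / S.lam) := by
    rw [MeasureTheory.integral_const_mul, ← intervalIntegral.integral_of_le ht.1]
    have : (∫ τ in (0:ℝ)..t, Real.exp (S.lam * τ))
        = S.lam⁻¹ • ∫ x in (S.lam * 0)..(S.lam * t), Real.exp x :=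
      intervalIntegral.integral_comp_mul_left Real.exp hlam.ne'
    rw [this, integral_exp]
    rw [mul_zero, Real.exp_zero, smul_eq_mul]
    field_simp
  have hexp1 : (1:ℝ) ≤ Real.exp (S.lam * t) := by
    have : (0:ℝ) ≤ S.lam * t := mul_nonneg hlam.le ht.1
    exact Real.one_le_exp this
  set A := S.L₁ + S.L₂ * S.M with hA
  set X := Real.exp (S.lam * t) with hX
  set I := (∫ τ in Set.Ioc 0 t, ‖y τ - z τ‖) with hI
  have hIle : I ≤ β * ((X - 1) / S.lam) := by rw [hI, ← hint2]; exact hint1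
  have e1 : A * I ≤ A * (β * ((X - 1) / (4 * A))) := by
    have : S.lam = 4 * A := rfl
    rw [this] at hIle
    exact mul_le_mul_of_nonneg_left hIle hL.le
  have e2 : A * (β * ((X - 1) / (4 * A))) = β * (X - 1) / 4 := by
    field_simp
  have e3 : β * (X - 1) / 4 ≤ β * X / 4 := by nlinarith
  have e4 : S.L₂ * S.M * t ≤ 1/2 := by
    calc S.L₂ * S.M * t ≤ S.L₂ * S.M * S.T :=
          mul_le_mul_of_nonneg_left ht.2 (mul_nonneg S.hL₂.le S.hMnn)
      _ ≤ 1/2 := S.hL₂MT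
  have hX0 : 0 ≤ β * X := mul_nonneg hβ (Real.exp_pos _).le
  have e5 : S.L₂ * S.M * t * (β * X) ≤ (1/2) * (β * X) :=
    mul_le_mul_of_nonneg_right e4 hX0
  calc ‖S.Phi y t - S.Phi z t‖ ≤ A * I + S.L₂ * S.M * t * (β * X) := hcore
    _ ≤ β * X / 4 + (1/2) * (β * X) := by linarith
    _ = (3/4) * β * X := by ring



/-- Hölder-type modulus of continuity for `Phi y`. -/
lemma Data.Phi_holder (hy : S.Adm y) {t₁ t₂ : ℝ} (h1 : t₁ ∈ Set.Icc 0 S.T)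
    (h2 : t₂ ∈ Set.Icc 0 S.T) (h12 : t₁ ≤ t₂) :
    ‖S.Phi y t₂ - S.Phi y t₁‖
      ≤ (S.M₁ + S.M₂) * (t₂ - t₁) + S.c * S.A' * S.T * Real.sqrt (t₂ - t₁) := by
  have hsplit : (∫ τ in Set.Ioc 0 t₂, (S.q (y τ) + S.Ibar y τ t₂))
      = (∫ τ in Set.Ioc 0 t₁, (S.q (y τ) + S.Ibar y τ t₂))
        + ∫ τ in Set.Ioc t₁ t₂, (S.q (y τ) + S.Ibar y τ t₂) := by
    rw [← setIntegral_union (Set.Ioc_disjoint_Ioc_of_le le_rfl) measurableSet_Ioc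
      ((S.outer_int hy t₂ t₂).mono_set (fun x hx => ⟨hx.1, le_trans hx.2 h12⟩))
      ((S.outer_int hy t₂ t₂).mono_set (fun x hx => ⟨lt_of_le_of_lt h1.1 hx.1, hx.2⟩)),
      Set.Ioc_union_Ioc_eq_Ioc h1.1 h12]
  have hmain : S.Phi y t₂ - S.Phi y t₁
      = (∫ τ in Set.Ioc 0 t₁, (S.Ibar y τ t₂ - S.Ibar y τ t₁))
        + ∫ τ in Set.Ioc t₁ t₂, (S.q (y τ) + S.Ibar y τ t₂) := by
    rw [Data.Phi, Data.Phi, add_sub_add_left_eq_sub, hsplit]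
    have : (∫ τ in Set.Ioc 0 t₁, (S.q (y τ) + S.Ibar y τ t₂))
        - (∫ τ in Set.Ioc 0 t₁, (S.q (y τ) + S.Ibar y τ t₁))
        = ∫ τ in Set.Ioc 0 t₁, (S.Ibar y τ t₂ - S.Ibar y τ t₁) := by
      rw [← integral_sub (S.outer_int hy t₂ t₁) (S.outer_int hy t₁ t₁)]
      congr 1
      funext τ
      abel
    rw [← this]
    abel
  have hb1 : ‖∫ τ in Set.Ioc 0 t₁, (S.Ibar y τ t₂ - S.Ibar y τ t₁)‖
      ≤ S.c * S.A' * S.T * Real.sqrt (t₂ - t₁) := by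
    have hconst : IntegrableOn (fun _ : ℝ => S.c * S.A' * Real.sqrt (t₂ - t₁))
        (Set.Ioc 0 t₁) := integrableOn_const (by
          rw [Real.volume_Ioc]; exact ENNReal.ofReal_ne_top)
    have h3 : ‖∫ τ in Set.Ioc 0 t₁, (S.Ibar y τ t₂ - S.Ibar y τ t₁)‖
        ≤ ∫ _ in Set.Ioc 0 t₁, S.c * S.A' * Real.sqrt (t₂ - t₁) := by
      refine norm_integral_le_of_norm_le hconst ?_
      refine (ae_restrict_iff' measurableSet_Ioc).2 (ae_of_all _ fun τ hτ => ?_)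
      exact S.Ibar_tail hy hτ.1.le hτ.2 h12
    have h4 : (∫ _ in Set.Ioc 0 t₁, S.c * S.A' * Real.sqrt (t₂ - t₁) : ℝ)
        = t₁ * (S.c * S.A' * Real.sqrt (t₂ - t₁)) := by
      rw [setIntegral_const, Real.volume_real_Ioc, smul_eq_mul,
        max_eq_left (by linarith [h1.1] : (0:ℝ) ≤ t₁ - 0)]
      ring
    have h5 : t₁ * (S.c * S.A' * Real.sqrt (t₂ - t₁))
        ≤ S.T * (S.c * S.A' * Real.sqrt (t₂ - t₁)) :=
      mul_le_mul_of_nonneg_right h1.2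
        (mul_nonneg (mul_nonneg S.hc S.hA') (Real.sqrt_nonneg _))
    calc ‖∫ τ in Set.Ioc 0 t₁, (S.Ibar y τ t₂ - S.Ibar y τ t₁)‖
        ≤ t₁ * (S.c * S.A' * Real.sqrt (t₂ - t₁)) := h4 ▸ h3
      _ ≤ S.T * (S.c * S.A' * Real.sqrt (t₂ - t₁)) := h5
      _ = S.c * S.A' * S.T * Real.sqrt (t₂ - t₁) := by ring
  have hb2 : ‖∫ τ in Set.Ioc t₁ t₂, (S.q (y τ) + S.Ibar y τ t₂)‖
      ≤ (S.M₁ + S.M₂) * (t₂ - t₁) := by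
    have hconst : IntegrableOn (fun _ : ℝ => S.M₁ + S.M₂) (Set.Ioc t₁ t₂) :=
      integrableOn_const (by rw [Real.volume_Ioc]; exact ENNReal.ofReal_ne_top)
    have h3 : ‖∫ τ in Set.Ioc t₁ t₂, (S.q (y τ) + S.Ibar y τ t₂)‖
        ≤ ∫ _ in Set.Ioc t₁ t₂, (S.M₁ + S.M₂) := by
      refine norm_integral_le_of_norm_le hconst ?_
      refine (ae_restrict_iff' measurableSet_Ioc).2 (ae_of_all _ fun τ hτ => ?_)
      exact S.outer_bound hy (le_trans h1.1 hτ.1.le) hτ.2 h2.2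
    have h4 : (∫ _ in Set.Ioc t₁ t₂, (S.M₁ + S.M₂) : ℝ) = (S.M₁ + S.M₂) * (t₂ - t₁) := by
      rw [setIntegral_const, Real.volume_real_Ioc, smul_eq_mul,
        max_eq_left (by linarith : (0:ℝ) ≤ t₂ - t₁)]
      ring
    exact h4 ▸ h3
  calc ‖S.Phi y t₂ - S.Phi y t₁‖
      = ‖(∫ τ in Set.Ioc 0 t₁, (S.Ibar y τ t₂ - S.Ibar y τ t₁))
          + ∫ τ in Set.Ioc t₁ t₂, (S.q (y τ) + S.Ibar y τ t₂)‖ := by rw [hmain]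
    _ ≤ ‖∫ τ in Set.Ioc 0 t₁, (S.Ibar y τ t₂ - S.Ibar y τ t₁)‖
          + ‖∫ τ in Set.Ioc t₁ t₂, (S.q (y τ) + S.Ibar y τ t₂)‖ := norm_add_le _ _
    _ ≤ S.c * S.A' * S.T * Real.sqrt (t₂ - t₁) + (S.M₁ + S.M₂) * (t₂ - t₁) :=
        add_le_add hb1 hb2
    _ = (S.M₁ + S.M₂) * (t₂ - t₁) + S.c * S.A' * S.T * Real.sqrt (t₂ - t₁) := by ring

/-- Continuity of `Phi y` on `[0, T]`. -/
lemma Data.Phi_contOn (hy : S.Adm y) : ContinuousOn (S.Phi y) (Set.Icc 0 S.T) := by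
  intro t₀ ht₀
  have hsym : ∀ t ∈ Set.Icc 0 S.T, ‖S.Phi y t - S.Phi y t₀‖
      ≤ (S.M₁ + S.M₂) * |t - t₀| + S.c * S.A' * S.T * Real.sqrt |t - t₀| := by
    intro t ht
    rcases le_total t₀ t with h | h
    · have := S.Phi_holder hy ht₀ ht h
      rwa [abs_of_nonneg (by linarith : (0:ℝ) ≤ t - t₀)]
    · have := S.Phi_holder hy ht ht₀ h
      rw [← norm_neg, neg_sub] at this
      rw [abs_of_nonpos (by linarith : t - t₀ ≤ 0)]
      simpa [neg_sub] using this
  rw [ContinuousWithinAt, tendsto_iff_dist_tendsto_zero]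
  have hbnd : Tendsto (fun t : ℝ => (S.M₁ + S.M₂) * |t - t₀|
      + S.c * S.A' * S.T * Real.sqrt |t - t₀|) (nhds t₀) (nhds 0) := by
    have hcont : Continuous (fun t : ℝ => (S.M₁ + S.M₂) * |t - t₀|
        + S.c * S.A' * S.T * Real.sqrt |t - t₀|) := by
      continuity
    have := hcont.tendsto t₀
    simpa using this
  refine squeeze_zero' (Filter.Eventually.of_forall fun t => dist_nonneg) ?_
    (hbnd.mono_left nhdsWithin_le_nhds)
  filter_upwards [self_mem_nhdsWithin] with t ht
  rw [dist_eq_norm]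
  exact hsym t ht

/-- Change of variables: the interval integral form of the inner integral. -/
lemma Data.conv (y : ℝ → E) {τ t : ℝ} (hτt : τ ≤ t) :
    (∫ s in τ..t, S.C (s - τ) • S.p (s - τ) (y s) (y τ)) = S.Ibar y τ t := by
  have h1 : (fun s => S.C (s - τ) • S.p (s - τ) (y s) (y τ))
      = fun s => S.F y τ (s - τ) := by
    funext s
    simp only [Data.F, sub_add_cancel]
  rw [h1, intervalIntegral.integral_comp_sub_right (S.F y τ) τ, sub_self,
    intervalIntegral.integral_of_le (by linarith : (0:ℝ) ≤ t - τ)]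
  rfl

/-- The statement form of the integral equation equals the `Phi` form. -/
lemma Data.eqn_form (y : ℝ → E) {t : ℝ} (ht : 0 ≤ t) :
    (S.y₀ + ∫ τ in (0:ℝ)..t, (S.q (y τ) + ∫ s in τ..t, S.C (s - τ) • S.p (s - τ) (y s) (y τ)))
      = S.Phi y t := by
  rw [Data.Phi, intervalIntegral.integral_of_le ht]
  congr 1
  refine setIntegral_congr_fun measurableSet_Ioc fun τ hτ => ?_
  rw [S.conv y hτ.2]



noncomputable def Data.cl (S : Data E) : ℝ → ℝ := fun s => max 0 (min s S.T)

omit [CompleteSpace E] in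
lemma Data.cl_mem (s : ℝ) : S.cl s ∈ Set.Icc 0 S.T := by
  constructor
  · exact le_max_left _ _
  · exact max_le S.hT0 (min_le_right _ _)

omit [CompleteSpace E] in
lemma Data.cl_eq {s : ℝ} (hs : s ∈ Set.Icc 0 S.T) : S.cl s = s := by
  rw [Data.cl, min_eq_left hs.2, max_eq_right hs.1]

omit [CompleteSpace E] in
lemma Data.cl_cont : Continuous S.cl :=
  continuous_const.max (continuous_id.min continuous_const)

noncomputable def Data.iter (S : Data E) [CompleteSpace E] : ℕ → ℝ → E
  | 0 => fun _ => S.y₀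
  | (n+1) => fun s => S.Phi (S.iter n) (S.cl s)

lemma Data.iter_adm : ∀ n, S.Adm (S.iter n) := by
  intro n
  induction n with
  | zero => exact ⟨continuous_const, fun _ => Metric.mem_closedBall_self S.hb.le⟩
  | succ n ih =>
    constructor
    · exact (S.Phi_contOn ih).comp_continuous S.cl_cont S.cl_mem
    · exact fun s => S.Phi_mem ih (S.cl_mem s)

lemma Data.iter_cl : ∀ n s, S.iter n s = S.iter n (S.cl s) := by
  intro n s
  cases n with
  | zero => rfl
  | succ n =>
    show S.Phi (S.iter n) (S.cl s) = S.Phi (S.iter n) (S.cl (S.cl s))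
    rw [S.cl_eq (S.cl_mem s)]

lemma Data.iter_step : ∀ n, ∀ σ ∈ Set.Icc 0 S.T,
    ‖S.iter (n+1) σ - S.iter n σ‖ ≤ S.b * (3/4)^n * Real.exp (S.lam * σ) := by
  intro n
  induction n with
  | zero =>
    intro σ hσ
    have h1 : S.iter 1 σ = S.Phi (S.iter 0) σ := by
      show S.Phi (S.iter 0) (S.cl σ) = _
      rw [S.cl_eq hσ]
    have h2 : ‖S.iter 1 σ - S.iter 0 σ‖ ≤ S.b := by
      rw [h1]
      have := S.Phi_mem (S.iter_adm 0) hσ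
      rw [Metric.mem_closedBall, dist_eq_norm] at this
      exact this
    have h3 : (1:ℝ) ≤ Real.exp (S.lam * σ) :=
      Real.one_le_exp (mul_nonneg S.lam_pos.le hσ.1)
    calc ‖S.iter 1 σ - S.iter 0 σ‖ ≤ S.b := h2
      _ = S.b * (3/4)^0 * 1 := by ring
      _ ≤ S.b * (3/4)^0 * Real.exp (S.lam * σ) := by
          refine mul_le_mul_of_nonneg_left h3 ?_
          exact mul_nonneg S.hb.le (by norm_num)
  | succ n ih =>
    intro σ hσ
    have h1 : S.iter (n+2) σ = S.Phi (S.iter (n+1)) σ := by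
      show S.Phi (S.iter (n+1)) (S.cl σ) = _
      rw [S.cl_eq hσ]
    have h2 : S.iter (n+1) σ = S.Phi (S.iter n) σ := by
      show S.Phi (S.iter n) (S.cl σ) = _
      rw [S.cl_eq hσ]
    rw [h1, h2]
    have hd : ∀ σ' ∈ Set.Icc 0 σ, ‖S.iter (n+1) σ' - S.iter n σ'‖
        ≤ (S.b * (3/4)^n) * Real.exp (S.lam * σ') := by
      intro σ' hσ'
      exact ih σ' ⟨hσ'.1, le_trans hσ'.2 hσ.2⟩
    have := S.contraction (S.iter_adm (n+1)) (S.iter_adm n) hσ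
      (mul_nonneg S.hb.le (by positivity)) hd
    calc ‖S.Phi (S.iter (n+1)) σ - S.Phi (S.iter n) σ‖
        ≤ (3/4) * (S.b * (3/4)^n) * Real.exp (S.lam * σ) := this
      _ = S.b * (3/4)^(n+1) * Real.exp (S.lam * σ) := by ring

lemma Data.iter_dist : ∀ n σ, dist (S.iter n σ) (S.iter (n+1) σ)
    ≤ (S.b * Real.exp (S.lam * S.T)) * (3/4)^n := by
  intro n σ
  have h1 : dist (S.iter n σ) (S.iter (n+1) σ)
      = ‖S.iter (n+1) (S.cl σ) - S.iter n (S.cl σ)‖ := by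
    rw [S.iter_cl n σ, S.iter_cl (n+1) σ, dist_eq_norm, norm_sub_rev]
  rw [h1]
  have h2 := S.iter_step n (S.cl σ) (S.cl_mem σ)
  have h3 : Real.exp (S.lam * S.cl σ) ≤ Real.exp (S.lam * S.T) :=
    Real.exp_le_exp.2 (mul_le_mul_of_nonneg_left (S.cl_mem σ).2 S.lam_pos.le)
  calc ‖S.iter (n+1) (S.cl σ) - S.iter n (S.cl σ)‖
      ≤ S.b * (3/4)^n * Real.exp (S.lam * S.cl σ) := h2
    _ ≤ S.b * (3/4)^n * Real.exp (S.lam * S.T) := by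
        refine mul_le_mul_of_nonneg_left h3 (mul_nonneg S.hb.le (by positivity))
    _ = (S.b * Real.exp (S.lam * S.T)) * (3/4)^n := by ring

/-- Existence of a fixed point of the Picard operator. -/
lemma Data.exists_sol : ∃ y : ℝ → E, S.Adm y ∧ ∀ t ∈ Set.Icc 0 S.T, y t = S.Phi y t := by
  set B : ℝ := S.b * Real.exp (S.lam * S.T) with hB
  have hB0 : 0 ≤ B := mul_nonneg S.hb.le (Real.exp_pos _).le
  have hcauchy : ∀ σ : ℝ, CauchySeq (fun n => S.iter n σ) := fun σ =>
    cauchySeq_of_le_geometric (3/4) B (by norm_num) (fun n => S.iter_dist n σ)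
  have hlim : ∀ σ : ℝ, ∃ l : E, Tendsto (fun n => S.iter n σ) atTop (nhds l) := fun σ =>
    cauchySeq_tendsto_of_complete (hcauchy σ)
  choose ysol htend using hlim
  have htail : ∀ n σ, dist (S.iter n σ) (ysol σ) ≤ B * (3/4)^n / (1 - 3/4) := fun n σ =>
    dist_le_of_le_geometric_of_tendsto (3/4) B (by norm_num)
      (fun m => S.iter_dist m σ) (htend σ) n
  have hball : ∀ σ, ysol σ ∈ Metric.closedBall S.y₀ S.b := fun σ =>
    isClosed_closedBall.mem_of_tendsto (htend σ)
      (Filter.Eventually.of_forall fun n => (S.iter_adm n).2 σ)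
  have htu : TendstoUniformly (fun n σ => S.iter n σ) ysol atTop := by
    rw [Metric.tendstoUniformly_iff]
    intro ε hε
    have hg : Tendsto (fun n : ℕ => (B / (1 - 3/4)) * (3/4)^n) atTop (nhds 0) := by
      have := (tendsto_pow_atTop_nhds_zero_of_lt_one (by norm_num : (0:ℝ) ≤ 3/4)
        (by norm_num : (3:ℝ)/4 < 1)).const_mul (B / (1 - 3/4))
      simpa using this
    filter_upwards [hg.eventually (gt_mem_nhds hε)] with n hn σ
    calc dist (ysol σ) (S.iter n σ) = dist (S.iter n σ) (ysol σ) := dist_comm _ _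
      _ ≤ B * (3/4)^n / (1 - 3/4) := htail n σ
      _ = (B / (1 - 3/4)) * (3/4)^n := by ring
      _ < ε := hn
  have hcont : Continuous ysol :=
    htu.continuous (Filter.Frequently.of_forall fun n => (S.iter_adm n).1)
  have hadm : S.Adm ysol := ⟨hcont, hball⟩
  refine ⟨ysol, hadm, fun t ht => ?_⟩
  have h1 : Tendsto (fun n => S.iter (n+1) t) atTop (nhds (ysol t)) :=
    (htend t).comp (tendsto_add_atTop_nat 1)
  have h2 : Tendsto (fun n => S.Phi (S.iter n) t) atTop (nhds (S.Phi ysol t)) := by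
    rw [tendsto_iff_dist_tendsto_zero]
    have hg : Tendsto (fun n : ℕ => ((3/4) * (B / (1 - 3/4)) * Real.exp (S.lam * t)) * (3/4)^n)
        atTop (nhds 0) := by
      have := (tendsto_pow_atTop_nhds_zero_of_lt_one (by norm_num : (0:ℝ) ≤ 3/4)
        (by norm_num : (3:ℝ)/4 < 1)).const_mul ((3/4) * (B / (1 - 3/4)) * Real.exp (S.lam * t))
      simpa using this
    refine squeeze_zero (fun n => dist_nonneg) (fun n => ?_) hg
    have hd : ∀ σ ∈ Set.Icc 0 t, ‖S.iter n σ - ysol σ‖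
        ≤ (B * (3/4)^n / (1 - 3/4)) * Real.exp (S.lam * σ) := by
      intro σ hσ
      have hexp : (1:ℝ) ≤ Real.exp (S.lam * σ) :=
        Real.one_le_exp (mul_nonneg S.lam_pos.le hσ.1)
      have h3 : ‖S.iter n σ - ysol σ‖ ≤ B * (3/4)^n / (1 - 3/4) := by
        rw [← dist_eq_norm]; exact htail n σ
      calc ‖S.iter n σ - ysol σ‖ ≤ B * (3/4)^n / (1 - 3/4) := h3
        _ = (B * (3/4)^n / (1 - 3/4)) * 1 := by ring
        _ ≤ (B * (3/4)^n / (1 - 3/4)) * Real.exp (S.lam * σ) := by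
            refine mul_le_mul_of_nonneg_left hexp ?_; positivity
    have := S.contraction (S.iter_adm n) ⟨hcont, hball⟩ ht (by positivity) hd
    rw [dist_eq_norm]
    calc ‖S.Phi (S.iter n) t - S.Phi ysol t‖
        ≤ (3/4) * (B * (3/4)^n / (1 - 3/4)) * Real.exp (S.lam * t) := this
      _ = ((3/4) * (B / (1 - 3/4)) * Real.exp (S.lam * t)) * (3/4)^n := by ring
  have heq : (fun n => S.iter (n+1) t) = fun n => S.Phi (S.iter n) t := by
    funext n
    show S.Phi (S.iter n) (S.cl t) = _
    rw [S.cl_eq ht]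
  rw [heq] at h1
  exact tendsto_nhds_unique h1 h2

/-- Uniqueness of fixed points of the Picard operator. -/
lemma Data.unique (hy : S.Adm y) (hz : S.Adm z)
    (hfy : ∀ t ∈ Set.Icc 0 S.T, y t = S.Phi y t)
    (hfz : ∀ t ∈ Set.Icc 0 S.T, z t = S.Phi z t) :
    ∀ t ∈ Set.Icc 0 S.T, z t = y t := by
  set w : ℝ → ℝ := fun σ => Real.exp (-(S.lam * σ)) * ‖y σ - z σ‖ with hw
  set Sset : Set ℝ := w '' Set.Icc 0 S.T with hSset
  have hne : Sset.Nonempty := ⟨w 0, ⟨0, ⟨le_refl _, S.hT0⟩, rfl⟩⟩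
  have hbdd : BddAbove Sset := by
    refine ⟨2 * S.b, fun r hr => ?_⟩
    obtain ⟨σ, hσ, rfl⟩ := hr
    have h1 : Real.exp (-(S.lam * σ)) ≤ 1 :=
      Real.exp_le_one_iff.2 (by simp [mul_nonneg S.lam_pos.le hσ.1])
    have h2 : ‖y σ - z σ‖ ≤ 2 * S.b := by
      have hy' := hy.2 σ
      have hz' := hz.2 σ
      rw [Metric.mem_closedBall, dist_eq_norm] at hy' hz'
      calc ‖y σ - z σ‖ = ‖(y σ - S.y₀) - (z σ - S.y₀)‖ := by abel_nf
        _ ≤ ‖y σ - S.y₀‖ + ‖z σ - S.y₀‖ := norm_sub_le _ _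
        _ ≤ 2 * S.b := by linarith
    calc w σ ≤ 1 * ‖y σ - z σ‖ :=
          mul_le_mul_of_nonneg_right h1 (norm_nonneg _)
      _ ≤ 2 * S.b := by rw [one_mul]; exact h2
  set uu := sSup Sset with huu
  have hmem_le : ∀ σ ∈ Set.Icc 0 S.T, w σ ≤ uu := fun σ hσ =>
    le_csSup hbdd ⟨σ, hσ, rfl⟩
  have huu0 : 0 ≤ uu := le_trans (by positivity : (0:ℝ) ≤ w 0)
    (hmem_le 0 ⟨le_refl _, S.hT0⟩)
  have hkey : ∀ t ∈ Set.Icc 0 S.T, ‖y t - z t‖ ≤ (3/4) * uu * Real.exp (S.lam * t) := by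
    intro t ht
    have hd : ∀ σ ∈ Set.Icc 0 t, ‖y σ - z σ‖ ≤ uu * Real.exp (S.lam * σ) := by
      intro σ hσ
      have hσ' : σ ∈ Set.Icc 0 S.T := ⟨hσ.1, le_trans hσ.2 ht.2⟩
      have := hmem_le σ hσ'
      rw [hw] at this
      have hepos : (0:ℝ) < Real.exp (-(S.lam * σ)) := Real.exp_pos _
      have := mul_le_mul_of_nonneg_left this (Real.exp_pos (S.lam * σ)).le
      calc ‖y σ - z σ‖
          = Real.exp (S.lam * σ) * (Real.exp (-(S.lam * σ)) * ‖y σ - z σ‖) := by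
            rw [← mul_assoc, ← Real.exp_add]
            simp
        _ ≤ Real.exp (S.lam * σ) * uu := this
        _ = uu * Real.exp (S.lam * σ) := mul_comm _ _
    rw [hfy t ht, hfz t ht]
    exact S.contraction hy hz ht huu0 hd
  have huule : uu ≤ (3/4) * uu := by
    refine csSup_le hne fun r hr => ?_
    obtain ⟨t, ht, rfl⟩ := hr
    have h1 := hkey t ht
    have h2 : Real.exp (-(S.lam * t)) * ‖y t - z t‖
        ≤ Real.exp (-(S.lam * t)) * ((3/4) * uu * Real.exp (S.lam * t)) :=
      mul_le_mul_of_nonneg_left h1 (Real.exp_pos _).le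
    calc w t ≤ Real.exp (-(S.lam * t)) * ((3/4) * uu * Real.exp (S.lam * t)) := h2
      _ = (3/4) * uu * (Real.exp (-(S.lam * t)) * Real.exp (S.lam * t)) := by ring
      _ = (3/4) * uu := by rw [← Real.exp_add]; simp
  have huu_eq : uu = 0 := le_antisymm (by linarith) huu0
  intro t ht
  have h1 := hmem_le t ht
  rw [huu_eq, hw] at h1
  have hepos : (0:ℝ) < Real.exp (-(S.lam * t)) := Real.exp_pos _
  have h1' : Real.exp (-(S.lam * t)) * ‖y t - z t‖ ≤ 0 := h1
  have h2 : ‖y t - z t‖ ≤ 0 := by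
    by_contra h
    push_neg at h
    nlinarith
  have h3 : y t - z t = 0 := norm_le_zero_iff.1 h2
  have := sub_eq_zero.1 h3
  exact this.symm



section Kernel
variable {γ ξ η D : ℝ} (hγ : 0 < γ) (hξ : 0 < ξ) (hη : 0 < η) (hD : 0 < D)
variable {C : ℝ → ℝ}
  (hC : ∀ z > (0:ℝ), C z = γ * ξ * Real.exp (-η * z) / (4 * Real.pi * D * z))

lemma rpow_contOn : ContinuousOn (fun z : ℝ => z ^ (-(1/2) : ℝ)) (Set.Ioi 0) :=
  fun z hz => (Real.continuousAt_rpow_const z _ (Or.inl (ne_of_gt hz))).continuousWithinAt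

lemma base_contOn :
    ContinuousOn (fun z : ℝ => Real.exp (-η * z) * z ^ (-(1/2) : ℝ)) (Set.Ioi 0) :=
  ((Real.continuous_exp.comp (continuous_const.mul continuous_id)).continuousOn).mul rpow_contOn

include hγ hξ hη hD hC in
lemma kernel_eq : ∀ z > (0:ℝ), C z * Real.sqrt (4 * D * z)
    = (γ * ξ * Real.sqrt (4 * D) / (4 * Real.pi * D))
      * (Real.exp (-η * z) * z ^ (-(1/2) : ℝ)) := by
  intro z hz
  have hπ := Real.pi_pos
  have hsz : Real.sqrt z > 0 := Real.sqrt_pos.2 hz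
  rw [hC z hz, show (4:ℝ) * D * z = (4 * D) * z from by ring,
    Real.sqrt_mul (by positivity) z]
  have h1 : z ^ (-(1/2) : ℝ) = (Real.sqrt z)⁻¹ := by
    rw [Real.rpow_neg hz.le, Real.sqrt_eq_rpow]
  rw [h1]
  have h2 : Real.sqrt z * Real.sqrt z = z := Real.mul_self_sqrt hz.le
  field_simp
  linear_combination h2

include hγ hξ hη hD hC in
lemma kernel_contOn : ContinuousOn C (Set.Ioi 0) := by
  have hπ := Real.pi_pos
  have hform : ContinuousOn (fun z : ℝ => γ * ξ * Real.exp (-η * z) / (4 * Real.pi * D * z))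
      (Set.Ioi 0) := by
    refine ContinuousOn.div ?_ ?_ ?_
    · exact (continuous_const.mul (Real.continuous_exp.comp
        (continuous_const.mul continuous_id))).continuousOn
    · exact (continuous_const.mul continuous_id).continuousOn
    · intro z hz
      have : (0:ℝ) < z := hz
      positivity
  exact hform.congr fun z hz => hC z hz

include hη in
set_option maxHeartbeats 1000000 in
lemma base_integrable :
    IntegrableOn (fun z : ℝ => Real.exp (-η * z) * z ^ (-(1/2) : ℝ)) (Set.Ioi 0) := by
  have hmeas1 : AEStronglyMeasurable (fun z : ℝ => Real.exp (-η * z) * z ^ (-(1/2) : ℝ))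
      (volume.restrict (Set.Ioc (0:ℝ) 1)) :=
    (base_contOn.mono Set.Ioc_subset_Ioi_self).aestronglyMeasurable measurableSet_Ioc
  have hmeas2 : AEStronglyMeasurable (fun z : ℝ => Real.exp (-η * z) * z ^ (-(1/2) : ℝ))
      (volume.restrict (Set.Ioi (1:ℝ))) :=
    (base_contOn.mono fun z (hz : z ∈ Set.Ioi (1:ℝ)) => Set.mem_Ioi.2 (lt_trans zero_lt_one (Set.mem_Ioi.1 hz))).aestronglyMeasurable
      measurableSet_Ioi
  have hrpow : IntegrableOn (fun z : ℝ => z ^ (-(1/2) : ℝ)) (Set.Ioc (0:ℝ) 1) := by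
    have := intervalIntegral.intervalIntegrable_rpow' (a := 0) (b := 1)
      (r := -(1/2)) (by norm_num)
    rwa [intervalIntegrable_iff_integrableOn_Ioc_of_le (by norm_num : (0:ℝ) ≤ 1)] at this
  have hI1 : IntegrableOn (fun z : ℝ => Real.exp (-η * z) * z ^ (-(1/2) : ℝ))
      (Set.Ioc (0:ℝ) 1) := by
    refine Integrable.mono' hrpow hmeas1 ?_
    refine (ae_restrict_iff' measurableSet_Ioc).2 (ae_of_all _ fun z hz => ?_)
    have hz0 : (0:ℝ) < z := hz.1
    have h1 : Real.exp (-η * z) ≤ 1 := Real.exp_le_one_iff.2 (by nlinarith)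
    have h2 : (0:ℝ) ≤ z ^ (-(1/2) : ℝ) := Real.rpow_nonneg hz0.le _
    rw [Real.norm_eq_abs, abs_of_nonneg (by positivity)]
    nlinarith
  have hI2 : IntegrableOn (fun z : ℝ => Real.exp (-η * z) * z ^ (-(1/2) : ℝ))
      (Set.Ioi (1:ℝ)) := by
    refine Integrable.mono' (exp_neg_integrableOn_Ioi 1 hη) hmeas2 ?_
    refine (ae_restrict_iff' measurableSet_Ioi).2 (ae_of_all _ fun z hz => ?_)
    have hz1 : (1:ℝ) < z := hz
    have h1 : z ^ (-(1/2) : ℝ) ≤ 1 :=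
      Real.rpow_le_one_of_one_le_of_nonpos hz1.le (by norm_num)
    have h2 : (0:ℝ) ≤ z ^ (-(1/2) : ℝ) := Real.rpow_nonneg (by linarith) _
    have h3 : (0:ℝ) < Real.exp (-η * z) := Real.exp_pos _
    rw [Real.norm_eq_abs, abs_of_nonneg (by positivity)]
    nlinarith
  have := hI1.union hI2
  rwa [Set.Ioc_union_Ioi_eq_Ioi (by norm_num : (0:ℝ) ≤ 1)] at this

include hγ hξ hη hD hC in
lemma kernel_integrable :
    IntegrableOn (fun z : ℝ => C z * Real.sqrt (4 * D * z)) (Set.Ioi 0) := by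
  have hbase := (base_integrable hη).const_mul (γ * ξ * Real.sqrt (4 * D) / (4 * Real.pi * D))
  refine IntegrableOn.congr_fun hbase ?_ measurableSet_Ioi
  intro z hz
  exact (kernel_eq hγ hξ hη hD hC z hz).symm

include hγ hξ hη hD hC in
lemma kernel_tail : ∀ w₁ w₂ : ℝ, 0 ≤ w₁ → w₁ ≤ w₂ →
    (∫ z in Set.Ioc w₁ w₂, C z * Real.sqrt (4 * D * z))
      ≤ (2 * (γ * ξ * Real.sqrt (4 * D) / (4 * Real.pi * D))) * Real.sqrt (w₂ - w₁) := by
  intro w₁ w₂ hw1 hw12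
  have hπ := Real.pi_pos
  set A : ℝ := γ * ξ * Real.sqrt (4 * D) / (4 * Real.pi * D) with hA
  have hA0 : 0 ≤ A := by positivity
  have hsub : Set.Ioc w₁ w₂ ⊆ Set.Ioi (0:ℝ) := fun z hz => lt_of_le_of_lt hw1 hz.1
  have hrint : IntegrableOn (fun z : ℝ => A * z ^ (-(1/2) : ℝ)) (Set.Ioc w₁ w₂) := by
    have := (intervalIntegral.intervalIntegrable_rpow' (a := w₁) (b := w₂)
      (r := -(1/2)) (by norm_num)).const_mul A
    rwa [intervalIntegrable_iff_integrableOn_Ioc_of_le hw12] at this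
  have hstep : (∫ z in Set.Ioc w₁ w₂, C z * Real.sqrt (4 * D * z))
      ≤ ∫ z in Set.Ioc w₁ w₂, A * z ^ (-(1/2) : ℝ) := by
    refine setIntegral_mono_on ((kernel_integrable hγ hξ hη hD hC).mono_set hsub)
      hrint measurableSet_Ioc fun z hz => ?_
    have hz0 : (0:ℝ) < z := hsub hz
    rw [kernel_eq hγ hξ hη hD hC z hz0]
    have h1 : Real.exp (-η * z) ≤ 1 := Real.exp_le_one_iff.2 (by nlinarith)
    have h2 : (0:ℝ) ≤ z ^ (-(1/2) : ℝ) := Real.rpow_nonneg hz0.le _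
    calc A * (Real.exp (-η * z) * z ^ (-(1/2) : ℝ))
        ≤ A * (1 * z ^ (-(1/2) : ℝ)) := by
          refine mul_le_mul_of_nonneg_left ?_ hA0
          exact mul_le_mul_of_nonneg_right h1 h2
      _ = A * z ^ (-(1/2) : ℝ) := by ring
  have hcomp : (∫ z in Set.Ioc w₁ w₂, A * z ^ (-(1/2) : ℝ))
      = A * (2 * (Real.sqrt w₂ - Real.sqrt w₁)) := by
    have e : (∫ x in w₁..w₂, x ^ (-(1/2) : ℝ))
        = (w₂ ^ ((1/2):ℝ) - w₁ ^ ((1/2):ℝ)) / (1/2) := by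
      rw [integral_rpow (Or.inl (by norm_num : (-1:ℝ) < -(1/2)))]
      norm_num
    rw [MeasureTheory.integral_const_mul, ← intervalIntegral.integral_of_le hw12, e,
      ← Real.sqrt_eq_rpow, ← Real.sqrt_eq_rpow]
    ring
  have hsq : Real.sqrt w₂ - Real.sqrt w₁ ≤ Real.sqrt (w₂ - w₁) := sqrt_sub_le hw1 hw12
  calc (∫ z in Set.Ioc w₁ w₂, C z * Real.sqrt (4 * D * z))
      ≤ A * (2 * (Real.sqrt w₂ - Real.sqrt w₁)) := by rw [← hcomp]; exact hstep
    _ ≤ A * (2 * Real.sqrt (w₂ - w₁)) := by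
        refine mul_le_mul_of_nonneg_left (by linarith) hA0
    _ = (2 * A) * Real.sqrt (w₂ - w₁) := by ring

end Kernel

/-- Standalone change-of-variables lemma. -/
lemma conv_aux (C : ℝ → ℝ) (p : ℝ → E → E → E) (y : ℝ → E) {τ t : ℝ} (hτt : τ ≤ t) :
    (∫ s in τ..t, C (s - τ) • p (s - τ) (y s) (y τ))
      = ∫ u in Set.Ioc 0 (t - τ), C u • p u (y (u + τ)) (y τ) := by
  have h1 : (fun s => C (s - τ) • p (s - τ) (y s) (y τ))
      = fun s => (fun u => C u • p u (y (u + τ)) (y τ)) (s - τ) := by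
    funext s
    simp only [sub_add_cancel]
  have h2 := intervalIntegral.integral_comp_sub_right (a := τ) (b := t)
    (fun u => C u • p u (y (u + τ)) (y τ)) τ
  rw [sub_self] at h2
  rw [h1, h2, intervalIntegral.integral_of_le (by linarith : (0:ℝ) ≤ t - τ)]

end VolterraAux

open VolterraAux

/-- **Local existence and uniqueness (Theorem 3.1)** for the delayed Volterra integral
equation `y(t) = y₀ + ∫₀ᵗ [q(y(τ)) + ∫_τ^t C(s-τ) p(s-τ, y(s), y(τ)) ds] dτ`
arising from the hybrid alignment–chemotaxis model. -/
theorem local_existence_uniqueness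
    (N : ℕ) (hN : 1 ≤ N)
    (γ ξ η D : ℝ) (hγ : 0 < γ) (hξ : 0 < ξ) (hη : 0 < η) (hD : 0 < D)
    (C : ℝ → ℝ) (hC : ∀ z > 0, C z = γ * ξ * Real.exp (-η * z) / (4 * Real.pi * D * z))
    (y₀ : EuclideanSpace ℝ (Fin (4 * N))) (a b : ℝ) (ha : 0 < a) (hb : 0 < b)
    (q : EuclideanSpace ℝ (Fin (4 * N)) → EuclideanSpace ℝ (Fin (4 * N)))
    (hq : Continuous q)
    (p : ℝ → EuclideanSpace ℝ (Fin (4 * N)) → EuclideanSpace ℝ (Fin (4 * N)) →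
      EuclideanSpace ℝ (Fin (4 * N)))
    (hp : ContinuousOn
      (fun x : ℝ × EuclideanSpace ℝ (Fin (4 * N)) × EuclideanSpace ℝ (Fin (4 * N)) =>
        p x.1 x.2.1 x.2.2) (Set.Ioi (0 : ℝ) ×ˢ Set.univ))
    (L₁ L₂ Mbar M₁ M₂ M T : ℝ) (hL₁ : 0 < L₁) (hL₂ : 0 < L₂) (hMbar : 0 < Mbar)
    (hqLip : ∀ y₁ ∈ closedBall y₀ b, ∀ y₂ ∈ closedBall y₀ b,
      ‖q y₁ - q y₂‖ ≤ L₁ * ‖y₁ - y₂‖)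
    (hpBound : ∀ h > (0 : ℝ), ∀ u ∈ closedBall y₀ b, ∀ v ∈ closedBall y₀ b,
      ‖p h u v‖ ≤ Mbar * Real.sqrt (2 * N) * Real.sqrt (4 * D * h))
    (hpLip : ∀ h > (0 : ℝ), ∀ u₁ ∈ closedBall y₀ b, ∀ u₂ ∈ closedBall y₀ b,
      ∀ v₁ ∈ closedBall y₀ b, ∀ v₂ ∈ closedBall y₀ b,
      ‖p h u₁ v₁ - p h u₂ v₂‖ ≤ Real.sqrt (4 * D * h) * (L₂ * (‖u₁ - u₂‖ + ‖v₁ - v₂‖)))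
    (hM₁ : IsLUB {r : ℝ | ∃ y ∈ closedBall y₀ b, r = ‖q y‖} M₁)
    (hM₂ : IsLUB {r : ℝ | ∃ t ∈ Set.Icc 0 a, ∃ τ ∈ Set.Icc 0 t,
      ∃ y : ℝ → EuclideanSpace ℝ (Fin (4 * N)),
        ContinuousOn y (Set.Icc 0 a) ∧ (∀ s ∈ Set.Icc 0 a, y s ∈ closedBall y₀ b) ∧
        r = ‖∫ s in τ..t, C (s - τ) • p (s - τ) (y s) (y τ)‖} M₂)
    (hM : M = ∫ z in Set.Ioi (0 : ℝ), C z * Real.sqrt (4 * D * z))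
    (hT : T = min a (min (b / (M₁ + M₂)) (1 / (L₁ + 2 * L₂ * M)))) :
    ∃ y : ℝ → EuclideanSpace ℝ (Fin (4 * N)),
      (ContinuousOn y (Set.Icc 0 T) ∧
        (∀ t ∈ Set.Icc 0 T, ‖y t - y₀‖ ≤ b) ∧
        (∀ t ∈ Set.Icc 0 T,
          y t = y₀ + ∫ τ in (0 : ℝ)..t,
            (q (y τ) + ∫ s in τ..t, C (s - τ) • p (s - τ) (y s) (y τ)))) ∧
      ∀ z : ℝ → EuclideanSpace ℝ (Fin (4 * N)),
        ContinuousOn z (Set.Icc 0 T) →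
        (∀ t ∈ Set.Icc 0 T, ‖z t - y₀‖ ≤ b) →
        (∀ t ∈ Set.Icc 0 T,
          z t = y₀ + ∫ τ in (0 : ℝ)..t,
            (q (z τ) + ∫ s in τ..t, C (s - τ) • p (s - τ) (z s) (z τ))) →
        ∀ t ∈ Set.Icc 0 T, z t = y t := by
  classical
  -- Basic positivity facts
  have hπ := Real.pi_pos
  have hCnn : ∀ z > (0:ℝ), 0 ≤ C z := by
    intro z hz
    rw [hC z hz]
    positivity
  have hgnn : ∀ z > (0:ℝ), 0 ≤ C z * Real.sqrt (4 * D * z) := fun z hz =>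
    mul_nonneg (hCnn z hz) (Real.sqrt_nonneg _)
  have hM₁0 : 0 ≤ M₁ :=
    le_trans (norm_nonneg (q y₀)) (hM₁.1 ⟨y₀, mem_closedBall_self hb.le, rfl⟩)
  have hM₂0 : 0 ≤ M₂ := by
    have hmem : (0:ℝ) ∈ {r : ℝ | ∃ t ∈ Set.Icc 0 a, ∃ τ ∈ Set.Icc 0 t,
        ∃ y : ℝ → EuclideanSpace ℝ (Fin (4 * N)), ContinuousOn y (Set.Icc 0 a) ∧
          (∀ s ∈ Set.Icc 0 a, y s ∈ closedBall y₀ b) ∧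
          r = ‖∫ s in τ..t, C (s - τ) • p (s - τ) (y s) (y τ)‖} := by
      refine ⟨0, ⟨le_refl _, ha.le⟩, 0, ⟨le_refl _, le_refl _⟩, fun _ => y₀,
        continuousOn_const, fun s _ => mem_closedBall_self hb.le, ?_⟩
      rw [intervalIntegral.integral_same, norm_zero]
    exact hM₂.1 hmem
  have hM0 : 0 ≤ M := by
    rw [hM]
    exact setIntegral_nonneg measurableSet_Ioi fun z hz => hgnn z hz
  have hK : 0 < L₁ + 2 * L₂ * M := by nlinarith
  have hT0 : 0 ≤ T := by
    rw [hT]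
    refine le_min ha.le (le_min (div_nonneg hb.le (by linarith)) (by positivity))
  rcases eq_or_lt_of_le hT0 with hT0' | hTpos
  · -- degenerate case T = 0
    refine ⟨fun _ => y₀, ⟨continuousOn_const, ?_, ?_⟩, ?_⟩
    · intro t ht
      simp
      exact hb.le
    · intro t ht
      have ht0 : t = 0 := le_antisymm (ht.2.trans hT0'.symm.le) ht.1
      subst ht0
      rw [intervalIntegral.integral_same, add_zero]
    · intro z hzc hzb hzeq t ht
      have ht0 : t = 0 := le_antisymm (ht.2.trans hT0'.symm.le) ht.1
      subst ht0
      have := hzeq 0 ⟨le_refl _, hT0⟩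
      rwa [intervalIntegral.integral_same, add_zero] at this
  · -- main case 0 < T
    have hTa : T ≤ a := hT ▸ min_le_left _ _
    have hMM : (M₁ + M₂) * T ≤ b := by
      rcases eq_or_lt_of_le (by linarith : (0:ℝ) ≤ M₁ + M₂) with hs | hs
      · rw [← hs, zero_mul]; exact hb.le
      · have h1 : T ≤ b / (M₁ + M₂) :=
          hT ▸ le_trans (min_le_right _ _) (min_le_left _ _)
        have := (le_div_iff₀ hs).1 h1
        linarith
    have hKT : (L₁ + 2 * L₂ * M) * T ≤ 1 := by
      have h1 : T ≤ 1 / (L₁ + 2 * L₂ * M) :=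
        hT ▸ le_trans (min_le_right _ _) (min_le_right _ _)
      have := (le_div_iff₀ hK).1 h1
      linarith
    have hL₂MT : L₂ * M * T ≤ 1/2 := by nlinarith [mul_nonneg hL₁.le hT0]
    set c : ℝ := Mbar * Real.sqrt (2 * N) with hc_def
    have hc0 : 0 ≤ c := mul_nonneg hMbar.le (Real.sqrt_nonneg _)
    set A' : ℝ := 2 * (γ * ξ * Real.sqrt (4 * D) / (4 * Real.pi * D)) with hA'_def
    have hA'0 : 0 ≤ A' := by positivity
    -- the data package
    set S : VolterraAux.Data (EuclideanSpace ℝ (Fin (4 * N))) :=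
      { C := C, p := p, q := q, y₀ := y₀, b := b, c := c, D := D,
        L₁ := L₁, L₂ := L₂, M₁ := M₁, M₂ := M₂, M := M, T := T, A' := A',
        hb := hb, hT0 := hT0, hqc := hq, hpc := hp,
        hCc := kernel_contOn hγ hξ hη hD hC,
        hc := hc0, hA' := hA'0, hMnn := hM0, hM₁nn := hM₁0, hM₂nn := hM₂0,
        hL₁ := hL₁, hL₂ := hL₂,
        hgint := kernel_integrable hγ hξ hη hD hC,
        hgnn := hgnn, hCnn := hCnn,
        hG_le := by
          intro w
          rw [hM]
          refine setIntegral_mono_set (kernel_integrable hγ hξ hη hD hC) ?_ ?_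
          · exact (ae_restrict_iff' measurableSet_Ioi).2 (ae_of_all _ fun z hz => hgnn z hz)
          · exact (Set.Ioc_subset_Ioi_self).eventuallyLE,
        hG_tail := by
          intro w₁ w₂ h1 h2
          have := kernel_tail hγ hξ hη hD hC w₁ w₂ h1 h2
          rwa [hA'_def],
        hpB := hpBound, hpL := hpLip, hqL := hqLip,
        hqM₁ := fun v hv => hM₁.1 ⟨v, hv, rfl⟩,
        hMM := hMM, hL₂MT := hL₂MT,
        hM₂bd := by
          intro y hyc hyb τ t hτ0 hτt htT
          rw [← conv_aux C p y hτt]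
          exact hM₂.1 ⟨t, ⟨le_trans hτ0 hτt, le_trans htT hTa⟩, τ, ⟨hτ0, hτt⟩, y,
            hyc.continuousOn, fun s _ => hyb s, rfl⟩ } with hS_def
    obtain ⟨ysol, hadm, hfix⟩ := S.exists_sol
    have heqn : ∀ t ∈ Set.Icc (0:ℝ) T, ysol t
        = y₀ + ∫ τ in (0:ℝ)..t, (q (ysol τ) + ∫ s in τ..t,
            C (s - τ) • p (s - τ) (ysol s) (ysol τ)) := by
      intro t ht
      have h1 := S.eqn_form ysol ht.1
      exact (hfix t ht).trans h1.symm
    refine ⟨ysol, ⟨hadm.1.continuousOn, ?_, heqn⟩, ?_⟩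
    · intro t ht
      have := hadm.2 t
      rwa [Metric.mem_closedBall, dist_eq_norm] at this
    · -- uniqueness
      intro z hzc hzb hzeq t ht
      set zt : ℝ → EuclideanSpace ℝ (Fin (4 * N)) := fun s => z (S.cl s) with hzt_def
      have hclmem := S.cl_mem
      have hztadm : S.Adm zt := by
        constructor
        · exact hzc.comp_continuous S.cl_cont hclmem
        · intro s
          rw [Metric.mem_closedBall, dist_eq_norm]
          exact hzb _ (hclmem s)
      have hzt_eq : ∀ s ∈ Set.Icc (0:ℝ) T, zt s = z s := by
        intro s hs
        rw [hzt_def]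
        simp only
        rw [S.cl_eq hs]
      have hztfix : ∀ t' ∈ Set.Icc (0:ℝ) T, zt t' = S.Phi zt t' := by
        intro t' ht'
        rw [hzt_eq t' ht', hzeq t' ht']
        rw [← S.eqn_form zt ht'.1]
        congr 1
        rw [intervalIntegral.integral_of_le ht'.1, intervalIntegral.integral_of_le ht'.1]
        refine setIntegral_congr_fun measurableSet_Ioc fun τ hτ => ?_
        have hτIcc : τ ∈ Set.Icc (0:ℝ) T := ⟨hτ.1.le, hτ.2.trans ht'.2⟩
        have hzτ : z τ = zt τ := (hzt_eq τ hτIcc).symm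
        rw [hzτ]
        congr 1
        rw [intervalIntegral.integral_of_le hτ.2, intervalIntegral.integral_of_le hτ.2]
        refine setIntegral_congr_fun measurableSet_Ioc fun s hs => ?_
        have hsIcc : s ∈ Set.Icc (0:ℝ) T := ⟨(hτ.1.trans hs.1).le, hs.2.trans ht'.2⟩
        rw [← hzt_eq s hsIcc]
      have := S.unique hadm hztadm hfix hztfix t ht
      rw [← hzt_eq t ht]
      exact this
end

section
/- Let d = 4N for an integer N ≥ 1, and let γ, ξ, η, D > 0 with kernel C(z) = γξ e^{-ηz}/(4πDz) for z > 0. Suppose q : ℝ^d → ℝ^d is continuous and p : (0,∞) × ℝ^d × ℝ^d → ℝ^d is continuous with ‖p(h, u, v)‖ ≤ M̄√(2N)·√(4Dh) for some M̄ > 0, for all h > 0 and all u, v with ‖u - y₀‖ ≤ P and ‖v - y₀‖ ≤ P. Let y : [0,T) → ℝ^d be a continuous solution of y(t) = y₀ + ∫₀^t [q(y(τ)) + ∫_τ^t C(s-τ) p(s-τ, y(s), y(τ)) ds] dτ that satisfies ‖y(t) - y₀‖ ≤ P on [0,T) for some constant P > 0. Then the limit of y(t) as t → T⁻ exists; in particular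 {y(tₙ)} is a Cauchy sequence for every monotone increasing sequence tₙ → T. -/
open MeasureTheory Metric Set Filter

set_option maxHeartbeats 1000000 in
/-- **Continuation principle (Proposition 4.1)** for the delayed Volterra integral
equation of the hybrid alignment–chemotaxis model: a solution bounded on `[0,T)`
has a limit as `t → T⁻`; in particular `y(tₙ)` is Cauchy along every monotone
increasing sequence `tₙ → T`. -/
theorem continuation_principle
    (N : ℕ) (hN : 1 ≤ N)
    (γ ξ η D : ℝ) (hγ : 0 < γ) (hξ : 0 < ξ) (hη : 0 < η) (hD : 0 < D)
    (C : ℝ → ℝ) (hC : ∀ z > 0, C z = γ * ξ * Real.exp (-η * z) / (4 * Real.pi * D * z))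
    (y₀ : EuclideanSpace ℝ (Fin (4 * N))) (P T : ℝ) (hP : 0 < P) (hT : 0 < T)
    (q : EuclideanSpace ℝ (Fin (4 * N)) → EuclideanSpace ℝ (Fin (4 * N)))
    (hq : Continuous q)
    (p : ℝ → EuclideanSpace ℝ (Fin (4 * N)) → EuclideanSpace ℝ (Fin (4 * N)) →
      EuclideanSpace ℝ (Fin (4 * N)))
    (hp : ContinuousOn
      (fun x : ℝ × EuclideanSpace ℝ (Fin (4 * N)) × EuclideanSpace ℝ (Fin (4 * N)) =>
        p x.1 x.2.1 x.2.2) (Set.Ioi (0 : ℝ) ×ˢ Set.univ))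
    (Mbar : ℝ) (hMbar : 0 < Mbar)
    (hpBound : ∀ h > (0 : ℝ), ∀ u ∈ closedBall y₀ P, ∀ v ∈ closedBall y₀ P,
      ‖p h u v‖ ≤ Mbar * Real.sqrt (2 * N) * Real.sqrt (4 * D * h))
    (y : ℝ → EuclideanSpace ℝ (Fin (4 * N)))
    (hy : ContinuousOn y (Set.Ico 0 T))
    (hyP : ∀ t ∈ Set.Ico 0 T, ‖y t - y₀‖ ≤ P)
    (heq : ∀ t ∈ Set.Ico 0 T,
      y t = y₀ + ∫ τ in (0 : ℝ)..t,
        (q (y τ) + ∫ s in τ..t, C (s - τ) • p (s - τ) (y s) (y τ))) :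
    (∃ L : EuclideanSpace ℝ (Fin (4 * N)),
      Filter.Tendsto y (nhdsWithin T (Set.Iio T)) (nhds L)) ∧
    ∀ tseq : ℕ → ℝ, Monotone tseq → (∀ n, tseq n ∈ Set.Ico 0 T) →
      Filter.Tendsto tseq Filter.atTop (nhds T) → CauchySeq (fun n => y (tseq n)) := by
  have hπ := Real.pi_pos
  obtain ⟨Mq, hMq⟩ := (isCompact_closedBall y₀ P).exists_bound_of_continuousOn hq.continuousOn
  have hMq0 : 0 ≤ Mq := le_trans (norm_nonneg _) (hMq y₀ (mem_closedBall_self hP.le))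
  set K : ℝ := γ * ξ * Mbar * Real.sqrt (2 * N) * (2 * Real.sqrt D) / (4 * Real.pi * D)
    with hKdef
  have hK0 : 0 ≤ K := by positivity
  have hball : ∀ t ∈ Set.Ico (0:ℝ) T, y t ∈ closedBall y₀ P := by
    intro t ht
    rw [mem_closedBall, dist_eq_norm]
    exact hyP t ht
  -- pointwise kernel bound
  have hker : ∀ τ s : ℝ, 0 ≤ τ → τ < s → s < T →
      ‖C (s - τ) • p (s - τ) (y s) (y τ)‖ ≤ K * (s - τ) ^ (-(1/2) : ℝ) := by
    intro τ s hτ hτs hsT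
    have hz : 0 < s - τ := by linarith
    have hys : y s ∈ closedBall y₀ P := hball s ⟨by linarith, hsT⟩
    have hyτ : y τ ∈ closedBall y₀ P := hball τ ⟨hτ, by linarith⟩
    have hpb := hpBound (s - τ) hz (y s) hys (y τ) hyτ
    have hCz : C (s - τ) = γ * ξ * Real.exp (-η * (s - τ)) / (4 * Real.pi * D * (s - τ)) :=
      hC _ hz
    have hC0 : 0 ≤ C (s - τ) := by rw [hCz]; positivity
    have hCle : C (s - τ) ≤ γ * ξ / (4 * Real.pi * D * (s - τ)) := by
      rw [hCz]
      have hden : 0 < 4 * Real.pi * D * (s - τ) := by positivity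
      refine (div_le_div_iff_of_pos_right hden).mpr ?_
      exact mul_le_of_le_one_right (by positivity)
        (Real.exp_le_one_iff.mpr (by nlinarith))
    have hnorm : ‖C (s - τ) • p (s - τ) (y s) (y τ)‖
        = C (s - τ) * ‖p (s - τ) (y s) (y τ)‖ := by
      rw [norm_smul, Real.norm_eq_abs, abs_of_nonneg hC0]
    rw [hnorm]
    have hle : C (s - τ) * ‖p (s - τ) (y s) (y τ)‖
        ≤ (γ * ξ / (4 * Real.pi * D * (s - τ)))
          * (Mbar * Real.sqrt (2 * N) * Real.sqrt (4 * D * (s - τ))) := by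
      apply mul_le_mul hCle hpb (norm_nonneg _) (by positivity)
    refine hle.trans_eq ?_
    have h4 : Real.sqrt (4 * D * (s - τ)) = 2 * Real.sqrt D * Real.sqrt (s - τ) := by
      rw [show (4:ℝ) * D * (s - τ) = (2:ℝ)^2 * (D * (s - τ)) by ring,
        Real.sqrt_mul (by positivity), Real.sqrt_sq (by norm_num),
        Real.sqrt_mul hD.le, mul_assoc]
    have hrpow : (s - τ) ^ (-(1/2) : ℝ) = (Real.sqrt (s - τ))⁻¹ := by
      rw [Real.rpow_neg hz.le, ← Real.sqrt_eq_rpow]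
    have hs0 : 0 < Real.sqrt (s - τ) := Real.sqrt_pos.mpr hz
    have hs2 : Real.sqrt (s - τ) * Real.sqrt (s - τ) = s - τ :=
      Real.mul_self_sqrt hz.le
    rw [h4, hrpow, hKdef]
    set w := Real.sqrt (s - τ) with hw
    rw [← hs2]
    have hw0 : w ≠ 0 := ne_of_gt hs0
    field_simp
  -- integral of the comparison function
  have hrpow_int : ∀ τ a b : ℝ,
      ∫ s in a..b, K * (s - τ) ^ (-(1/2) : ℝ)
        = 2 * K * (Real.sqrt (b - τ) - Real.sqrt (a - τ)) := by
    intro τ a b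
    rw [intervalIntegral.integral_const_mul,
      intervalIntegral.integral_comp_sub_right (fun u => u ^ (-(1/2) : ℝ)) τ,
      integral_rpow (Or.inl (by norm_num))]
    rw [show (-(1/2) : ℝ) + 1 = 1/2 by norm_num, ← Real.sqrt_eq_rpow, ← Real.sqrt_eq_rpow]
    ring
  have hrpow_ii : ∀ τ a b : ℝ,
      IntervalIntegrable (fun s => K * (s - τ) ^ (-(1/2) : ℝ)) volume a b := by
    intro τ a b
    have h := ((intervalIntegral.intervalIntegrable_rpow' (r := -(1/2)) (by norm_num)
      (a := a - τ) (b := b - τ)).comp_sub_right τ).const_mul K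
    simpa using h
  -- Lemma A : bound on the inner integrals
  have hinner : ∀ τ a b : ℝ, 0 ≤ τ → τ ≤ a → a ≤ b → b < T →
      ‖∫ s in a..b, C (s - τ) • p (s - τ) (y s) (y τ)‖
        ≤ 2 * K * (Real.sqrt (b - τ) - Real.sqrt (a - τ)) := by
    intro τ a b hτ hτa hab hbT
    rw [← hrpow_int τ a b, intervalIntegral.integral_of_le hab,
      intervalIntegral.integral_of_le hab]
    calc ‖∫ s in Set.Ioc a b, C (s - τ) • p (s - τ) (y s) (y τ)‖
        ≤ ∫ s in Set.Ioc a b, ‖C (s - τ) • p (s - τ) (y s) (y τ)‖ :=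
          norm_integral_le_integral_norm _
      _ ≤ ∫ s in Set.Ioc a b, K * (s - τ) ^ (-(1/2) : ℝ) := by
          refine integral_mono_of_nonneg (ae_of_all _ fun s => norm_nonneg _)
            ((intervalIntegrable_iff_integrableOn_Ioc_of_le hab).mp (hrpow_ii τ a b)) ?_
          refine (ae_restrict_iff' measurableSet_Ioc).2 (ae_of_all _ fun s hs => ?_)
          exact hker τ s hτ (lt_of_le_of_lt hτa hs.1) (lt_of_le_of_lt hs.2 hbT)
  -- continuity of C on (0,∞)
  have hCcont : ContinuousOn C (Set.Ioi (0:ℝ)) := by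
    have h1 : ContinuousOn (fun z => γ * ξ * Real.exp (-η * z) / (4 * Real.pi * D * z))
        (Set.Ioi (0:ℝ)) := by
      apply ContinuousOn.div
      · fun_prop
      · fun_prop
      · intro z hz
        have : (0:ℝ) < z := hz
        positivity
    exact h1.congr fun z hz => hC z hz
  -- Lemma B : integrability of the inner integrand
  have hfInt : ∀ τ a b : ℝ, 0 ≤ τ → τ ≤ a → a ≤ b → b < T →
      IntervalIntegrable (fun s => C (s - τ) • p (s - τ) (y s) (y τ)) volume a b := by
    intro τ a b hτ hτa hab hbT
    rw [intervalIntegrable_iff_integrableOn_Ioc_of_le hab]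
    have hsub : Set.Ioc a b ⊆ Set.Ico 0 T := fun s hs =>
      ⟨by linarith [hs.1], lt_of_le_of_lt hs.2 hbT⟩
    have hcont : ContinuousOn (fun s => C (s - τ) • p (s - τ) (y s) (y τ)) (Set.Ioc a b) := by
      have hCc : ContinuousOn (fun s => C (s - τ)) (Set.Ioc a b) :=
        hCcont.comp (by fun_prop) (fun s hs => Set.mem_Ioi.mpr (by linarith [hs.1]))
      have hpc : ContinuousOn (fun s => p (s - τ) (y s) (y τ)) (Set.Ioc a b) := by
        have hgc : ContinuousOn (fun s : ℝ =>
            ((s - τ, (y s, y τ)) : ℝ × EuclideanSpace ℝ (Fin (4 * N)) ×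
              EuclideanSpace ℝ (Fin (4 * N)))) (Set.Ioc a b) :=
          ContinuousOn.prodMk (by fun_prop)
            (ContinuousOn.prodMk (hy.mono hsub) continuousOn_const)
        have hmaps : Set.MapsTo (fun s : ℝ =>
            ((s - τ, (y s, y τ)) : ℝ × EuclideanSpace ℝ (Fin (4 * N)) ×
              EuclideanSpace ℝ (Fin (4 * N)))) (Set.Ioc a b)
            (Set.Ioi (0:ℝ) ×ˢ Set.univ) :=
          fun s hs => ⟨show (0:ℝ) < s - τ by linarith [hs.1], Set.mem_univ _⟩
        exact hp.comp hgc hmaps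
      exact hCc.smul hpc
    refine Integrable.mono'
      ((intervalIntegrable_iff_integrableOn_Ioc_of_le hab).mp (hrpow_ii τ a b))
      (hcont.aestronglyMeasurable measurableSet_Ioc) ?_
    refine (ae_restrict_iff' measurableSet_Ioc).2 (ae_of_all _ fun s hs => ?_)
    exact hker τ s hτ (lt_of_le_of_lt hτa hs.1) (lt_of_le_of_lt hs.2 hbT)
  -- Lemma C : measurability of the parametric integral
  have hGmeas : ∀ t : ℝ, 0 ≤ t → t < T →
      AEStronglyMeasurable (fun τ => ∫ s in τ..t, C (s - τ) • p (s - τ) (y s) (y τ))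
        (volume.restrict (Set.Ioc 0 t)) := by
    intro t ht htT
    set S : Set (ℝ × ℝ) := {x | 0 ≤ x.1 ∧ x.1 < x.2 ∧ x.2 ≤ t} with hSdef
    set F : ℝ × ℝ → EuclideanSpace ℝ (Fin (4 * N)) :=
      fun x => C (x.2 - x.1) • p (x.2 - x.1) (y x.2) (y x.1) with hFdef
    have hSm : MeasurableSet S := by
      have : S = {x : ℝ × ℝ | 0 ≤ x.1} ∩ ({x | x.1 < x.2} ∩ {x | x.2 ≤ t}) := by
        ext x; simp [hSdef, and_assoc]
      rw [this]
      exact (measurableSet_le measurable_const measurable_fst).inter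
        ((measurableSet_lt measurable_fst measurable_snd).inter
          (measurableSet_le measurable_snd measurable_const))
    have hFcont : ContinuousOn F S := by
      have hsub1 : ∀ x ∈ S, x.1 ∈ Set.Ico (0:ℝ) T := fun x hx =>
        ⟨hx.1, lt_of_lt_of_le hx.2.1 (hx.2.2.trans htT.le)⟩
      have hsub2 : ∀ x ∈ S, x.2 ∈ Set.Ico (0:ℝ) T := fun x hx =>
        ⟨le_trans hx.1 hx.2.1.le, lt_of_le_of_lt hx.2.2 htT⟩
      have hCc : ContinuousOn (fun x : ℝ × ℝ => C (x.2 - x.1)) S :=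
        hCcont.comp (by fun_prop) (fun x hx => Set.mem_Ioi.mpr (by linarith [hx.2.1]))
      have hpc : ContinuousOn (fun x : ℝ × ℝ => p (x.2 - x.1) (y x.2) (y x.1)) S := by
        have hgc : ContinuousOn (fun x : ℝ × ℝ =>
            ((x.2 - x.1, (y x.2, y x.1)) : ℝ × EuclideanSpace ℝ (Fin (4 * N)) ×
              EuclideanSpace ℝ (Fin (4 * N)))) S :=
          ContinuousOn.prodMk (by fun_prop)
            (ContinuousOn.prodMk (hy.comp continuous_snd.continuousOn hsub2)
              (hy.comp continuous_fst.continuousOn hsub1))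
        have hmaps : Set.MapsTo (fun x : ℝ × ℝ =>
            ((x.2 - x.1, (y x.2, y x.1)) : ℝ × EuclideanSpace ℝ (Fin (4 * N)) ×
              EuclideanSpace ℝ (Fin (4 * N)))) S (Set.Ioi (0:ℝ) ×ˢ Set.univ) :=
          fun x hx => ⟨show (0:ℝ) < x.2 - x.1 by linarith [hx.2.1], Set.mem_univ _⟩
        exact hp.comp hgc hmaps
      exact hCc.smul hpc
    have hFm : AEStronglyMeasurable (S.indicator F) volume :=
      (aestronglyMeasurable_indicator_iff hSm).2 (hFcont.aestronglyMeasurable hSm)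
    have hInt : AEStronglyMeasurable (fun τ : ℝ => ∫ s, S.indicator F (τ, s)) volume := by
      rw [MeasureTheory.Measure.volume_eq_prod ℝ ℝ] at hFm
      exact hFm.integral_prod_right'
    refine hInt.restrict.congr ?_
    refine (ae_restrict_iff' measurableSet_Ioc).2 (ae_of_all _ fun τ hτ => ?_)
    have h1 : (fun s => S.indicator F (τ, s))
        = (Set.Ioc τ t).indicator (fun s => C (s - τ) • p (s - τ) (y s) (y τ)) := by
      funext s
      by_cases h : τ < s ∧ s ≤ t
      · rw [Set.indicator_of_mem (show (τ, s) ∈ S from ⟨hτ.1.le, h.1, h.2⟩),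
          Set.indicator_of_mem (show s ∈ Set.Ioc τ t from h)]
      · rw [Set.indicator_of_notMem (fun hmem => h ⟨hmem.2.1, hmem.2.2⟩),
          Set.indicator_of_notMem (fun hmem => h ⟨hmem.1, hmem.2⟩)]
    calc (∫ s, S.indicator F (τ, s))
        = ∫ s, (Set.Ioc τ t).indicator (fun s => C (s - τ) • p (s - τ) (y s) (y τ)) s := by
          rw [h1]
      _ = ∫ s in Set.Ioc τ t, C (s - τ) • p (s - τ) (y s) (y τ) :=
          integral_indicator measurableSet_Ioc
      _ = ∫ s in τ..t, C (s - τ) • p (s - τ) (y s) (y τ) :=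
          (intervalIntegral.integral_of_le hτ.2).symm
  -- interval integrability of the full integrand
  have hGInt : ∀ t a b : ℝ, 0 ≤ a → a ≤ b → b ≤ t → t < T →
      IntervalIntegrable (fun τ => ∫ s in τ..t, C (s - τ) • p (s - τ) (y s) (y τ))
        volume a b := by
    intro t a b ha hab hbt htT
    have ht0 : 0 ≤ t := le_trans (le_trans ha hab) hbt
    rw [intervalIntegrable_iff_integrableOn_Ioc_of_le hab]
    have hmeas := (hGmeas t ht0 htT).mono_measure
      (Measure.restrict_mono (Set.Ioc_subset_Ioc ha hbt) le_rfl)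
    refine Integrable.mono' (g := fun _ => 2 * K * Real.sqrt T)
      (integrableOn_const (C := 2 * K * Real.sqrt T) measure_Ioc_lt_top.ne)
      hmeas ?_
    refine (ae_restrict_iff' measurableSet_Ioc).2 (ae_of_all _ fun τ hτ => ?_)
    have h0τ : 0 ≤ τ := le_trans ha hτ.1.le
    have hb1 := hinner τ τ t h0τ le_rfl (le_trans hτ.2 hbt) htT
    rw [sub_self, Real.sqrt_zero, sub_zero] at hb1
    have hle : Real.sqrt (t - τ) ≤ Real.sqrt T := Real.sqrt_le_sqrt (by linarith)
    calc ‖∫ s in τ..t, C (s - τ) • p (s - τ) (y s) (y τ)‖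
        ≤ 2 * K * Real.sqrt (t - τ) := hb1
      _ ≤ 2 * K * Real.sqrt T := by nlinarith [mul_nonneg hK0 (sub_nonneg.2 hle)]
  have hFull : ∀ t a b : ℝ, 0 ≤ a → a ≤ b → b ≤ t → t < T →
      IntervalIntegrable
        (fun τ => q (y τ) + ∫ s in τ..t, C (s - τ) • p (s - τ) (y s) (y τ))
        volume a b := by
    intro t a b ha hab hbt htT
    refine IntervalIntegrable.add ?_ (hGInt t a b ha hab hbt htT)
    apply ContinuousOn.intervalIntegrable
    apply hq.comp_continuousOn (hy.mono ?_)
    intro s hs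
    rw [Set.uIcc_of_le hab] at hs
    exact ⟨le_trans ha hs.1, lt_of_le_of_lt (le_trans hs.2 hbt) htT⟩
  -- sqrt subadditivity
  have hsqrt_sub : ∀ a b : ℝ, 0 ≤ a → a ≤ b →
      Real.sqrt b - Real.sqrt a ≤ Real.sqrt (b - a) := by
    intro a b ha hab
    nlinarith [Real.sq_sqrt ha, Real.sq_sqrt (sub_nonneg.2 hab), Real.sq_sqrt (ha.trans hab),
      Real.sqrt_nonneg a, Real.sqrt_nonneg (b - a), Real.sqrt_nonneg b,
      mul_nonneg (Real.sqrt_nonneg a) (Real.sqrt_nonneg (b - a))]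
  -- main modulus-of-continuity estimate
  have hmain : ∀ t₁ t₂ : ℝ, 0 ≤ t₁ → t₁ ≤ t₂ → t₂ < T →
      ‖y t₂ - y t₁‖ ≤ (Mq + 2 * K * Real.sqrt T) * (t₂ - t₁)
        + (2 * K * T) * Real.sqrt (t₂ - t₁) := by
    intro t₁ t₂ h0 h12 h2T
    have h1T : t₁ < T := lt_of_le_of_lt h12 h2T
    have h02 : 0 ≤ t₂ := le_trans h0 h12
    have hy1 := heq t₁ ⟨h0, h1T⟩
    have hy2 := heq t₂ ⟨h02, h2T⟩
    have hI2a := hFull t₂ 0 t₁ le_rfl h0 h12 h2T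
    have hI2b := hFull t₂ t₁ t₂ h0 h12 le_rfl h2T
    have hI1 := hFull t₁ 0 t₁ le_rfl h0 le_rfl h1T
    have hdiff : y t₂ - y t₁ =
        (∫ τ in (0:ℝ)..t₁,
          ((q (y τ) + ∫ s in τ..t₂, C (s - τ) • p (s - τ) (y s) (y τ))
            - (q (y τ) + ∫ s in τ..t₁, C (s - τ) • p (s - τ) (y s) (y τ))))
        + ∫ τ in t₁..t₂, (q (y τ) + ∫ s in τ..t₂, C (s - τ) • p (s - τ) (y s) (y τ)) := by
      rw [hy1, hy2, add_sub_add_left_eq_sub,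
        ← intervalIntegral.integral_add_adjacent_intervals hI2a hI2b,
        intervalIntegral.integral_sub hI2a hI1]
      abel
    have hnorm1 : ‖∫ τ in (0:ℝ)..t₁,
          ((q (y τ) + ∫ s in τ..t₂, C (s - τ) • p (s - τ) (y s) (y τ))
            - (q (y τ) + ∫ s in τ..t₁, C (s - τ) • p (s - τ) (y s) (y τ)))‖
        ≤ (2 * K * Real.sqrt (t₂ - t₁)) * |t₁ - 0| := by
      apply intervalIntegral.norm_integral_le_of_norm_le_const
      intro τ hτ
      rw [Set.uIoc_of_le h0] at hτ
      have h0τ : 0 ≤ τ := hτ.1.le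
      have hτ1 : τ ≤ t₁ := hτ.2
      have hcancel :
          (q (y τ) + ∫ s in τ..t₂, C (s - τ) • p (s - τ) (y s) (y τ))
            - (q (y τ) + ∫ s in τ..t₁, C (s - τ) • p (s - τ) (y s) (y τ))
          = ∫ s in t₁..t₂, C (s - τ) • p (s - τ) (y s) (y τ) := by
        rw [add_sub_add_left_eq_sub,
          ← intervalIntegral.integral_add_adjacent_intervals
            (hfInt τ τ t₁ h0τ le_rfl hτ1 h1T) (hfInt τ t₁ t₂ h0τ hτ1 h12 h2T)]
        abel
      rw [hcancel]
      have hb := hinner τ t₁ t₂ h0τ hτ1 h12 h2T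
      have hs : Real.sqrt (t₂ - τ) - Real.sqrt (t₁ - τ) ≤ Real.sqrt (t₂ - t₁) := by
        have := hsqrt_sub (t₁ - τ) (t₂ - τ) (by linarith) (by linarith)
        rw [show t₂ - τ - (t₁ - τ) = t₂ - t₁ by ring] at this
        exact this
      calc ‖∫ s in t₁..t₂, C (s - τ) • p (s - τ) (y s) (y τ)‖
          ≤ 2 * K * (Real.sqrt (t₂ - τ) - Real.sqrt (t₁ - τ)) := hb
        _ ≤ 2 * K * Real.sqrt (t₂ - t₁) := by nlinarith [mul_nonneg hK0 (sub_nonneg.2 hs)]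
    have hnorm2 : ‖∫ τ in t₁..t₂,
          (q (y τ) + ∫ s in τ..t₂, C (s - τ) • p (s - τ) (y s) (y τ))‖
        ≤ (Mq + 2 * K * Real.sqrt T) * |t₂ - t₁| := by
      apply intervalIntegral.norm_integral_le_of_norm_le_const
      intro τ hτ
      rw [Set.uIoc_of_le h12] at hτ
      have h0τ : 0 ≤ τ := le_trans h0 hτ.1.le
      have hb := hinner τ τ t₂ h0τ le_rfl (le_trans hτ.2 le_rfl) h2T
      rw [sub_self, Real.sqrt_zero, sub_zero] at hb
      have hle : Real.sqrt (t₂ - τ) ≤ Real.sqrt T := Real.sqrt_le_sqrt (by linarith)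
      calc ‖q (y τ) + ∫ s in τ..t₂, C (s - τ) • p (s - τ) (y s) (y τ)‖
          ≤ ‖q (y τ)‖ + ‖∫ s in τ..t₂, C (s - τ) • p (s - τ) (y s) (y τ)‖ :=
            norm_add_le _ _
        _ ≤ Mq + 2 * K * Real.sqrt T := by
            have hqb := hMq (y τ) (hball τ ⟨h0τ, lt_of_le_of_lt hτ.2 h2T⟩)
            nlinarith [mul_nonneg hK0 (sub_nonneg.2 hle)]
    rw [hdiff]
    have habs1 : |t₁ - 0| = t₁ := by rw [sub_zero, abs_of_nonneg h0]
    have habs2 : |t₂ - t₁| = t₂ - t₁ := abs_of_nonneg (by linarith)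
    rw [habs1] at hnorm1
    rw [habs2] at hnorm2
    calc ‖_ + _‖ ≤ (2 * K * Real.sqrt (t₂ - t₁)) * t₁
          + (Mq + 2 * K * Real.sqrt T) * (t₂ - t₁) :=
        le_trans (norm_add_le _ _) (add_le_add hnorm1 hnorm2)
      _ ≤ (Mq + 2 * K * Real.sqrt T) * (t₂ - t₁) + (2 * K * T) * Real.sqrt (t₂ - t₁) := by
        have h1 : (2 * K * Real.sqrt (t₂ - t₁)) * t₁ ≤ (2 * K * T) * Real.sqrt (t₂ - t₁) := by
          nlinarith [mul_nonneg (mul_nonneg hK0 (Real.sqrt_nonneg (t₂ - t₁)))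
            (sub_nonneg.2 h1T.le)]
        linarith
  -- choose the modulus
  set A := Mq + 2 * K * Real.sqrt T with hAdef
  set B := 2 * K * T with hBdef
  have hδ : ∀ ε > (0:ℝ), ∃ δ > (0:ℝ), ∀ d, 0 ≤ d → d ≤ δ →
      A * d + B * Real.sqrt d < ε := by
    intro ε hε
    have hcont : Tendsto (fun d : ℝ => A * d + B * Real.sqrt d) (nhds 0)
        (nhds (A * 0 + B * Real.sqrt 0)) :=
      ((continuous_const.mul continuous_id).add
        (continuous_const.mul Real.continuous_sqrt)).tendsto 0
    rw [Real.sqrt_zero, mul_zero, mul_zero, add_zero] at hcont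
    have hev : ∀ᶠ d in nhds (0:ℝ), A * d + B * Real.sqrt d < ε :=
      hcont.eventually_lt_const hε
    obtain ⟨δ, hδ0, hδh⟩ := Metric.eventually_nhds_iff.mp hev
    refine ⟨δ / 2, by linarith, fun d hd0 hdδ => hδh ?_⟩
    rw [Real.dist_eq, sub_zero, abs_of_nonneg hd0]
    linarith
  -- Cauchy filter at T⁻
  have hCauchy : Cauchy (Filter.map y (nhdsWithin T (Set.Iio T))) := by
    rw [Metric.cauchy_iff]
    constructor
    · exact Filter.map_neBot
    · intro ε hε
      obtain ⟨δ, hδ0, hδε⟩ := hδ ε hε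
      set a := max (T - δ) 0 with hadef
      have haT : a < T := max_lt (by linarith) hT
      have ha0 : 0 ≤ a := le_max_right _ _
      have haδ : T - a ≤ δ := by
        have := le_max_left (T - δ) 0
        simp only [hadef]
        linarith [le_max_left (T - δ) 0]
      refine ⟨y '' Set.Ioo a T, Filter.image_mem_map (Ioo_mem_nhdsLT_of_mem ⟨haT, le_rfl⟩), ?_⟩
      rintro _ ⟨t₁, ht₁, rfl⟩ _ ⟨t₂, ht₂, rfl⟩
      rcases le_total t₁ t₂ with h | h
      · rw [dist_eq_norm']
        calc ‖y t₂ - y t₁‖ ≤ A * (t₂ - t₁) + B * Real.sqrt (t₂ - t₁) :=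
            hmain t₁ t₂ (le_trans ha0 ht₁.1.le) h ht₂.2
          _ < ε := hδε _ (by linarith) (by linarith [ht₁.1, ht₂.2])
      · rw [dist_eq_norm]
        calc ‖y t₁ - y t₂‖ ≤ A * (t₁ - t₂) + B * Real.sqrt (t₁ - t₂) :=
            hmain t₂ t₁ (le_trans ha0 ht₂.1.le) h ht₁.2
          _ < ε := hδε _ (by linarith) (by linarith [ht₂.1, ht₁.2])
  obtain ⟨L, hL⟩ := CompleteSpace.complete hCauchy
  refine ⟨⟨L, hL⟩, ?_⟩
  intro tseq hmono htmem htT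
  have hts : Tendsto tseq atTop (nhdsWithin T (Set.Iio T)) :=
    tendsto_nhdsWithin_of_tendsto_nhds_of_eventually_within _ htT
      (Filter.Eventually.of_forall fun n => (htmem n).2)
  exact (Filter.Tendsto.comp hL hts).cauchySeq
end

section
/- Let β, γ, ξ, η, D, R > 0, N ∈ ℕ with N ≥ 1, define C̄(z) = γξR² e^{-R²/(4zD) - ηz}/(8z²D²) for z > 0 and g(t) = N ∫₀^t C̄(z) dz for t ≥ 0. Fix t̄ > 0. Then there exist positive constants k₁, k₂, k₃ and a function U : [t̄,∞) × ℝ² → ℝ, given explicitly by U(t, V, X) = (V² + kXV + g(t)X²)·e^{-g(t)/g(t̄)} for a suitable constant k > 0, such that for all t ≥ t̄ and all (V,X) ∈ ℝ²: (a) k₂(V² + X²) ≤ U(t, V, X) ≤ k₁(V² + X²); and (b) ∂U/∂t + (∂U/∂V)·(-βV - g(t)X) + (∂U/∂X)·V ≤ -k₃(V² + X²). -/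
open MeasureTheory Set

lemma sq_quarter_le_exp {x : ℝ} (hx : 0 ≤ x) : x^2/4 ≤ Real.exp x := by
  have h := Real.add_one_le_exp (x/2)
  have h2 : Real.exp x = Real.exp (x/2) * Real.exp (x/2) := by
    rw [← Real.exp_add]; ring_nf
  nlinarith [Real.exp_pos (x/2)]

lemma exp_neg_div_le {a z : ℝ} (ha : 0 < a) (hz : 0 < z) :
    Real.exp (-(a/z)) ≤ 4*z^2/a^2 := by
  have h1 : (a/z)^2/4 ≤ Real.exp (a/z) := sq_quarter_le_exp (by positivity)
  have h2 : (0:ℝ) < (a/z)^2/4 := by positivity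
  have h3 : (Real.exp (a/z))⁻¹ ≤ ((a/z)^2/4)⁻¹ := inv_anti₀ h2 h1
  rw [Real.exp_neg]
  refine h3.trans_eq ?_
  field_simp

lemma bracket_le (β k gtb gt p V X : ℝ) {A : ℝ}
    (hβ : 0 < β) (hk : 0 < k) (hgtb : 0 < gtb) (hg : gtb ≤ gt)
    (hp : 0 ≤ p) (hpA : β + p ≤ A)
    (hcond : 2*gtb*k + k*A^2 ≤ 2*gtb*β) :
    (k - 2*β - p)*V^2 + (-(k*β) - k*p)*(X*V) + (p*gtb - p*gt - k*gt)*X^2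
      ≤ -β*V^2 - (k*gtb/2)*X^2 := by
  have hc : 0 < β + p := by linarith
  have key : -((β+p)*(X*V)) ≤ ((β+p)^2*V^2 + gtb^2*X^2)/(2*gtb) := by
    rw [le_div_iff₀ (by linarith)]
    nlinarith [sq_nonneg ((β+p)*V + gtb*X)]
  have hA2 : (β+p)^2 ≤ A^2 := by nlinarith
  have hkA : k*A^2/(2*gtb) ≤ β - k := by
    rw [div_le_iff₀ (by linarith)]; nlinarith
  have key2 : -(k*((β+p)*(X*V))) ≤ k*(((β+p)^2*V^2 + gtb^2*X^2)/(2*gtb)) := by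
    have := mul_le_mul_of_nonneg_left key hk.le
    linarith [this]
  have e1 : k*(((β+p)^2*V^2 + gtb^2*X^2)/(2*gtb))
      = (k*(β+p)^2/(2*gtb))*V^2 + (k*gtb/2)*X^2 := by field_simp
  have e2 : k*(β+p)^2/(2*gtb) ≤ k*A^2/(2*gtb) :=
    div_le_div_of_nonneg_right (by nlinarith) (by linarith) |>.trans_eq rfl
  have hV : k*(β+p)^2/(2*gtb) ≤ β - k := le_trans e2 hkA
  have h3 := mul_le_mul_of_nonneg_right hV (sq_nonneg V)
  have h4 : 0 ≤ p*(gt-gtb)*X^2 := mul_nonneg (mul_nonneg hp (by linarith)) (sq_nonneg X)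
  have h5 : 0 ≤ k*(gt-gtb)*X^2 := mul_nonneg (mul_nonneg hk.le (by linarith)) (sq_nonneg X)
  have h6 : 0 ≤ p*V^2 := mul_nonneg hp (sq_nonneg V)
  nlinarith [key2, e1, h3, h4, h5, h6]

lemma lower_bound (k gb gt m V X : ℝ) (hk : 0 < k) (hk1 : k ≤ 1) (hkg : k ≤ gb)
    (hgb : 0 < gb) (hg : gb ≤ gt) (hm1 : m ≤ 1/2) (hm2 : m ≤ gb/2) (hm0 : 0 ≤ m) :
    m*(V^2+X^2) ≤ V^2 + k*X*V + gt*X^2 := by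
  nlinarith [mul_nonneg hk.le (sq_nonneg (V+X)), sq_nonneg V, sq_nonneg X,
    mul_le_mul_of_nonneg_right hm1 (sq_nonneg V),
    mul_le_mul_of_nonneg_right hm2 (sq_nonneg X),
    mul_nonneg (by linarith : (0:ℝ) ≤ gt - gb) (sq_nonneg X)]

set_option maxHeartbeats 1000000 in
/-- **Lyapunov function (Theorem 5.1)** for the linearized planar system
`V̇ = -βV - g(t)X`, `Ẋ = V` of the alignment–chemotaxis model: the explicit
function `U(t,V,X) = (V² + kXV + g(t)X²)·e^{-g(t)/g(t̄)}` is, for a suitable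
constant `k > 0`, a Lyapunov function on `[t̄, ∞)`: it is equivalent to
`V² + X²` (with constants `k₁, k₂`) and its derivative along the flow is at most
`-k₃(V² + X²)`. -/
theorem lyapunov_function_exists
    (β γ ξ η D R : ℝ) (hβ : 0 < β) (hγ : 0 < γ) (hξ : 0 < ξ) (hη : 0 < η)
    (hD : 0 < D) (hR : 0 < R) (N : ℕ) (hN : 1 ≤ N)
    (Cb : ℝ → ℝ)
    (hCb : ∀ z > 0, Cb z =
      γ * ξ * R ^ 2 * Real.exp (-R ^ 2 / (4 * z * D) - η * z) / (8 * z ^ 2 * D ^ 2))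
    (g : ℝ → ℝ) (hg : ∀ t, g t = (N : ℝ) * ∫ z in (0 : ℝ)..t, Cb z)
    (tb : ℝ) (htb : 0 < tb) :
    ∃ k > (0 : ℝ), ∃ k₁ > (0 : ℝ), ∃ k₂ > (0 : ℝ), ∃ k₃ > (0 : ℝ),
      ∀ t ≥ tb, ∀ V X : ℝ,
        (k₂ * (V ^ 2 + X ^ 2) ≤
            (V ^ 2 + k * X * V + g t * X ^ 2) * Real.exp (-(g t) / g tb) ∧
          (V ^ 2 + k * X * V + g t * X ^ 2) * Real.exp (-(g t) / g tb) ≤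
            k₁ * (V ^ 2 + X ^ 2)) ∧
        deriv (fun s => (V ^ 2 + k * X * V + g s * X ^ 2) * Real.exp (-(g s) / g tb)) t
          + (deriv (fun v => (v ^ 2 + k * X * v + g t * X ^ 2) *
              Real.exp (-(g t) / g tb)) V) * (-β * V - g t * X)
          + (deriv (fun x => (V ^ 2 + k * x * V + g t * x ^ 2) *
              Real.exp (-(g t) / g tb)) X) * V
          ≤ -k₃ * (V ^ 2 + X ^ 2) := by
  set F : ℝ → ℝ := fun z =>
    γ * ξ * R ^ 2 * Real.exp (-R ^ 2 / (4 * z * D) - η * z) / (8 * z ^ 2 * D ^ 2) with hFdef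
  obtain ⟨B, hBdef⟩ : ∃ B : ℝ, B = 8*γ*ξ/R^2 := ⟨_, rfl⟩
  have hB : 0 < B := by rw [hBdef]; positivity
  have hNpos : (0:ℝ) < (N:ℝ) := by exact_mod_cast Nat.lt_of_lt_of_le Nat.zero_lt_one hN
  have hF : ∀ z > (0:ℝ), Cb z = F z := fun z hz => hCb z hz
  have hFpos : ∀ z > (0:ℝ), 0 < F z := by
    intro z hz
    exact div_pos (by positivity) (by positivity)
  have hFle : ∀ z > (0:ℝ), F z ≤ B * Real.exp (-(η*z)) := by
    intro z hz
    set a : ℝ := R^2/(4*D) with hadef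
    have ha : 0 < a := by positivity
    have hsplit : -R ^ 2 / (4 * z * D) - η * z = (-(a/z)) + (-(η*z)) := by
      rw [hadef]; field_simp; ring
    have hexp := exp_neg_div_le ha hz
    have hFz : F z = (γ*ξ*R^2/(8*z^2*D^2)) * Real.exp (-(a/z)) * Real.exp (-(η*z)) := by
      rw [hFdef]; simp only []
      rw [hsplit, Real.exp_add]; ring
    rw [hFz]
    have hc : (0:ℝ) ≤ γ*ξ*R^2/(8*z^2*D^2) := by positivity
    have step : (γ*ξ*R^2/(8*z^2*D^2)) * Real.exp (-(a/z)) * Real.exp (-(η*z))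
        ≤ (γ*ξ*R^2/(8*z^2*D^2)) * (4*z^2/a^2) * Real.exp (-(η*z)) := by
      have := mul_le_mul_of_nonneg_left hexp hc
      exact mul_le_mul_of_nonneg_right this (Real.exp_pos _).le
    refine step.trans_eq ?_
    have : (γ*ξ*R^2/(8*z^2*D^2)) * (4*z^2/a^2) = B := by
      rw [hadef, hBdef]; field_simp; ring
    rw [this]
  have hFleB : ∀ z > (0:ℝ), F z ≤ B := by
    intro z hz
    refine (hFle z hz).trans ?_
    have : Real.exp (-(η*z)) ≤ 1 := Real.exp_le_one_iff.mpr (by nlinarith)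
    nlinarith
  have hFcont : ∀ z > (0:ℝ), ContinuousAt F z := by
    intro z hz
    have hzD : (4*z*D) ≠ 0 := by positivity
    have hden : (8*z^2*D^2) ≠ 0 := by positivity
    have cd1 : ContinuousAt (fun w : ℝ => 4*w*D) z := by fun_prop
    have cd2 : ContinuousAt (fun w : ℝ => η*w) z := by fun_prop
    have cinner : ContinuousAt (fun w => -R^2/(4*w*D) - η*w) z :=
      (ContinuousAt.div continuousAt_const cd1 hzD).sub cd2
    have cnum : ContinuousAt (fun w => γ*ξ*R^2 * Real.exp (-R^2/(4*w*D) - η*w)) z :=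
      continuousAt_const.mul (Real.continuous_exp.continuousAt.comp cinner)
    have cden : ContinuousAt (fun w : ℝ => 8*w^2*D^2) z := by fun_prop
    exact cnum.div cden hden
  have hFmeas : Measurable F := by
    have m1 : Measurable fun z : ℝ => -R^2/(4*z*D) - η*z :=
      (measurable_const.div ((measurable_id'.const_mul 4).mul_const D)).sub
        (measurable_id'.const_mul η)
    have m2 : Measurable fun z : ℝ => γ * ξ * R ^ 2 * Real.exp (-R^2/(4*z*D) - η*z) :=
      measurable_const.mul (Real.measurable_exp.comp m1)
    exact m2.div ((measurable_const.mul (measurable_id'.pow_const 2)).mul_const (D^2))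
  have hFon : ∀ t > (0:ℝ), IntegrableOn F (Ioc 0 t) := by
    intro t ht
    refine Measure.integrableOn_of_bounded (measure_Ioc_lt_top).ne
      hFmeas.aestronglyMeasurable (M := B) ?_
    refine ae_restrict_of_forall_mem measurableSet_Ioc fun z hz => ?_
    rw [Real.norm_eq_abs, abs_of_pos (hFpos z hz.1)]
    exact hFleB z hz.1
  have hCbon : ∀ t > (0:ℝ), IntegrableOn Cb (Ioc 0 t) := by
    intro t ht
    exact (hFon t ht).congr
      (ae_restrict_of_forall_mem measurableSet_Ioc fun z hz => (hF z hz.1).symm)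
  have hII : ∀ s t : ℝ, 0 ≤ s → s ≤ t → IntervalIntegrable Cb volume s t := by
    intro s t hs hst
    rw [intervalIntegrable_iff_integrableOn_Ioc_of_le hst]
    rcases eq_or_lt_of_le (hs.trans hst) with h0 | h0
    · have hst' : s = t := le_antisymm hst (h0 ▸ hs)
      subst hst'
      simp
    · exact (hCbon t h0).mono_set (Ioc_subset_Ioc hs le_rfl)
  have hCbpos : ∀ z > (0:ℝ), 0 < Cb z := fun z hz => (hF z hz) ▸ hFpos z hz
  have hgmono : ∀ t, tb ≤ t → g tb ≤ g t := by
    intro t ht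
    rw [hg t, hg tb]
    have hadd := intervalIntegral.integral_add_adjacent_intervals
      (hII 0 tb le_rfl htb.le) (hII tb t htb.le ht)
    have hnn : 0 ≤ ∫ z in tb..t, Cb z :=
      intervalIntegral.integral_nonneg ht
        (fun u hu => (hCbpos u (lt_of_lt_of_le htb hu.1)).le)
    have : (∫ z in (0:ℝ)..tb, Cb z) ≤ ∫ z in (0:ℝ)..t, Cb z := by
      rw [← hadd]; linarith
    exact mul_le_mul_of_nonneg_left this hNpos.le
  have hgtbpos : 0 < g tb := by
    rw [hg tb]
    exact mul_pos hNpos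
      (intervalIntegral.intervalIntegral_pos_of_pos_on (hII 0 tb le_rfl htb.le)
        (fun z hz => hCbpos z hz.1) htb)
  have hΦ : ∀ z : ℝ, HasDerivAt (fun w => -B/η * Real.exp (-(η*w)))
      (B * Real.exp (-(η*z))) z := by
    intro z
    have h1 : HasDerivAt (fun w : ℝ => -(η*w)) (-η) z := by
      have := ((hasDerivAt_id z).const_mul η).neg
      simp at this
      exact this
    have h2 := (h1.exp).const_mul (-B/η)
    refine h2.congr_deriv ?_
    have hη0 : η ≠ 0 := hη.ne'
    rw [div_mul_eq_mul_div, div_eq_iff hη0]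
    ring
  have hgle : ∀ t, tb ≤ t → g t ≤ (N:ℝ)*B/η := by
    intro t ht
    have ht0 : 0 < t := lt_of_lt_of_le htb ht
    rw [hg t]
    have e1 : ∫ z in (0:ℝ)..t, Cb z = ∫ z in Ioc (0:ℝ) t, Cb z :=
      intervalIntegral.integral_of_le ht0.le
    have hgc : IntegrableOn (fun z => B * Real.exp (-(η*z))) (Ioc (0:ℝ) t) :=
      (Continuous.integrableOn_Ioc (by fun_prop))
    have e2 : ∫ z in Ioc (0:ℝ) t, Cb z ≤ ∫ z in Ioc (0:ℝ) t, B * Real.exp (-(η*z)) :=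
      setIntegral_mono_on (hCbon t ht0) hgc measurableSet_Ioc
        (fun z hz => (hF z hz.1) ▸ hFle z hz.1)
    have e3 : ∫ z in Ioc (0:ℝ) t, B * Real.exp (-(η*z))
        = ∫ z in (0:ℝ)..t, B * Real.exp (-(η*z)) :=
      (intervalIntegral.integral_of_le ht0.le).symm
    have e4 : ∫ z in (0:ℝ)..t, B * Real.exp (-(η*z))
        = -B/η * Real.exp (-(η*t)) - -B/η * Real.exp (-(η*0)) :=
      intervalIntegral.integral_eq_sub_of_hasDerivAt (fun z _ => hΦ z)
        ((by fun_prop : Continuous fun z : ℝ => B * Real.exp (-(η*z))).intervalIntegrable 0 t)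
    have e5 : ∫ z in (0:ℝ)..t, Cb z ≤ B/η := by
      rw [e1]
      refine e2.trans ?_
      rw [e3, e4]
      simp only [mul_zero, neg_zero, Real.exp_zero, mul_one]
      have h6 : 0 < B/η * Real.exp (-(η*t)) := by positivity
      have h7 : -B / η * Real.exp (-(η * t)) - -B / η = B/η - B/η * Real.exp (-(η*t)) := by
        ring
      rw [h7]
      linarith
    calc (N:ℝ) * ∫ z in (0:ℝ)..t, Cb z ≤ (N:ℝ) * (B/η) :=
          mul_le_mul_of_nonneg_left e5 hNpos.le
      _ = (N:ℝ)*B/η := by ring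
  have hgd : ∀ t, tb ≤ t → HasDerivAt g ((N:ℝ) * Cb t) t := by
    intro t ht
    have ht0 : 0 < t := lt_of_lt_of_le htb ht
    have hci : ContinuousAt Cb t :=
      (hFcont t ht0).congr
        (Filter.eventuallyEq_of_mem (Ioi_mem_nhds ht0) fun z hz => (hF z hz).symm)
    have aesm : AEStronglyMeasurable Cb (volume.restrict (Ioi (0:ℝ))) := by
      refine (hFmeas.aestronglyMeasurable.restrict).congr ?_
      exact ae_restrict_of_forall_mem measurableSet_Ioi fun z hz => (hF z hz).symm
    have hd := intervalIntegral.integral_hasDerivAt_right (hII 0 t le_rfl ht0.le)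
      ⟨Ioi 0, Ioi_mem_nhds ht0, aesm⟩ hci
    have hd2 := hd.const_mul (N:ℝ)
    exact hd2.congr_of_eventuallyEq (Filter.Eventually.of_forall fun u => hg u)
  -- constants
  obtain ⟨M, hMdef⟩ : ∃ M : ℝ, M = (N:ℝ)*B := ⟨_, rfl⟩
  have hM : 0 < M := by rw [hMdef]; positivity
  obtain ⟨A, hAdef⟩ : ∃ A : ℝ, A = β + M/(g tb) := ⟨_, rfl⟩
  have hA : 0 < A := by rw [hAdef]; positivity
  obtain ⟨k, hkdef⟩ : ∃ k : ℝ, k = min 1 (min (g tb) (β/(1 + A^2/(2*(g tb))))) := ⟨_, rfl⟩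
  have hkpos : 0 < k := by
    rw [hkdef]
    refine lt_min one_pos (lt_min hgtbpos ?_)
    positivity
  have hk1 : k ≤ 1 := by rw [hkdef]; exact min_le_left _ _
  have hkg : k ≤ g tb := by rw [hkdef]; exact (min_le_right _ _).trans (min_le_left _ _)
  have hkc : 2*(g tb)*k + k*A^2 ≤ 2*(g tb)*β := by
    have hd0 : 0 < 1 + A^2/(2*(g tb)) := by positivity
    have hkκ : k ≤ β/(1 + A^2/(2*(g tb))) := by
      rw [hkdef]; exact (min_le_right _ _).trans (min_le_right _ _)
    have h1 : k*(2*(g tb) + A^2) ≤ (β/(1 + A^2/(2*(g tb))))*(2*(g tb) + A^2) :=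
      mul_le_mul_of_nonneg_right hkκ (by positivity)
    have he : (β/(1 + A^2/(2*(g tb))))*(2*(g tb) + A^2) = 2*(g tb)*β := by
      field_simp
    have h2 : k*(2*(g tb) + A^2) ≤ 2*(g tb)*β := he ▸ h1
    linarith
  obtain ⟨G, hGdef⟩ : ∃ G : ℝ, G = (N:ℝ)*B/η := ⟨_, rfl⟩
  have hG : 0 < G := by rw [hGdef]; positivity
  obtain ⟨E0, hE0def⟩ : ∃ E0 : ℝ, E0 = Real.exp (-G/(g tb)) := ⟨_, rfl⟩
  have hE0pos : 0 < E0 := by rw [hE0def]; exact Real.exp_pos _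
  obtain ⟨m, hmdef⟩ : ∃ m : ℝ, m = min (1/2 : ℝ) ((g tb)/2) := ⟨_, rfl⟩
  have hmpos : 0 < m := by rw [hmdef]; exact lt_min (by norm_num) (by positivity)
  obtain ⟨c, hcdef⟩ : ∃ c : ℝ, c = min β (k*(g tb)/2) := ⟨_, rfl⟩
  have hcpos : 0 < c := by rw [hcdef]; exact lt_min hβ (by positivity)
  refine ⟨k, hkpos, 1+G+k, by positivity, m*E0, by positivity, c*E0, by positivity, ?_⟩
  intro t ht V X
  have ht0 : 0 < t := lt_of_lt_of_le htb ht
  have hgg : g tb ≤ g t := hgmono t ht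
  have hgt0 : 0 < g t := lt_of_lt_of_le hgtbpos hgg
  have hgG : g t ≤ G := by rw [hGdef]; exact hgle t ht
  have hE1 : Real.exp (-(g t)/g tb) ≤ 1 := by
    rw [Real.exp_le_one_iff]
    apply div_nonpos_of_nonpos_of_nonneg <;> linarith
  have hE0le : E0 ≤ Real.exp (-(g t)/g tb) := by
    rw [hE0def]
    exact Real.exp_le_exp.mpr (div_le_div_of_nonneg_right (neg_le_neg hgG) hgtbpos.le)
  have hEpos : 0 < Real.exp (-(g t)/g tb) := Real.exp_pos _
  have hQlow : m*(V^2+X^2) ≤ V^2 + k*X*V + g t*X^2 :=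
    lower_bound k (g tb) (g t) m V X hkpos hk1 hkg hgtbpos hgg
      (by rw [hmdef]; exact min_le_left _ _) (by rw [hmdef]; exact min_le_right _ _) hmpos.le
  have hS0 : (0:ℝ) ≤ V^2+X^2 := by positivity
  have hQ0 : 0 ≤ V^2 + k*X*V + g t*X^2 :=
    le_trans (mul_nonneg hmpos.le hS0) hQlow
  constructor
  · constructor
    · calc m*E0*(V^2+X^2) = (m*(V^2+X^2))*E0 := by ring
        _ ≤ (V^2 + k*X*V + g t*X^2)*E0 := mul_le_mul_of_nonneg_right hQlow hE0pos.le
        _ ≤ (V ^ 2 + k * X * V + g t * X ^ 2) * Real.exp (-(g t) / g tb) :=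
          mul_le_mul_of_nonneg_left hE0le hQ0
    · have hQup : V^2 + k*X*V + g t*X^2 ≤ (1+G+k)*(V^2+X^2) := by
        have h1 : k*X*V ≤ k/2*V^2 + k/2*X^2 := by
          nlinarith [mul_nonneg hkpos.le (sq_nonneg (V-X))]
        have h2 : g t*X^2 ≤ G*X^2 := mul_le_mul_of_nonneg_right hgG (sq_nonneg X)
        have h3 : 0 ≤ G*V^2 := mul_nonneg hG.le (sq_nonneg V)
        have h4 : 0 ≤ k*V^2 := mul_nonneg hkpos.le (sq_nonneg V)
        have h5 : 0 ≤ k*X^2 := mul_nonneg hkpos.le (sq_nonneg X)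
        have h6 : 0 ≤ G*X^2 := mul_nonneg hG.le (sq_nonneg X)
        linarith [h1, h2, h3, h4, h5, h6, sq_nonneg V, sq_nonneg X]
      calc (V ^ 2 + k * X * V + g t * X ^ 2) * Real.exp (-(g t) / g tb)
          ≤ V ^ 2 + k * X * V + g t * X ^ 2 := mul_le_of_le_one_right hQ0 hE1
        _ ≤ (1+G+k)*(V^2+X^2) := hQup
  · -- derivative part
    have hgd' : HasDerivAt g ((N:ℝ)*Cb t) t := hgd t ht
    obtain ⟨w, hwdef⟩ : ∃ w : ℝ, w = (N:ℝ)*Cb t := ⟨_, rfl⟩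
    have hw0 : 0 ≤ w := by
      have := hCbpos t ht0
      rw [hwdef]
      positivity
    have hwM : w ≤ M := by
      rw [hwdef, hMdef]
      have h1 : Cb t ≤ B := (hF t ht0) ▸ hFleB t ht0
      exact mul_le_mul_of_nonneg_left h1 hNpos.le
    have hDt : HasDerivAt
        (fun s => (V ^ 2 + k * X * V + g s * X ^ 2) * Real.exp (-(g s) / g tb))
        ((w*X^2) * Real.exp (-(g t)/g tb)
          + (V^2+k*X*V+g t*X^2)*(Real.exp (-(g t)/g tb) * (-w/(g tb)))) t := by
      have h1 : HasDerivAt (fun s => V ^ 2 + k * X * V + g s * X ^ 2) (w*X^2) t := by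
        rw [hwdef]
        simpa using hgd'.mul_const (X^2)
      have h2 : HasDerivAt (fun s => Real.exp (-(g s) / g tb))
          (Real.exp (-(g t)/g tb) * (-w/(g tb))) t := by
        rw [hwdef]
        have := ((hgd'.neg).div_const (g tb)).exp
        simpa using this
      exact h1.mul h2
    have hDV : HasDerivAt
        (fun v => (v ^ 2 + k * X * v + g t * X ^ 2) * Real.exp (-(g t) / g tb))
        ((2*V + k*X) * Real.exp (-(g t)/g tb)) V := by
      have h1 : HasDerivAt (fun v : ℝ => v ^ 2 + k * X * v + g t * X ^ 2) (2*V + k*X) V := by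
        have := ((hasDerivAt_pow 2 V).add
          (((hasDerivAt_id V).const_mul (k*X)))).add_const (g t * X ^ 2)
        simpa using this
      exact h1.mul_const _
    have hDX : HasDerivAt
        (fun x => (V ^ 2 + k * x * V + g t * x ^ 2) * Real.exp (-(g t) / g tb))
        ((k*V + g t*(2*X)) * Real.exp (-(g t)/g tb)) X := by
      have h1 : HasDerivAt (fun x : ℝ => V ^ 2 + k * x * V + g t * x ^ 2)
          (k*V + g t*(2*X)) X := by
        have := ((hasDerivAt_const X (V^2)).add
          ((((hasDerivAt_id X).const_mul k)).mul_const V)).add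
          ((hasDerivAt_pow 2 X).const_mul (g t))
        simp at this
        exact this
      exact h1.mul_const _
    rw [hDt.deriv, hDV.deriv, hDX.deriv]
    have hEeq : (w*X^2) * Real.exp (-(g t)/g tb)
          + (V^2+k*X*V+g t*X^2)*(Real.exp (-(g t)/g tb) * (-w/(g tb)))
          + ((2*V + k*X) * Real.exp (-(g t)/g tb)) * (-β * V - g t * X)
          + ((k*V + g t*(2*X)) * Real.exp (-(g t)/g tb)) * V
        = Real.exp (-(g t)/g tb) *
          ((k - 2*β - w/(g tb))*V^2 + (-(k*β) - k*(w/(g tb)))*(X*V)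
            + ((w/(g tb))*(g tb) - (w/(g tb))*(g t) - k*(g t))*X^2) := by
      field_simp
      ring
    rw [hEeq]
    have hpA : β + w/(g tb) ≤ A := by
      rw [hAdef]
      have : w/(g tb) ≤ M/(g tb) := div_le_div_of_nonneg_right hwM hgtbpos.le
      linarith
    have hbr := bracket_le β k (g tb) (g t) (w/(g tb)) V X hβ hkpos hgtbpos hgg
      (div_nonneg hw0 hgtbpos.le) hpA hkc
    have hc2 : -β*V^2 - (k*(g tb)/2)*X^2 ≤ -c*(V^2+X^2) := by
      have h1 := mul_le_mul_of_nonneg_right (min_le_left β (k*(g tb)/2)) (sq_nonneg V)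
      have h2 := mul_le_mul_of_nonneg_right (min_le_right β (k*(g tb)/2)) (sq_nonneg X)
      rw [hcdef]
      ring_nf
      ring_nf at h1 h2
      linarith
    have hbr2 : (k - 2*β - w/(g tb))*V^2 + (-(k*β) - k*(w/(g tb)))*(X*V)
        + ((w/(g tb))*(g tb) - (w/(g tb))*(g t) - k*(g t))*X^2 ≤ -(c*(V^2+X^2)) := by
      have := hbr.trans hc2
      linarith
    have hcS : 0 ≤ c*(V^2+X^2) := mul_nonneg hcpos.le hS0
    calc Real.exp (-(g t)/g tb) * ((k - 2*β - w/(g tb))*V^2 + (-(k*β) - k*(w/(g tb)))*(X*V)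
            + ((w/(g tb))*(g tb) - (w/(g tb))*(g t) - k*(g t))*X^2)
        ≤ Real.exp (-(g t)/g tb) * (-(c*(V^2+X^2))) :=
          mul_le_mul_of_nonneg_left hbr2 hEpos.le
      _ ≤ -(c*E0) * (V^2+X^2) := by
          have h := mul_le_mul_of_nonneg_right hE0le hcS
          have e1 : Real.exp (-(g t)/g tb) * (-(c*(V^2+X^2)))
              = -(Real.exp (-(g t)/g tb)*(c*(V^2+X^2))) := by ring
          have e2 : -(c*E0)*(V^2+X^2) = -(E0*(c*(V^2+X^2))) := by ring
          rw [e1, e2]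
          exact neg_le_neg h
end

section
/- Let β, γ, ξ, η, D, R > 0, N ∈ ℕ with N ≥ 1, define C̄(z) = γξR² e^{-R²/(4zD) - ηz}/(8z²D²) for z > 0 and g(t) = N ∫₀^t C̄(z) dz. Fix t̄ > 0. Then there exist constants K ≥ 1 and λ > 0 such that every solution (V, X) : [t̄, ∞) → ℝ² of the system V̇(t) = -βV(t) - g(t)X(t), Ẋ(t) = V(t) satisfies ‖(V(t), X(t))‖ ≤ K·‖(V(t̄), X(t̄))‖·e^{-λ(t - t̄)} for all t ≥ t̄. In particular the equilibrium (V, X) = (0, 0) is globally uniformly asymptotically stable with exponential rate of convergence. -/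
set_option maxHeartbeats 2000000

open MeasureTheory Set Filter


private lemma gronwall_aux {u u' : ℝ → ℝ} {a c : ℝ}
    (hu : ∀ t ≥ a, HasDerivAt u (u' t) t)
    (hle : ∀ t ≥ a, u' t + c * u t ≤ 0) :
    ∀ t ≥ a, u t ≤ u a * Real.exp (-c * (t - a)) := by
  intro t ht
  set h : ℝ → ℝ := fun s => u s * Real.exp (c * (s - a)) with hh
  have hdh : ∀ s ≥ a, HasDerivAt h ((u' s + c * u s) * Real.exp (c * (s - a))) s := by
    intro s hs
    have h1 : HasDerivAt (fun y : ℝ => c * (y - a)) c s := by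
      simpa using ((hasDerivAt_id s).sub_const a).const_mul c
    have h2 := h1.exp
    have h3 := (hu s hs).mul h2
    refine h3.congr_deriv ?_
    ring
  have hanti : AntitoneOn h (Ici a) := by
    apply antitoneOn_of_deriv_nonpos (convex_Ici a)
    · intro s hs; exact ((hdh s hs).continuousAt).continuousWithinAt
    · intro s hs
      rw [interior_Ici] at hs
      exact ((hdh s (le_of_lt hs)).differentiableAt).differentiableWithinAt
    · intro s hs
      rw [interior_Ici] at hs
      rw [(hdh s (le_of_lt hs)).deriv]
      exact mul_nonpos_of_nonpos_of_nonneg (hle s (le_of_lt hs)) (Real.exp_nonneg _)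
  have hta := hanti self_mem_Ici (mem_Ici.2 ht) ht
  have hha : h a = u a := by simp [hh]
  rw [hha] at hta
  have key : u t = u t * Real.exp (c * (t - a)) * Real.exp (-c * (t - a)) := by
    rw [mul_assoc, ← Real.exp_add]
    simp
  rw [key]
  exact mul_le_mul_of_nonneg_right hta (Real.exp_nonneg _)

private lemma exp_neg_le_aux {a : ℝ} (ha : 0 < a) : Real.exp (-a) ≤ 4 / a ^ 2 := by
  have h1 : a / 2 + 1 ≤ Real.exp (a / 2) := Real.add_one_le_exp _
  have h2 : Real.exp (a / 2) * Real.exp (a / 2) = Real.exp a := by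
    rw [← Real.exp_add]; ring_nf
  have h3 : a ^ 2 / 4 ≤ Real.exp a := by nlinarith
  have h4 : (0 : ℝ) < a ^ 2 / 4 := by positivity
  rw [Real.exp_neg]
  calc (Real.exp a)⁻¹ ≤ (a ^ 2 / 4)⁻¹ := by
        apply inv_anti₀ h4 h3
    _ = 4 / a ^ 2 := by rw [inv_div]

/-- **Exponential stability (Theorem 5.2)** for the linearized planar system
`V̇ = -βV - g(t)X`, `Ẋ = V` governing the deviations from the centre of mass in the
linearized alignment–chemotaxis model: every solution decays exponentially to the
equilibrium `(0,0)`, uniformly from any initial time `t̄ > 0`. -/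
theorem exponential_stability
    (β γ ξ η D R : ℝ) (hβ : 0 < β) (hγ : 0 < γ) (hξ : 0 < ξ) (hη : 0 < η)
    (hD : 0 < D) (hR : 0 < R) (N : ℕ) (hN : 1 ≤ N)
    (Cb : ℝ → ℝ)
    (hCb : ∀ z > 0, Cb z =
      γ * ξ * R ^ 2 * Real.exp (-R ^ 2 / (4 * z * D) - η * z) / (8 * z ^ 2 * D ^ 2))
    (g : ℝ → ℝ) (hg : ∀ t, g t = (N : ℝ) * ∫ z in (0 : ℝ)..t, Cb z)
    (tb : ℝ) (htb : 0 < tb) :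
    ∃ K : ℝ, 1 ≤ K ∧ ∃ lam > (0 : ℝ),
      ∀ V X : ℝ → ℝ,
        (∀ t ≥ tb, HasDerivAt V (-β * V t - g t * X t) t) →
        (∀ t ≥ tb, HasDerivAt X (V t) t) →
        ∀ t ≥ tb,
          Real.sqrt ((V t) ^ 2 + (X t) ^ 2) ≤
            K * Real.sqrt ((V tb) ^ 2 + (X tb) ^ 2) * Real.exp (-lam * (t - tb)) := by
  set f : ℝ → ℝ := fun z => γ * ξ * R ^ 2 * Real.exp (-R ^ 2 / (4 * z * D) - η * z) / (8 * z ^ 2 * D ^ 2) with hf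
  clear_value f
  have hfeq : ∀ z ∈ Ioi (0:ℝ), Cb z = f z := by
    intro z hz; simp only [hf]; exact hCb z hz
  have hfpos : ∀ z ∈ Ioi (0:ℝ), 0 < f z := by
    intro z hz
    simp only [hf]
    have hz0 : (0:ℝ) < z := hz
    have hden : (0:ℝ) < 8 * z ^ 2 * D ^ 2 := by positivity
    have hnum : (0:ℝ) < γ * ξ * R ^ 2 * Real.exp (-R ^ 2 / (4 * z * D) - η * z) := by positivity
    exact div_pos hnum hden

  have hfbound : ∀ z ∈ Ioi (0:ℝ), f z ≤ 8 * γ * ξ / R ^ 2 * Real.exp (-(η * z)) := by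
    intro z hz
    have hz0 : (0:ℝ) < z := hz
    have ha : (0:ℝ) < R ^ 2 / (4 * z * D) := by positivity
    have hexp : Real.exp (-(R ^ 2 / (4 * z * D))) ≤ 4 / (R ^ 2 / (4 * z * D)) ^ 2 := by
      have h1 : (R ^ 2 / (4 * z * D)) / 2 + 1 ≤ Real.exp ((R ^ 2 / (4 * z * D)) / 2) := Real.add_one_le_exp _
      have h2 : Real.exp ((R ^ 2 / (4 * z * D)) / 2) * Real.exp ((R ^ 2 / (4 * z * D)) / 2)
          = Real.exp (R ^ 2 / (4 * z * D)) := by rw [← Real.exp_add]; ring_nf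
      have h3 : (R ^ 2 / (4 * z * D)) ^ 2 / 4 ≤ Real.exp (R ^ 2 / (4 * z * D)) := by nlinarith
      have h4 : (0 : ℝ) < (R ^ 2 / (4 * z * D)) ^ 2 / 4 := by positivity
      rw [Real.exp_neg]
      calc (Real.exp (R ^ 2 / (4 * z * D)))⁻¹ ≤ ((R ^ 2 / (4 * z * D)) ^ 2 / 4)⁻¹ :=
            inv_anti₀ h4 h3
        _ = 4 / (R ^ 2 / (4 * z * D)) ^ 2 := by rw [inv_div]
    have h4eq : 4 / (R ^ 2 / (4 * z * D)) ^ 2 = 64 * z ^ 2 * D ^ 2 / R ^ 4 := by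
      field_simp
      ring
    rw [h4eq] at hexp
    have hsplit : Real.exp (-R ^ 2 / (4 * z * D) - η * z)
        = Real.exp (-(R ^ 2 / (4 * z * D))) * Real.exp (-(η * z)) := by
      rw [← Real.exp_add]
      congr 1
      ring
    have hden : (0:ℝ) < 8 * z ^ 2 * D ^ 2 := by positivity
    simp only [hf]
    rw [hsplit, div_le_iff₀ hden]
    have hE2 : (0:ℝ) < Real.exp (-(η * z)) := Real.exp_pos _
    have step : γ * ξ * R ^ 2 * (Real.exp (-(R ^ 2 / (4 * z * D))) * Real.exp (-(η * z)))
        ≤ γ * ξ * R ^ 2 * ((64 * z ^ 2 * D ^ 2 / R ^ 4) * Real.exp (-(η * z))) := by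
      have hc : (0:ℝ) ≤ γ * ξ * R ^ 2 := by positivity
      apply mul_le_mul_of_nonneg_left _ hc
      exact mul_le_mul_of_nonneg_right hexp hE2.le
    calc γ * ξ * R ^ 2 * (Real.exp (-(R ^ 2 / (4 * z * D))) * Real.exp (-(η * z)))
        ≤ γ * ξ * R ^ 2 * ((64 * z ^ 2 * D ^ 2 / R ^ 4) * Real.exp (-(η * z))) := step
      _ = 8 * γ * ξ / R ^ 2 * Real.exp (-(η * z)) * (8 * z ^ 2 * D ^ 2) := by
          field_simp
          ring
  -- continuity and measurability
  have hfcont : ContinuousOn f (Ioi (0:ℝ)) := by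
    simp only [hf]
    apply ContinuousOn.div
    · apply ContinuousOn.mul continuousOn_const
      apply Real.continuous_exp.comp_continuousOn
      apply ContinuousOn.sub
      · apply ContinuousOn.div continuousOn_const
        · fun_prop
        · intro z hz
          have hz0 : (0:ℝ) < z := hz
          positivity
      · fun_prop
    · fun_prop
    · intro z hz
      have hz0 : (0:ℝ) < z := hz
      positivity
  have hCbcont : ContinuousOn Cb (Ioi (0:ℝ)) := hfcont.congr fun z hz => hfeq z hz
  have hfmeas : Measurable f := by
    simp only [hf]
    apply Measurable.div
    · apply Measurable.mul measurable_const
      apply Real.measurable_exp.comp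
      apply Measurable.sub
      · exact measurable_const.div (by fun_prop)
      · fun_prop
    · fun_prop
  have hint : ∀ t > (0:ℝ), IntervalIntegrable Cb volume 0 t := by
    intro t ht
    rw [intervalIntegrable_iff_integrableOn_Ioc_of_le ht.le]
    have hIf : IntegrableOn f (Ioc (0:ℝ) t) volume := by
      apply Measure.integrableOn_of_bounded (M := 8 * γ * ξ / R ^ 2)
        measure_Ioc_lt_top.ne hfmeas.aestronglyMeasurable
      rw [ae_restrict_iff' measurableSet_Ioc]
      apply Filter.Eventually.of_forall
      intro z hz
      have hz0 : (0:ℝ) < z := hz.1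
      rw [Real.norm_eq_abs, abs_of_nonneg (hfpos z hz0).le]
      calc f z ≤ 8 * γ * ξ / R ^ 2 * Real.exp (-(η * z)) := hfbound z hz0
        _ ≤ 8 * γ * ξ / R ^ 2 * 1 := by
            apply mul_le_mul_of_nonneg_left _ (by positivity)
            exact Real.exp_le_one_iff.2 (by nlinarith)
        _ = 8 * γ * ξ / R ^ 2 := mul_one _
    exact hIf.congr_fun (fun z hz => (hfeq z hz.1).symm) measurableSet_Ioc
  have hgderiv : ∀ t > (0:ℝ), HasDerivAt g ((N:ℝ) * Cb t) t := by
    intro t ht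
    have hsm : StronglyMeasurableAtFilter Cb (nhds t) volume :=
      hCbcont.stronglyMeasurableAtFilter isOpen_Ioi t ht
    have hct : ContinuousAt Cb t := by
      have h1 : ContinuousAt f t := hfcont.continuousAt (Ioi_mem_nhds ht)
      apply h1.congr
      filter_upwards [Ioi_mem_nhds ht] with z hz
      exact (hfeq z hz).symm
    have hd := intervalIntegral.integral_hasDerivAt_right (hint t ht) hsm hct
    have hgfun : g = fun s => (N:ℝ) * ∫ z in (0:ℝ)..s, Cb z := funext hg
    rw [hgfun]
    exact hd.const_mul _
  have hCbnn : ∀ z > (0:ℝ), 0 ≤ Cb z := fun z hz => by rw [hfeq z hz]; exact (hfpos z hz).le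
  -- g is nondecreasing on [tb, ∞) and positive at tb
  have hg0pos : 0 < g tb := by
    rw [hg tb]
    have hI : 0 < ∫ z in (0:ℝ)..tb, Cb z := by
      apply intervalIntegral.intervalIntegral_pos_of_pos_on (hint tb htb) _ htb
      intro z hz
      rw [hfeq z hz.1]
      exact hfpos z hz.1
    have hN1 : (1:ℝ) ≤ (N:ℝ) := by exact_mod_cast hN
    nlinarith
  have hmono : ∀ t ≥ tb, g tb ≤ g t := by
    intro t ht
    have ht0 : (0:ℝ) < t := lt_of_lt_of_le htb ht
    have hsub : g t - g tb = (N:ℝ) * ∫ z in tb..t, Cb z := by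
      rw [hg t, hg tb, ← mul_sub,
        intervalIntegral.integral_interval_sub_left (hint t ht0) (hint tb htb)]
    have hnn : 0 ≤ ∫ z in tb..t, Cb z := by
      apply intervalIntegral.integral_nonneg ht
      intro u hu
      exact hCbnn u (lt_of_lt_of_le htb hu.1)
    nlinarith [Nat.cast_nonneg (α := ℝ) N]
  -- upper bound for g
  have hexpint : ∀ t > (0:ℝ), ∫ z in (0:ℝ)..t, Real.exp (-(η*z)) = (1 - Real.exp (-(η*t))) / η := by
    intro t ht
    have hF : ∀ z : ℝ, HasDerivAt (fun y => -(1/η) * Real.exp (-(η*y))) (Real.exp (-(η*z))) z := by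
      intro z
      have h1 : HasDerivAt (fun y : ℝ => -(η*y)) (-η) z := by
        simpa using ((hasDerivAt_id z).const_mul (-η))
      have h2 := (h1.exp).const_mul (-(1/η))
      refine h2.congr_deriv ?_
      field_simp
    rw [intervalIntegral.integral_eq_sub_of_hasDerivAt (fun z _ => hF z)
      (Continuous.intervalIntegrable (by fun_prop) 0 t)]
    simp
    field_simp
    ring
  have hub : ∀ t ≥ tb, g t ≤ (N:ℝ) * (8 * γ * ξ / R ^ 2) / η := by
    intro t ht
    have ht0 : (0:ℝ) < t := lt_of_lt_of_le htb ht
    rw [hg t]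
    have h1 : ∫ z in (0:ℝ)..t, Cb z ≤ ∫ z in (0:ℝ)..t, 8 * γ * ξ / R ^ 2 * Real.exp (-(η*z)) := by
      rw [intervalIntegral.integral_of_le ht0.le, intervalIntegral.integral_of_le ht0.le]
      apply setIntegral_mono_on
      · rw [← intervalIntegrable_iff_integrableOn_Ioc_of_le ht0.le]
        exact hint t ht0
      · rw [← intervalIntegrable_iff_integrableOn_Ioc_of_le ht0.le]
        exact Continuous.intervalIntegrable (by fun_prop) 0 t
      · exact measurableSet_Ioc
      · intro z hz
        rw [hfeq z hz.1]
        exact hfbound z hz.1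
    have h2 : ∫ z in (0:ℝ)..t, 8 * γ * ξ / R ^ 2 * Real.exp (-(η*z))
        = 8 * γ * ξ / R ^ 2 * ((1 - Real.exp (-(η*t))) / η) := by
      rw [intervalIntegral.integral_const_mul, hexpint t ht0]
    have h3 : (1 - Real.exp (-(η*t))) / η ≤ 1 / η := by
      gcongr
      nlinarith [Real.exp_pos (-(η*t))]
    have hNnn : (0:ℝ) ≤ (N:ℝ) := Nat.cast_nonneg N
    calc (N:ℝ) * ∫ z in (0:ℝ)..t, Cb z
        ≤ (N:ℝ) * (8 * γ * ξ / R ^ 2 * ((1 - Real.exp (-(η*t))) / η)) := by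
          rw [← h2]; exact mul_le_mul_of_nonneg_left h1 hNnn
      _ ≤ (N:ℝ) * (8 * γ * ξ / R ^ 2 * (1 / η)) := by
          apply mul_le_mul_of_nonneg_left _ hNnn
          exact mul_le_mul_of_nonneg_left h3 (by positivity)
      _ = (N:ℝ) * (8 * γ * ξ / R ^ 2) / η := by ring
  -- constants
  set Gb := (N:ℝ) * (8 * γ * ξ / R ^ 2) / η with hGbdef
  set g₀ := g tb with hg₀def
  have hg₀pos : 0 < g₀ := hg0pos
  have hGbnn : 0 ≤ Gb := le_trans hg₀pos.le (hub tb le_rfl)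
  set k := min (min (β/2) g₀) (min (2*g₀/β) 1) with hkdef
  have hk0 : 0 < k :=
    lt_min (lt_min (by positivity) hg₀pos) (lt_min (by positivity) one_pos)
  have hk1 : k ≤ β/2 := le_trans (min_le_left _ _) (min_le_left _ _)
  have hk2 : k ≤ g₀ := le_trans (min_le_left _ _) (min_le_right _ _)
  have hk3 : k * β ≤ 2*g₀ := by
    have h := le_trans (min_le_right (min (β/2) g₀) _) (min_le_left (2*g₀/β) 1)
    calc k * β ≤ (2*g₀/β) * β := mul_le_mul_of_nonneg_right h hβ.le
      _ = 2*g₀ := by field_simp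
  have hk4 : k ≤ 1 := le_trans (min_le_right _ _) (min_le_right _ _)
  set m := min (1/2 : ℝ) (g₀/2) with hmdef
  have hm0 : 0 < m := lt_min (by norm_num) (by positivity)
  have hm1 : m ≤ 1/2 := min_le_left _ _
  have hm2 : m ≤ g₀/2 := min_le_right _ _
  set M := 1 + Gb + k with hMdef
  have hMpos : 0 < M := by positivity
  set c := min (β/2) (k*g₀/2) with hcdef
  have hc0 : 0 < c := lt_min (by positivity) (by positivity)
  have hc1 : c ≤ β/2 := min_le_left _ _
  have hc2 : c ≤ k*g₀/2 := min_le_right _ _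
  set lam2 := c / M with hlam2def
  have hlam2 : 0 < lam2 := div_pos hc0 hMpos
  have hlam2M : lam2 * M = c := div_mul_cancel₀ _ (ne_of_gt hMpos)
  clear_value Gb g₀ k m M c lam2
  -- quadratic form estimates
  have hUlb : ∀ v x gt : ℝ, g₀ ≤ gt → m * (v^2 + x^2) ≤ v^2 + k*(x*v) + gt*x^2 := by
    intro v x gt hgt
    have hkk : (0:ℝ) ≤ g₀ - k^2 := by nlinarith
    nlinarith [sq_nonneg (v + k*x), mul_nonneg hkk (sq_nonneg x),
      mul_nonneg (show (0:ℝ) ≤ gt - g₀ by linarith) (sq_nonneg x),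
      mul_nonneg (show (0:ℝ) ≤ 1/2 - m by linarith) (sq_nonneg v),
      mul_nonneg (show (0:ℝ) ≤ g₀/2 - m by linarith) (sq_nonneg x)]
  have hUub : ∀ v x gt : ℝ, 0 ≤ gt → gt ≤ Gb → v^2 + k*(x*v) + gt*x^2 ≤ M*(v^2+x^2) := by
    intro v x gt h1 h2
    nlinarith [mul_nonneg hk0.le (sq_nonneg (v - x)), mul_nonneg hk0.le (sq_nonneg (v + x)),
      mul_nonneg (show (0:ℝ) ≤ Gb - gt by linarith) (sq_nonneg x),
      mul_nonneg hGbnn (sq_nonneg v), sq_nonneg v, sq_nonneg x]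
  have hbracket : ∀ v x gt gp u : ℝ, g₀ ≤ gt → gt ≤ Gb → 0 ≤ gp →
      u = v^2 + k*(x*v) + gt*x^2 →
      (k - 2*β)*v^2 - k*β*(x*v) + (gp - k*gt)*x^2 - 2/g₀*gp*u + lam2*u ≤ 0 := by
    intro v x gt gp u hgt hgtub hgp hu
    have hkk : (0:ℝ) ≤ g₀ - k^2 := by nlinarith
    have h2u : g₀*x^2 ≤ 2*u := by
      rw [hu]
      nlinarith [sq_nonneg (v + k*x), mul_nonneg hkk (sq_nonneg x),
        mul_nonneg (show (0:ℝ) ≤ gt - g₀ by linarith) (sq_nonneg x), sq_nonneg v]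
    have ha : gp*x^2 ≤ 2/g₀*gp*u := by
      rw [div_mul_eq_mul_div, div_mul_eq_mul_div, le_div_iff₀ hg₀pos]
      nlinarith [mul_le_mul_of_nonneg_left h2u hgp]
    have hb1 : u ≤ M*(v^2+x^2) := by
      rw [hu]; exact hUub v x gt (le_trans hg₀pos.le hgt) hgtub
    have hb2 : lam2*u ≤ c*(v^2+x^2) := by
      calc lam2*u ≤ lam2*(M*(v^2+x^2)) := mul_le_mul_of_nonneg_left hb1 hlam2.le
        _ = c*(v^2+x^2) := by rw [← mul_assoc, hlam2M]
    have hc3 : (k - 2*β)*v^2 - k*β*(x*v) - k*gt*x^2 + c*(v^2+x^2) ≤ 0 := by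
      nlinarith [mul_nonneg hβ.le (sq_nonneg (v + k/2*x)),
        mul_nonneg (show (0:ℝ) ≤ β - k - c by linarith) (sq_nonneg v),
        mul_nonneg (show (0:ℝ) ≤ k*gt - c - k^2*β/4 by
          nlinarith [mul_le_mul_of_nonneg_left hgt hk0.le,
            mul_le_mul_of_nonneg_left hk3 hk0.le]) (sq_nonneg x)]
    linarith [ha, hb2, hc3]
  -- choose the constants
  refine ⟨max 1 (Real.sqrt (M * Real.exp (2*Gb/g₀) / m)), le_max_left _ _,
    lam2/2, half_pos hlam2, ?_⟩
  intro V X hV hX t ht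
  set U : ℝ → ℝ := fun s => (V s)^2 + k*(X s * V s) + g s * (X s)^2 with hUdef
  set φ : ℝ → ℝ := fun s => Real.exp (-(2/g₀) * g s) with hφdef
  set W : ℝ → ℝ := fun s => U s * φ s with hWdef
  set W' : ℝ → ℝ := fun s =>
    ((k - 2*β)*(V s)^2 - k*β*(X s * V s) + ((N:ℝ)*Cb s - k*(g s))*(X s)^2
      - 2/g₀*((N:ℝ)*Cb s)*(U s)) * φ s with hW'def
  clear_value U φ W W'
  have hWd : ∀ s ≥ tb, HasDerivAt W (W' s) s := by
    intro s hs
    have hs0 : (0:ℝ) < s := lt_of_lt_of_le htb hs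
    have hVd := hV s hs
    have hXd := hX s hs
    have hgd := hgderiv s hs0
    have hUd : HasDerivAt U
        (2*V s*(-β*V s - g s*X s) + k*(V s*V s + X s*(-β*V s - g s*X s))
          + ((N:ℝ)*Cb s*(X s)^2 + g s*(2*X s*V s))) s := by
      have h1 := hVd.pow 2
      have h2 := (hXd.mul hVd).const_mul k
      have h3 := hgd.mul (hXd.pow 2)
      have h4 := (h1.add h2).add h3
      simp only [hUdef]
      refine h4.congr_deriv ?_
      push_cast [Pi.pow_apply]
      ring
    have hφd : HasDerivAt φ (Real.exp (-(2/g₀) * g s) * (-(2/g₀)*((N:ℝ)*Cb s))) s := by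
      simp only [hφdef]
      exact (hgd.const_mul (-(2/g₀))).exp
    have h6 := hUd.mul hφd
    simp only [hWdef, hW'def]
    refine h6.congr_deriv ?_
    simp only [hφdef]
    ring
  have hkey : ∀ s ≥ tb, W' s + lam2 * W s ≤ 0 := by
    intro s hs
    have hs0 : (0:ℝ) < s := lt_of_lt_of_le htb hs
    have hbr := hbracket (V s) (X s) (g s) ((N:ℝ)*Cb s) (U s) (hmono s hs) (hub s hs)
        (mul_nonneg (Nat.cast_nonneg N) (hCbnn s hs0)) (by simp only [hUdef])
    have heq : W' s + lam2 * W s = ((k - 2*β)*(V s)^2 - k*β*(X s * V s)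
        + ((N:ℝ)*Cb s - k*(g s))*(X s)^2 - 2/g₀*((N:ℝ)*Cb s)*(U s) + lam2*(U s)) * φ s := by
      simp only [hW'def, hWdef]
      ring
    rw [heq]
    have hφnn : 0 ≤ φ s := by simp only [hφdef]; positivity
    exact mul_nonpos_of_nonpos_of_nonneg hbr hφnn
  have hgron := gronwall_aux hWd hkey t ht
  -- lower bound for W t
  have hUt_lb : m*((V t)^2 + (X t)^2) ≤ U t := by
    simp only [hUdef]; exact hUlb (V t) (X t) (g t) (hmono t ht)
  have hφt_lb : Real.exp (-(2*Gb/g₀)) ≤ φ t := by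
    simp only [hφdef]
    apply Real.exp_le_exp.2
    have h1 := hub t ht
    have h2 : (0:ℝ) < 2/g₀ := by positivity
    calc -(2*Gb/g₀) = -(2/g₀ * Gb) := by ring
      _ ≤ -(2/g₀ * g t) := by nlinarith
      _ = -(2/g₀) * g t := by ring
  have hWt_lb : m*((V t)^2 + (X t)^2) * Real.exp (-(2*Gb/g₀)) ≤ W t := by
    have hUnn : 0 ≤ U t := le_trans (by positivity) hUt_lb
    calc m*((V t)^2 + (X t)^2) * Real.exp (-(2*Gb/g₀))
        ≤ U t * φ t := mul_le_mul hUt_lb hφt_lb (Real.exp_nonneg _) hUnn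
      _ = W t := by simp only [hWdef]
  -- upper bound for W tb
  have hWtb_ub : W tb ≤ M*((V tb)^2 + (X tb)^2) := by
    have hgtb0 : 0 < g tb := hg₀def ▸ hg₀pos
    have h1 : U tb ≤ M*((V tb)^2 + (X tb)^2) := by
      simp only [hUdef]
      exact hUub (V tb) (X tb) (g tb) hgtb0.le (hub tb le_rfl)
    have h2 : φ tb ≤ 1 := by
      simp only [hφdef]
      apply Real.exp_le_one_iff.2
      have h2' : (0:ℝ) ≤ 2/g₀ * g tb := mul_nonneg (by positivity) hgtb0.le
      linarith
    have hUtbnn : 0 ≤ U tb := by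
      refine le_trans (by positivity : (0:ℝ) ≤ m*((V tb)^2 + (X tb)^2)) ?_
      simp only [hUdef]
      exact hUlb (V tb) (X tb) (g tb) hg₀def.le
    calc W tb = U tb * φ tb := by simp only [hWdef]
      _ ≤ U tb * 1 := mul_le_mul_of_nonneg_left h2 hUtbnn
      _ = U tb := mul_one _
      _ ≤ M*((V tb)^2 + (X tb)^2) := h1
  have hchain : m*((V t)^2 + (X t)^2) * Real.exp (-(2*Gb/g₀))
      ≤ M*((V tb)^2 + (X tb)^2) * Real.exp (-lam2*(t-tb)) :=
    calc m*((V t)^2 + (X t)^2) * Real.exp (-(2*Gb/g₀)) ≤ W t := hWt_lb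
      _ ≤ W tb * Real.exp (-lam2*(t-tb)) := hgron
      _ ≤ M*((V tb)^2 + (X tb)^2) * Real.exp (-lam2*(t-tb)) :=
          mul_le_mul_of_nonneg_right hWtb_ub (Real.exp_nonneg _)
  -- deduce the bound on the squared norm
  have he : Real.exp (2*Gb/g₀) * Real.exp (-(2*Gb/g₀)) = 1 := by
    rw [← Real.exp_add]; simp
  have hSt : (V t)^2 + (X t)^2
      ≤ M * Real.exp (2*Gb/g₀) / m * ((V tb)^2 + (X tb)^2) * Real.exp (-lam2*(t-tb)) := by
    have hpos : (0:ℝ) ≤ 1/m * Real.exp (2*Gb/g₀) := by positivity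
    have h7 := mul_le_mul_of_nonneg_left hchain hpos
    have heq1 : 1/m * Real.exp (2*Gb/g₀) * (m*((V t)^2 + (X t)^2) * Real.exp (-(2*Gb/g₀)))
        = ((V t)^2 + (X t)^2) * (Real.exp (2*Gb/g₀) * Real.exp (-(2*Gb/g₀))) * (m/m) := by
      ring
    have heq2 : 1/m * Real.exp (2*Gb/g₀) * (M*((V tb)^2 + (X tb)^2) * Real.exp (-lam2*(t-tb)))
        = M * Real.exp (2*Gb/g₀) / m * ((V tb)^2 + (X tb)^2) * Real.exp (-lam2*(t-tb)) := by
      ring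
    rw [heq1, heq2, he, div_self (ne_of_gt hm0), mul_one, mul_one] at h7
    exact h7
  -- final square-root manipulation
  set K := max 1 (Real.sqrt (M * Real.exp (2*Gb/g₀) / m)) with hKdef
  have hKnn : (0:ℝ) ≤ K := le_trans zero_le_one (le_max_left _ _)
  have h8 : Real.sqrt (M * Real.exp (2*Gb/g₀) / m) ≤ K := le_max_right _ _
  clear_value K
  have hS0nn : (0:ℝ) ≤ (V tb)^2 + (X tb)^2 := by positivity
  have hK2 : M * Real.exp (2*Gb/g₀) / m ≤ K^2 := by
    have h9 := Real.sq_sqrt (show (0:ℝ) ≤ M * Real.exp (2*Gb/g₀) / m by positivity)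
    calc M * Real.exp (2*Gb/g₀) / m = (Real.sqrt (M * Real.exp (2*Gb/g₀) / m))^2 := h9.symm
      _ ≤ K^2 := pow_le_pow_left₀ (Real.sqrt_nonneg _) h8 2
  have hexp2 : (Real.exp (-(lam2/2)*(t-tb)))^2 = Real.exp (-lam2*(t-tb)) := by
    rw [sq, ← Real.exp_add]
    congr 1
    ring
  have hRHSnn : (0:ℝ) ≤ K * Real.sqrt ((V tb)^2 + (X tb)^2) * Real.exp (-(lam2/2)*(t-tb)) :=
    mul_nonneg (mul_nonneg hKnn (Real.sqrt_nonneg _)) (Real.exp_nonneg _)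
  have hsq : (V t)^2 + (X t)^2
      ≤ (K * Real.sqrt ((V tb)^2 + (X tb)^2) * Real.exp (-(lam2/2)*(t-tb)))^2 := by
    have h10 : (K * Real.sqrt ((V tb)^2 + (X tb)^2) * Real.exp (-(lam2/2)*(t-tb)))^2
        = K^2 * (((V tb)^2 + (X tb)^2) * Real.exp (-lam2*(t-tb))) := by
      rw [mul_pow, mul_pow, Real.sq_sqrt hS0nn, hexp2]
      ring
    rw [h10]
    have h11 : M * Real.exp (2*Gb/g₀) / m * (((V tb)^2 + (X tb)^2) * Real.exp (-lam2*(t-tb)))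
        ≤ K^2 * (((V tb)^2 + (X tb)^2) * Real.exp (-lam2*(t-tb))) :=
      mul_le_mul_of_nonneg_right hK2 (mul_nonneg hS0nn (Real.exp_nonneg _))
    calc (V t)^2 + (X t)^2
        ≤ M * Real.exp (2*Gb/g₀) / m * ((V tb)^2 + (X tb)^2) * Real.exp (-lam2*(t-tb)) := hSt
      _ = M * Real.exp (2*Gb/g₀) / m * (((V tb)^2 + (X tb)^2) * Real.exp (-lam2*(t-tb))) := by
          ring
      _ ≤ K^2 * (((V tb)^2 + (X tb)^2) * Real.exp (-lam2*(t-tb))) := h11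
  calc Real.sqrt ((V t)^2 + (X t)^2)
      ≤ Real.sqrt ((K * Real.sqrt ((V tb)^2 + (X tb)^2) * Real.exp (-(lam2/2)*(t-tb)))^2) :=
        Real.sqrt_le_sqrt hsq
    _ = K * Real.sqrt ((V tb)^2 + (X tb)^2) * Real.exp (-(lam2/2)*(t-tb)) :=
        Real.sqrt_sq hRHSnn
end

section
/- Let γ, ξ, η, D, R > 0, N ∈ ℕ with N ≥ 1, and define C̄(z) = γξR² e^{-R²/(4zD) - ηz}/(8z²D²) for z > 0 (so that 0 < N·C̄(z) ≤ ν for some constant ν > 0). Consider the scalar integro-differential equation V'(t) = -N ∫₀^t C̄(t-τ) (∫_τ^t V(s) ds) dτ for C¹ functions V : [0,∞) → ℝ. If V₁ and V₂ are two solutions of this equation on [0,∞) with V₁(0) = V₂(0), then V₁(t) = V₂(t) for all t ≥ 0. In particular, the only solution with zero initial datum is the identically zero solution. -/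
open MeasureTheory Set

/-- **Uniqueness (Theorem 5.3)** for the centre-of-mass equation
`V'(t) = -N ∫₀ᵗ C̄(t-τ) (∫_τ^t V(s) ds) dτ` of the linearized alignment–chemotaxis
model: two C¹ solutions with the same initial datum coincide; in particular the only
solution with zero initial datum is the identically zero solution. -/
theorem center_of_mass_uniqueness
    (γ ξ η D R : ℝ) (hγ : 0 < γ) (hξ : 0 < ξ) (hη : 0 < η) (hD : 0 < D) (hR : 0 < R)
    (N : ℕ) (hN : 1 ≤ N)
    (Cb : ℝ → ℝ)
    (hCb : ∀ z > 0, Cb z =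
      γ * ξ * R ^ 2 * Real.exp (-R ^ 2 / (4 * z * D) - η * z) / (8 * z ^ 2 * D ^ 2))
    (V₁ V₂ : ℝ → ℝ)
    (hV₁ : ∀ t ≥ (0 : ℝ), HasDerivAt V₁
      (-(N : ℝ) * ∫ τ in (0 : ℝ)..t, Cb (t - τ) * ∫ s in τ..t, V₁ s) t)
    (hV₂ : ∀ t ≥ (0 : ℝ), HasDerivAt V₂
      (-(N : ℝ) * ∫ τ in (0 : ℝ)..t, Cb (t - τ) * ∫ s in τ..t, V₂ s) t)
    (h0 : V₁ 0 = V₂ 0) :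
    ∀ t ≥ (0 : ℝ), V₁ t = V₂ t := by
  -- A uniform bound for the kernel
  set ν : ℝ := 8 * γ * ξ / R ^ 2 with hνdef
  have hν : 0 < ν := by positivity
  have hCb_pos : ∀ z > 0, 0 < Cb z := by
    intro z hz; rw [hCb z hz]; positivity
  have hCb_le : ∀ z > 0, Cb z ≤ ν := by
    intro z hz
    rw [hCb z hz]
    set x : ℝ := R ^ 2 / (4 * z * D) with hxdef
    have hx : 0 < x := by positivity
    have hexp2 : x ^ 2 / 4 ≤ Real.exp x := by
      have h1 := Real.add_one_le_exp (x / 2)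
      have h2 : Real.exp (x / 2) * Real.exp (x / 2) = Real.exp x := by
        rw [← Real.exp_add]; ring_nf
      nlinarith [Real.exp_pos (x / 2)]
    have hexp : Real.exp (-R ^ 2 / (4 * z * D) - η * z) ≤ 4 / x ^ 2 := by
      have h3 : -R ^ 2 / (4 * z * D) - η * z ≤ -x := by
        rw [hxdef, neg_div]
        nlinarith [mul_pos hη hz]
      have h4 : Real.exp (-x) ≤ 4 / x ^ 2 := by
        rw [Real.exp_neg, inv_eq_one_div, div_le_div_iff₀ (Real.exp_pos x) (by positivity)]
        nlinarith [hexp2]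
      exact (Real.exp_le_exp.2 h3).trans h4
    have hexp' : Real.exp (-R ^ 2 / (4 * z * D) - η * z) * x ^ 2 ≤ 4 := by
      rw [← le_div_iff₀ (by positivity : (0:ℝ) < x ^ 2)] ; exact hexp
    have hx2 : x ^ 2 * (16 * z ^ 2 * D ^ 2) = R ^ 4 := by
      rw [hxdef]; field_simp; ring
    have hE0 : 0 < Real.exp (-R ^ 2 / (4 * z * D) - η * z) := Real.exp_pos _
    have hER4 : Real.exp (-R ^ 2 / (4 * z * D) - η * z) * R ^ 4 ≤ 64 * z ^ 2 * D ^ 2 := by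
      have hmul := mul_le_mul_of_nonneg_right hexp'
        (show (0:ℝ) ≤ 16 * z ^ 2 * D ^ 2 by positivity)
      calc Real.exp (-R ^ 2 / (4 * z * D) - η * z) * R ^ 4
          = Real.exp (-R ^ 2 / (4 * z * D) - η * z) * x ^ 2 * (16 * z ^ 2 * D ^ 2) := by
            rw [← hx2]; ring
        _ ≤ 4 * (16 * z ^ 2 * D ^ 2) := hmul
        _ = 64 * z ^ 2 * D ^ 2 := by ring
    rw [hνdef, div_le_div_iff₀ (by positivity : (0:ℝ) < 8 * z ^ 2 * D ^ 2)
      (by positivity : (0:ℝ) < R ^ 2)]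
    nlinarith [mul_le_mul_of_nonneg_left hER4 (by positivity : (0:ℝ) ≤ γ * ξ)]
  -- The difference `W` and continuity facts
  set W : ℝ → ℝ := fun s => V₁ s - V₂ s with hWdef
  have hV₁c : ContinuousOn V₁ (Ici (0:ℝ)) := fun s hs =>
    ((hV₁ s hs).continuousAt).continuousWithinAt
  have hV₂c : ContinuousOn V₂ (Ici (0:ℝ)) := fun s hs =>
    ((hV₂ s hs).continuousAt).continuousWithinAt
  have hWc : ContinuousOn W (Ici (0:ℝ)) := hV₁c.sub hV₂c
  have hW0 : W 0 = 0 := by simp [hWdef, h0]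
  have hsub : ∀ a b : ℝ, 0 ≤ a → 0 ≤ b → uIcc a b ⊆ Ici (0:ℝ) := by
    intro a b ha hb x hx
    exact le_trans (le_min ha hb) hx.1
  have hV₁int : ∀ a b : ℝ, 0 ≤ a → 0 ≤ b → IntervalIntegrable V₁ volume a b :=
    fun a b ha hb => (hV₁c.mono (hsub a b ha hb)).intervalIntegrable
  have hV₂int : ∀ a b : ℝ, 0 ≤ a → 0 ≤ b → IntervalIntegrable V₂ volume a b :=
    fun a b ha hb => (hV₂c.mono (hsub a b ha hb)).intervalIntegrable
  have hWint : ∀ a b : ℝ, 0 ≤ a → 0 ≤ b → IntervalIntegrable W volume a b :=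
    fun a b ha hb => (hWc.mono (hsub a b ha hb)).intervalIntegrable
  have habsWc : ContinuousOn (fun s => |W s|) (Ici (0:ℝ)) := hWc.abs
  have habsint : ∀ a b : ℝ, 0 ≤ a → 0 ≤ b →
      IntervalIntegrable (fun s => |W s|) volume a b :=
    fun a b ha hb => (habsWc.mono (hsub a b ha hb)).intervalIntegrable
  -- measurable version of the kernel
  set F : ℝ → ℝ := fun z =>
    γ * ξ * R ^ 2 * Real.exp (-R ^ 2 / (4 * z * D) - η * z) / (8 * z ^ 2 * D ^ 2) with hFdef
  have hFmeas : Measurable F := by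
    apply Measurable.div
    · exact (measurable_const.mul (Real.measurable_exp.comp
        (((measurable_const.div ((measurable_const.mul measurable_id).mul
          measurable_const)).sub (measurable_const.mul measurable_id)))))
    · exact (measurable_const.mul (measurable_id.pow_const 2)).mul measurable_const
  have hae_ne : ∀ x : ℝ, ∀ᵐ (τ : ℝ) ∂(volume.restrict (Set.uIoc (0:ℝ) x)), τ ≠ x := by
    intro x
    have h0 : ∀ᵐ (τ : ℝ) ∂volume, τ ∉ ({x} : Set ℝ) :=
      measure_eq_zero_iff_ae_notMem.mp (measure_singleton x)
    refine ae_mono Measure.restrict_le_self ?_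
    filter_upwards [h0] with τ hτ
    simpa using hτ
  have hker_aesm : ∀ x : ℝ, 0 ≤ x →
      AEStronglyMeasurable (fun τ => Cb (x - τ)) (volume.restrict (Set.uIoc (0:ℝ) x)) := by
    intro x hx
    have hmeas : AEStronglyMeasurable (fun τ => F (x - τ)) (volume.restrict (Set.uIoc (0:ℝ) x)) :=
      ((hFmeas.comp (measurable_const.sub measurable_id)).aestronglyMeasurable).restrict
    apply hmeas.congr
    have h2 : ∀ᵐ (τ : ℝ) ∂(volume.restrict (Set.uIoc (0:ℝ) x)), τ ∈ Set.uIoc (0:ℝ) x :=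
      ae_restrict_mem measurableSet_uIoc
    filter_upwards [hae_ne x, h2] with τ hτ1 hτ2
    rw [uIoc_of_le hx] at hτ2
    have hpos : 0 < x - τ := sub_pos.2 (lt_of_le_of_ne hτ2.2 hτ1)
    rw [hCb _ hpos]
  have hker_int : ∀ x : ℝ, 0 ≤ x →
      IntervalIntegrable (fun τ => Cb (x - τ)) volume 0 x := by
    intro x hx
    rw [intervalIntegrable_iff]
    refine ⟨hker_aesm x hx, ?_⟩
    apply HasFiniteIntegral.restrict_of_bounded (C := ν)
    · rw [uIoc_of_le hx]; exact measure_Ioc_lt_top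
    · have h2 : ∀ᵐ (τ : ℝ) ∂(volume.restrict (Set.uIoc (0:ℝ) x)), τ ∈ Set.uIoc (0:ℝ) x :=
        ae_restrict_mem measurableSet_uIoc
      filter_upwards [hae_ne x, h2] with τ hτ1 hτ2
      rw [uIoc_of_le hx] at hτ2
      have hpos : 0 < x - τ := sub_pos.2 (lt_of_le_of_ne hτ2.2 hτ1)
      rw [Real.norm_eq_abs, abs_of_pos (hCb_pos _ hpos)]
      exact hCb_le _ hpos
  -- continuity of inner primitives and integrability of products
  have hIcont : ∀ (v : ℝ → ℝ), ContinuousOn v (Ici (0:ℝ)) → ∀ x : ℝ, 0 ≤ x →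
      ContinuousOn (fun τ => ∫ s in τ..x, v s) (uIcc (0:ℝ) x) := by
    intro v hv x hx
    apply intervalIntegral.continuousOn_primitive_interval_left
    exact (hv.mono (hsub 0 x le_rfl hx)).integrableOn_compact isCompact_uIcc
  have hprod_int : ∀ (v : ℝ → ℝ), ContinuousOn v (Ici (0:ℝ)) → ∀ x : ℝ, 0 ≤ x →
      IntervalIntegrable (fun τ => Cb (x - τ) * ∫ s in τ..x, v s) volume 0 x :=
    fun v hv x hx => (hker_int x hx).mul_continuousOn (hIcont v hv x hx)
  -- derivative of W
  have hW' : ∀ x : ℝ, 0 ≤ x → HasDerivAt W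
      (-(N:ℝ) * ∫ τ in (0:ℝ)..x, Cb (x - τ) * ∫ s in τ..x, W s) x := by
    intro x hx
    have h := (hV₁ x hx).sub (hV₂ x hx)
    refine h.congr_deriv ?_
    have hA : (∫ τ in (0:ℝ)..x, Cb (x - τ) * ∫ s in τ..x, W s) =
        (∫ τ in (0:ℝ)..x, Cb (x - τ) * ∫ s in τ..x, V₁ s) -
        (∫ τ in (0:ℝ)..x, Cb (x - τ) * ∫ s in τ..x, V₂ s) := by
      rw [← intervalIntegral.integral_sub (hprod_int V₁ hV₁c x hx) (hprod_int V₂ hV₂c x hx)]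
      apply intervalIntegral.integral_congr
      intro τ hτ
      rw [uIcc_of_le hx] at hτ
      simp only
      rw [← mul_sub]
      congr 1
      rw [← intervalIntegral.integral_sub (hV₁int τ x hτ.1 hx) (hV₂int τ x hτ.1 hx)]
    rw [hA]; ring
  -- the target statement
  intro t₀ ht₀
  set g : ℝ → ℝ := fun u => ∫ s in (0:ℝ)..u, |W s| with hgdef
  have hg_nonneg : ∀ u : ℝ, 0 ≤ u → 0 ≤ g u := fun u hu =>
    intervalIntegral.integral_nonneg hu (fun s _ => abs_nonneg _)
  have hg_mono : ∀ u v : ℝ, 0 ≤ u → u ≤ v → g u ≤ g v := by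
    intro u v hu huv
    apply intervalIntegral.integral_mono_interval le_rfl hu huv
    · exact Filter.Eventually.of_forall fun s => abs_nonneg _
    · exact habsint 0 v le_rfl (hu.trans huv)
  -- bound on the derivative of W
  have hW'bd : ∀ t : ℝ, 0 ≤ t → ∀ x ∈ Icc (0:ℝ) t,
      |(-(N:ℝ) * ∫ τ in (0:ℝ)..x, Cb (x - τ) * ∫ s in τ..x, W s)| ≤
        (N:ℝ) * ν * g t * t := by
    intro t ht x hx
    obtain ⟨hx0, hxt⟩ := hx
    have key : ‖∫ τ in (0:ℝ)..x, Cb (x - τ) * ∫ s in τ..x, W s‖ ≤ (ν * g t) * |x - 0| := by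
      apply intervalIntegral.norm_integral_le_of_norm_le_const
      intro τ hτ
      rw [uIoc_of_le hx0] at hτ
      rcases eq_or_lt_of_le hτ.2 with h | h
      · rw [h]
        simp only [intervalIntegral.integral_same, mul_zero, norm_zero]
        have := hg_nonneg t ht
        positivity
      · have hxτ : 0 < x - τ := sub_pos.2 h
        rw [Real.norm_eq_abs, abs_mul]
        have h1 : |Cb (x - τ)| ≤ ν := by
          rw [abs_of_pos (hCb_pos _ hxτ)]; exact hCb_le _ hxτ
        have h2 : |∫ s in τ..x, W s| ≤ g t := by
          have hτ0 : 0 ≤ τ := hτ.1.le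
          calc |∫ s in τ..x, W s| ≤ ∫ s in τ..x, |W s| :=
                intervalIntegral.abs_integral_le_integral_abs h.le
            _ ≤ g x := intervalIntegral.integral_mono_interval hτ0 h.le le_rfl
                (Filter.Eventually.of_forall fun s => abs_nonneg _)
                (habsint 0 x le_rfl hx0)
            _ ≤ g t := hg_mono x t hx0 hxt
        exact mul_le_mul h1 h2 (abs_nonneg _) hν.le
    rw [Real.norm_eq_abs] at key
    rw [abs_mul, abs_neg, Nat.abs_cast]
    have hxabs : |x - 0| = x := by rw [sub_zero, abs_of_nonneg hx0]
    rw [hxabs] at key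
    have hNnn : (0:ℝ) ≤ (N:ℝ) := Nat.cast_nonneg N
    have hgt := hg_nonneg t ht
    calc (N:ℝ) * |∫ τ in (0:ℝ)..x, Cb (x - τ) * ∫ s in τ..x, W s| ≤
          (N:ℝ) * ((ν * g t) * x) := by
            exact mul_le_mul_of_nonneg_left key hNnn
      _ ≤ (N:ℝ) * (ν * g t * t) := by
            exact mul_le_mul_of_nonneg_left
              (mul_le_mul_of_nonneg_left hxt (mul_nonneg hν.le hgt)) hNnn
      _ = (N:ℝ) * ν * g t * t := by ring
  -- bound on |W| in terms of g, via the mean value inequality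
  have hWbd : ∀ t ∈ Icc (0:ℝ) t₀, |W t| ≤ ((N:ℝ) * ν * t₀ ^ 2) * g t := by
    intro t ht
    have hmv := norm_image_sub_le_of_norm_deriv_le_segment'
      (f := W)
      (f' := fun x => -(N:ℝ) * ∫ τ in (0:ℝ)..x, Cb (x - τ) * ∫ s in τ..x, W s)
      (C := (N:ℝ) * ν * g t * t)
      (fun x hx => (hW' x hx.1).hasDerivWithinAt)
      (fun x hx => by
        rw [Real.norm_eq_abs]
        exact hW'bd t ht.1 x ⟨hx.1, hx.2.le⟩)
      t (right_mem_Icc.2 ht.1)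
    rw [hW0, sub_zero, Real.norm_eq_abs] at hmv
    have hgt := hg_nonneg t ht.1
    have hNnn : (0:ℝ) ≤ (N:ℝ) := Nat.cast_nonneg N
    have ht2 : t * t ≤ t₀ ^ 2 := by nlinarith [ht.1, ht.2]
    calc |W t| ≤ (N:ℝ) * ν * g t * t * (t - 0) := hmv
      _ = ((N:ℝ) * ν * g t) * (t * t) := by ring
      _ ≤ ((N:ℝ) * ν * g t) * t₀ ^ 2 := by
          exact mul_le_mul_of_nonneg_left ht2 (by positivity)
      _ = ((N:ℝ) * ν * t₀ ^ 2) * g t := by ring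
  -- Grönwall's inequality applied to g
  have hgcont : ContinuousOn g (Icc 0 t₀) := by
    have h := intervalIntegral.continuousOn_primitive_interval
      (a := (0:ℝ)) (b := t₀) (μ := volume) (f := fun s => |W s|)
      ((habsWc.mono (hsub 0 t₀ le_rfl ht₀)).integrableOn_compact isCompact_uIcc)
    rwa [uIcc_of_le ht₀] at h
  have hgderiv : ∀ x ∈ Ico (0:ℝ) t₀, HasDerivWithinAt g (|W x|) (Ici x) x := by
    intro x hx
    apply intervalIntegral.integral_hasDerivWithinAt_right
      (habsint 0 x le_rfl hx.1)
    · refine ⟨Ici x, Filter.mem_of_superset self_mem_nhdsWithin Ioi_subset_Ici_self, ?_⟩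
      exact (habsWc.mono (Ici_subset_Ici.2 hx.1)).aestronglyMeasurable measurableSet_Ici
    · exact (habsWc x hx.1).mono (Ioi_subset_Ici_self.trans (Ici_subset_Ici.2 hx.1))
  have hbound : ∀ x ∈ Ico (0:ℝ) t₀,
      ‖|W x|‖ ≤ ((N:ℝ) * ν * t₀ ^ 2) * ‖g x‖ + 0 := by
    intro x hx
    rw [Real.norm_eq_abs, abs_abs, Real.norm_eq_abs, abs_of_nonneg (hg_nonneg x hx.1),
      add_zero]
    exact hWbd x ⟨hx.1, hx.2.le⟩
  have hg0 : ‖g 0‖ ≤ 0 := by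
    simp [hgdef]
  have hle := norm_le_gronwallBound_of_norm_deriv_right_le hgcont hgderiv hg0 hbound
  have hgt₀ : g t₀ = 0 := by
    have h := hle t₀ (right_mem_Icc.2 ht₀)
    rw [gronwallBound_ε0_δ0, Real.norm_eq_abs] at h
    exact abs_eq_zero.1 (le_antisymm h (abs_nonneg _))
  have hfin := hWbd t₀ (right_mem_Icc.2 ht₀)
  rw [hgt₀, mul_zero] at hfin
  have : W t₀ = 0 := abs_eq_zero.1 (le_antisymm hfin (abs_nonneg _))
  have := sub_eq_zero.1 this
  exact this
end

section
/- Let D, R > 0 and N ∈ ℕ with N ≥ 1. Define F : (0,∞) × ℝ × ℝ → ℝ by F(h, a, b) = ∫_{-R}^{R} e^{-(a - x)²/(4hD)} · ( e^{-(b - √(R² - x²))²/(4hD)} - e^{-(b + √(R² - x²))²/(4hD)} ) dx. Then there exists a constant L > 0, depending only on D and R, such that for all h > 0 and all a, a', b, b' ∈ ℝ: |F(h, a, b) - F(h, a', b')| ≤ L·(|a - a'| + |b - b'|). -/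
open MeasureTheory Real

-- |t| * exp(-t^2/2) ≤ 1
lemma aux_abs_mul_exp (t : ℝ) : |t| * Real.exp (-t ^ 2 / 2) ≤ 1 := by
  have h1 : |t| ≤ Real.exp (t ^ 2 / 2) := by
    have := Real.add_one_le_exp (t ^ 2 / 2)
    nlinarith [sq_nonneg (|t| - 1), sq_abs t]
  have h2 : Real.exp (-t ^ 2 / 2) = (Real.exp (t ^ 2 / 2))⁻¹ := by
    rw [← Real.exp_neg]; ring_nf
  rw [h2]
  rw [mul_inv_le_iff₀ (Real.exp_pos _), one_mul]
  exact h1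

lemma aux_core (u v : ℝ) (h : v ^ 2 ≤ u ^ 2) :
    Real.exp (-v ^ 2) - Real.exp (-u ^ 2) ≤ 3 * |u - v| * Real.exp (-v ^ 2 / 2) := by
  set d := |u - v| with hd
  have hd0 : 0 ≤ d := abs_nonneg _
  set E := Real.exp (-v ^ 2 / 2) with hE
  have hE0 : 0 < E := Real.exp_pos _
  have hE1 : E ≤ 1 := Real.exp_le_one_iff.2 (by nlinarith [sq_nonneg v])
  have hEv : |v| * E ≤ 1 := aux_abs_mul_exp v
  have hsq : Real.exp (-v ^ 2) = E * E := by
    rw [hE, ← Real.exp_add]; ring_nf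
  have habs : |v| ≤ |u| := by
    have := Real.sqrt_le_sqrt h
    rwa [Real.sqrt_sq_eq_abs, Real.sqrt_sq_eq_abs] at this
  rcases le_total 1 d with hcase | hcase
  · -- d ≥ 1
    have h2 : Real.exp (-u ^ 2) > 0 := Real.exp_pos _
    nlinarith
  · -- d ≤ 1
    have hdiff : u ^ 2 - v ^ 2 ≤ d * (2 * |v| + d) := by
      have h1 : |u| - |v| ≤ d := (abs_sub_abs_le_abs_sub u v)
      have h2 : |u| + |v| ≤ 2 * |v| + d := by nlinarith
      have : u ^ 2 - v ^ 2 = (|u| - |v|) * (|u| + |v|) := by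
        nlinarith [sq_abs u, sq_abs v]
      nlinarith [abs_nonneg u, abs_nonneg v]
    have hm : 1 - Real.exp (-(u ^ 2 - v ^ 2)) ≤ u ^ 2 - v ^ 2 := by
      have := Real.add_one_le_exp (-(u ^ 2 - v ^ 2))
      linarith
    have hkey : Real.exp (-v ^ 2) - Real.exp (-u ^ 2)
        = Real.exp (-v ^ 2) * (1 - Real.exp (-(u ^ 2 - v ^ 2))) := by
      rw [mul_sub, mul_one, ← Real.exp_add]; ring_nf
    have hm0 : 0 ≤ 1 - Real.exp (-(u ^ 2 - v ^ 2)) := by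
      have : Real.exp (-(u ^ 2 - v ^ 2)) ≤ 1 := Real.exp_le_one_iff.2 (by linarith)
      linarith
    rw [hkey, hsq]
    set m := 1 - Real.exp (-(u ^ 2 - v ^ 2)) with hmdef
    have hmd : m ≤ d * (2 * |v| + d) := le_trans hm hdiff
    have t1 : E * E * m ≤ E * E * (d * (2 * |v| + d)) :=
      mul_le_mul_of_nonneg_left hmd (by positivity)
    have t2 : 2 * d * E * (|v| * E) ≤ 2 * d * E * 1 :=
      mul_le_mul_of_nonneg_left hEv (by positivity)
    have hde : d * E ≤ 1 := by nlinarith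
    have t3 : d * d * (E * E) ≤ d * E := by
      nlinarith [mul_nonneg hd0 hE0.le, hde]
    nlinarith [t1, t2, t3]

lemma aux_diff (u v : ℝ) :
    |Real.exp (-u ^ 2) - Real.exp (-v ^ 2)|
      ≤ 3 * |u - v| * (Real.exp (-u ^ 2 / 2) + Real.exp (-v ^ 2 / 2)) := by
  rcases le_total (v ^ 2) (u ^ 2) with h | h
  · have h1 : Real.exp (-u ^ 2) ≤ Real.exp (-v ^ 2) := Real.exp_le_exp.2 (by linarith)
    rw [abs_sub_comm, abs_of_nonneg (by linarith)]
    have := aux_core u v h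
    nlinarith [Real.exp_pos (-u ^ 2 / 2), abs_nonneg (u - v)]
  · have h1 : Real.exp (-v ^ 2) ≤ Real.exp (-u ^ 2) := Real.exp_le_exp.2 (by linarith)
    rw [abs_of_nonneg (by linarith)]
    have := aux_core v u h
    rw [abs_sub_comm] at this
    nlinarith [Real.exp_pos (-v ^ 2 / 2), abs_nonneg (u - v)]

lemma aux_diff_scaled (c : ℝ) (hc : 0 < c) (u v : ℝ) :
    |Real.exp (-u ^ 2 / c) - Real.exp (-v ^ 2 / c)|
      ≤ 3 / Real.sqrt c * |u - v|
        * (Real.exp (-u ^ 2 / (2 * c)) + Real.exp (-v ^ 2 / (2 * c))) := by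
  have hs : 0 < Real.sqrt c := Real.sqrt_pos.2 hc
  have hsq : Real.sqrt c ^ 2 = c := Real.sq_sqrt hc.le
  have hq : ∀ t : ℝ, -(t / Real.sqrt c) ^ 2 = -t ^ 2 / c := by
    intro t; rw [div_pow, hsq]; ring
  have h := aux_diff (u / Real.sqrt c) (v / Real.sqrt c)
  rw [hq u, hq v] at h
  have e5 : |u / Real.sqrt c - v / Real.sqrt c| = |u - v| / Real.sqrt c := by
    rw [div_sub_div_same, abs_div, abs_of_pos hs]
  rw [e5] at h
  have e3 : -u ^ 2 / c / 2 = -u ^ 2 / (2 * c) := by ring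
  have e4 : -v ^ 2 / c / 2 = -v ^ 2 / (2 * c) := by ring
  rw [e3, e4] at h
  calc |Real.exp (-u ^ 2 / c) - Real.exp (-v ^ 2 / c)|
      ≤ 3 * (|u - v| / Real.sqrt c)
        * (Real.exp (-u ^ 2 / (2 * c)) + Real.exp (-v ^ 2 / (2 * c))) := h
    _ = 3 / Real.sqrt c * |u - v|
        * (Real.exp (-u ^ 2 / (2 * c)) + Real.exp (-v ^ 2 / (2 * c))) := by ring

-- pointwise bound for the integrand difference
lemma aux_pointwise (c : ℝ) (hc : 0 < c) (p p' q q' s : ℝ) :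
    |Real.exp (-p ^ 2 / c) * (Real.exp (-(q - s) ^ 2 / c) - Real.exp (-(q + s) ^ 2 / c))
      - Real.exp (-p' ^ 2 / c) * (Real.exp (-(q' - s) ^ 2 / c) - Real.exp (-(q' + s) ^ 2 / c))|
    ≤ 6 / Real.sqrt c * |p - p'|
        * (Real.exp (-p ^ 2 / (2 * c)) + Real.exp (-p' ^ 2 / (2 * c)))
      + 12 / Real.sqrt c * |q - q'| * Real.exp (-p' ^ 2 / (2 * c)) := by
  have hs : 0 < Real.sqrt c := Real.sqrt_pos.2 hc
  set g : ℝ → ℝ := fun t => Real.exp (-t ^ 2 / c) with hg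
  set G : ℝ → ℝ := fun t => Real.exp (-t ^ 2 / (2 * c)) with hG
  have hg01 : ∀ t, 0 < g t ∧ g t ≤ 1 := fun t =>
    ⟨Real.exp_pos _, Real.exp_le_one_iff.2
      (div_nonpos_of_nonpos_of_nonneg (by nlinarith [sq_nonneg t]) hc.le)⟩
  have hG01 : ∀ t, 0 < G t ∧ G t ≤ 1 := fun t =>
    ⟨Real.exp_pos _, Real.exp_le_one_iff.2
      (div_nonpos_of_nonpos_of_nonneg (by nlinarith [sq_nonneg t]) (by linarith))⟩
  have hgG : ∀ t, g t ≤ G t := by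
    intro t
    exact Real.exp_le_exp.2 (by rw [div_le_div_iff₀ (by linarith) (by linarith)]; nlinarith [sq_nonneg t])
  have key : g p * (g (q - s) - g (q + s)) - g p' * (g (q' - s) - g (q' + s))
      = (g p - g p') * (g (q - s) - g (q + s))
        + g p' * ((g (q - s) - g (q' - s)) + (g (q' + s) - g (q + s))) := by ring
  have h1 : |g p - g p'| ≤ 3 / Real.sqrt c * |p - p'| * (G p + G p') :=
    aux_diff_scaled c hc p p'
  have h2 : |g (q - s) - g (q + s)| ≤ 2 := by
    have a1 := hg01 (q - s); have a2 := hg01 (q + s)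
    rw [abs_le]; constructor <;> nlinarith [a1.1, a1.2, a2.1, a2.2]
  have h3 : |g (q - s) - g (q' - s)| ≤ 6 / Real.sqrt c * |q - q'| := by
    have := aux_diff_scaled c hc (q - s) (q' - s)
    have e : (q - s) - (q' - s) = q - q' := by ring
    rw [e] at this
    have b1 := (hG01 (q - s)).2; have b2 := (hG01 (q' - s)).2
    calc |g (q - s) - g (q' - s)|
        ≤ 3 / Real.sqrt c * |q - q'| * (G (q - s) + G (q' - s)) := this
      _ ≤ 3 / Real.sqrt c * |q - q'| * (1 + 1) := by gcongr
      _ = 6 / Real.sqrt c * |q - q'| := by ring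
  have h4 : |g (q' + s) - g (q + s)| ≤ 6 / Real.sqrt c * |q - q'| := by
    have := aux_diff_scaled c hc (q' + s) (q + s)
    have e : (q' + s) - (q + s) = q' - q := by ring
    rw [e, abs_sub_comm q' q] at this
    have b1 := (hG01 (q' + s)).2; have b2 := (hG01 (q + s)).2
    calc |g (q' + s) - g (q + s)|
        ≤ 3 / Real.sqrt c * |q - q'| * (G (q' + s) + G (q + s)) := this
      _ ≤ 3 / Real.sqrt c * |q - q'| * (1 + 1) := by gcongr
      _ = 6 / Real.sqrt c * |q - q'| := by ring
  calc |g p * (g (q - s) - g (q + s)) - g p' * (g (q' - s) - g (q' + s))|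
      = |(g p - g p') * (g (q - s) - g (q + s))
          + g p' * ((g (q - s) - g (q' - s)) + (g (q' + s) - g (q + s)))| := by rw [key]
    _ ≤ |(g p - g p') * (g (q - s) - g (q + s))|
          + |g p' * ((g (q - s) - g (q' - s)) + (g (q' + s) - g (q + s)))| := abs_add_le _ _
    _ = |g p - g p'| * |g (q - s) - g (q + s)|
          + g p' * |(g (q - s) - g (q' - s)) + (g (q' + s) - g (q + s))| := by
        rw [abs_mul, abs_mul, abs_of_pos (hg01 p').1]
    _ ≤ (3 / Real.sqrt c * |p - p'| * (G p + G p')) * 2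
          + G p' * (|g (q - s) - g (q' - s)| + |g (q' + s) - g (q + s)|) := by
        refine add_le_add ?_ ?_
        · exact mul_le_mul h1 h2 (abs_nonneg _)
            (mul_nonneg (by positivity) (by linarith [(hG01 p).1, (hG01 p').1]))
        · exact mul_le_mul (hgG p') (abs_add_le _ _) (abs_nonneg _) (hG01 p').1.le
    _ ≤ (3 / Real.sqrt c * |p - p'| * (G p + G p')) * 2
          + G p' * (6 / Real.sqrt c * |q - q'| + 6 / Real.sqrt c * |q - q'|) :=
        add_le_add le_rfl (mul_le_mul_of_nonneg_left (add_le_add h3 h4) (hG01 p').1.le)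
    _ = 6 / Real.sqrt c * |p - p'| * (G p + G p')
          + 12 / Real.sqrt c * |q - q'| * G p' := by ring

-- Gaussian integral facts
lemma aux_gauss_integrable (k : ℝ) (hk : 0 < k) (p : ℝ) :
    Integrable (fun x : ℝ => Real.exp (-(p - x) ^ 2 / k)) := by
  have heq : (fun x : ℝ => Real.exp (-(p - x) ^ 2 / k))
      = fun x : ℝ => Real.exp (-(1 / k) * (x - p) ^ 2) := by
    funext x; congr 1; ring
  rw [heq]
  exact (integrable_exp_neg_mul_sq (by positivity : (0:ℝ) < 1 / k)).comp_sub_right p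

lemma aux_gauss_integral (k : ℝ) (hk : 0 < k) (p : ℝ) :
    ∫ x : ℝ, Real.exp (-(p - x) ^ 2 / k) = Real.sqrt (Real.pi * k) := by
  have heq : (fun x : ℝ => Real.exp (-(p - x) ^ 2 / k))
      = fun x : ℝ => Real.exp (-(1 / k) * (x - p) ^ 2) := by
    funext x; congr 1; ring
  rw [heq]
  rw [integral_sub_right_eq_self (μ := volume) (fun x : ℝ => Real.exp (-(1 / k) * x ^ 2)) p]
  rw [integral_gaussian]
  congr 1
  rw [one_div, div_eq_mul_inv, inv_inv]

/-- **Lipschitz estimate (3.27)** for the building block of the chemotaxis term of the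
hybrid alignment–chemotaxis model: the Gaussian integral `F(h,a,b)` is Lipschitz in
`(a,b)` with a constant depending only on `D` and `R`, uniformly in the elapsed time
`h > 0`. -/
theorem chemotaxis_term_lipschitz
    (D R : ℝ) (hD : 0 < D) (hR : 0 < R) (N : ℕ) (hN : 1 ≤ N) :
    ∃ L > (0 : ℝ), ∀ h > (0 : ℝ), ∀ a a' b b' : ℝ,
      |(∫ x in (-R)..R,
          Real.exp (-(a - x) ^ 2 / (4 * h * D)) *
            (Real.exp (-(b - Real.sqrt (R ^ 2 - x ^ 2)) ^ 2 / (4 * h * D)) -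
              Real.exp (-(b + Real.sqrt (R ^ 2 - x ^ 2)) ^ 2 / (4 * h * D)))) -
        (∫ x in (-R)..R,
          Real.exp (-(a' - x) ^ 2 / (4 * h * D)) *
            (Real.exp (-(b' - Real.sqrt (R ^ 2 - x ^ 2)) ^ 2 / (4 * h * D)) -
              Real.exp (-(b' + Real.sqrt (R ^ 2 - x ^ 2)) ^ 2 / (4 * h * D))))| ≤
      L * (|a - a'| + |b - b'|) := by
  refine ⟨36, by norm_num, ?_⟩
  intro h hh a a' b b'
  set c : ℝ := 4 * h * D with hcdef
  have hc : 0 < c := by positivity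
  have hs : 0 < Real.sqrt c := Real.sqrt_pos.2 hc
  have hRR : -R ≤ R := by linarith
  set S : ℝ → ℝ := fun x => Real.sqrt (R ^ 2 - x ^ 2) with hSdef
  -- the two integrands
  set f₁ : ℝ → ℝ := fun x =>
    Real.exp (-(a - x) ^ 2 / c) *
      (Real.exp (-(b - S x) ^ 2 / c) - Real.exp (-(b + S x) ^ 2 / c)) with hf₁
  set f₂ : ℝ → ℝ := fun x =>
    Real.exp (-(a' - x) ^ 2 / c) *
      (Real.exp (-(b' - S x) ^ 2 / c) - Real.exp (-(b' + S x) ^ 2 / c)) with hf₂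
  have cont : ∀ p q : ℝ, Continuous (fun x : ℝ =>
      Real.exp (-(p - x) ^ 2 / c) *
        (Real.exp (-(q - S x) ^ 2 / c) - Real.exp (-(q + S x) ^ 2 / c))) := by
    intro p q
    fun_prop
  have int1 : IntervalIntegrable f₁ volume (-R) R := (cont a b).intervalIntegrable _ _
  have int2 : IntervalIntegrable f₂ volume (-R) R := (cont a' b').intervalIntegrable _ _
  rw [← intervalIntegral.integral_sub int1 int2]
  -- the dominating function
  set φ : ℝ → ℝ := fun x =>
    6 / Real.sqrt c * |a - a'|
      * (Real.exp (-(a - x) ^ 2 / (2 * c)) + Real.exp (-(a' - x) ^ 2 / (2 * c)))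
    + 12 / Real.sqrt c * |b - b'| * Real.exp (-(a' - x) ^ 2 / (2 * c)) with hφ
  have hφ0 : ∀ x, 0 ≤ φ x := by
    intro x; rw [hφ]; positivity
  have hφint : Integrable φ := by
    have g1 := aux_gauss_integrable (2 * c) (by positivity) a
    have g2 := aux_gauss_integrable (2 * c) (by positivity) a'
    exact ((g1.add g2).const_mul _).add (g2.const_mul _)
  have hφiint : IntervalIntegrable φ volume (-R) R := hφint.intervalIntegrable
  have hpt : ∀ x : ℝ, |f₁ x - f₂ x| ≤ φ x := by
    intro x
    have := aux_pointwise c hc (a - x) (a' - x) b b' (S x)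
    have e1 : (a - x) - (a' - x) = a - a' := by ring
    rw [e1] at this
    exact this
  -- bound the integral by the integral of φ
  have step1 : |∫ x in (-R)..R, (f₁ x - f₂ x)| ≤ |∫ x in (-R)..R, φ x| := by
    have := intervalIntegral.norm_integral_le_abs_of_norm_le (μ := volume)
      (f := fun x => f₁ x - f₂ x) (a := -R) (b := R)
      (Filter.Eventually.of_forall fun t => by
        simpa using hpt t) hφiint
    simpa using this
  have step2 : (∫ x in (-R)..R, φ x) ≤ ∫ x : ℝ, φ x := by
    rw [intervalIntegral.integral_of_le hRR]
    exact setIntegral_le_integral hφint (Filter.Eventually.of_forall hφ0)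
  have hφnn : 0 ≤ ∫ x in (-R)..R, φ x :=
    intervalIntegral.integral_nonneg hRR (fun x _ => hφ0 x)
  -- compute the full integral of φ
  have hval : (∫ x : ℝ, φ x)
      = 6 / Real.sqrt c * |a - a'| * (2 * Real.sqrt (Real.pi * (2 * c)))
        + 12 / Real.sqrt c * |b - b'| * Real.sqrt (Real.pi * (2 * c)) := by
    have g1 := aux_gauss_integrable (2 * c) (by positivity) a
    have g2 := aux_gauss_integrable (2 * c) (by positivity) a'
    have i1 := aux_gauss_integral (2 * c) (by positivity) a
    have i2 := aux_gauss_integral (2 * c) (by positivity) a'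
    have gA : Integrable (fun x : ℝ => 6 / Real.sqrt c * |a - a'|
        * (Real.exp (-(a - x) ^ 2 / (2 * c)) + Real.exp (-(a' - x) ^ 2 / (2 * c)))) volume := by
      have hadd : Integrable (fun x : ℝ =>
          Real.exp (-(a - x) ^ 2 / (2 * c)) + Real.exp (-(a' - x) ^ 2 / (2 * c))) volume :=
        g1.add g2
      exact hadd.const_mul _
    have gB : Integrable (fun x : ℝ =>
        12 / Real.sqrt c * |b - b'| * Real.exp (-(a' - x) ^ 2 / (2 * c))) volume :=
      g2.const_mul _
    rw [hφ]
    rw [integral_add gA gB, integral_const_mul, integral_const_mul, integral_add g1 g2, i1, i2]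
    ring
  -- numerical bound
  have hsqrt : Real.sqrt (Real.pi * (2 * c)) ≤ 3 * Real.sqrt c := by
    have : Real.sqrt (Real.pi * (2 * c)) = Real.sqrt (2 * Real.pi) * Real.sqrt c := by
      rw [← Real.sqrt_mul (by positivity)]
      congr 1; ring
    rw [this]
    have h9 : Real.sqrt (2 * Real.pi) ≤ 3 := by
      have : (2 : ℝ) * Real.pi ≤ 9 := by nlinarith [Real.pi_le_four]
      calc Real.sqrt (2 * Real.pi) ≤ Real.sqrt 9 := Real.sqrt_le_sqrt this
        _ = 3 := by
            rw [show (9:ℝ) = 3 ^ 2 by norm_num, Real.sqrt_sq (by norm_num)]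
    nlinarith [hs.le]
  have hbound : (∫ x : ℝ, φ x) ≤ 36 * (|a - a'| + |b - b'|) := by
    rw [hval]
    have e1 : 6 / Real.sqrt c * |a - a'| * (2 * Real.sqrt (Real.pi * (2 * c)))
        ≤ 6 / Real.sqrt c * |a - a'| * (2 * (3 * Real.sqrt c)) := by
      gcongr
    have e2 : 12 / Real.sqrt c * |b - b'| * Real.sqrt (Real.pi * (2 * c))
        ≤ 12 / Real.sqrt c * |b - b'| * (3 * Real.sqrt c) := by
      gcongr
    have e3 : 6 / Real.sqrt c * |a - a'| * (2 * (3 * Real.sqrt c)) = 36 * |a - a'| := by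
      field_simp; ring
    have e4 : 12 / Real.sqrt c * |b - b'| * (3 * Real.sqrt c) = 36 * |b - b'| := by
      field_simp; ring
    linarith [e1, e2, e3.le, e4.le]
  calc |∫ x in (-R)..R, (f₁ x - f₂ x)| ≤ |∫ x in (-R)..R, φ x| := step1
    _ = ∫ x in (-R)..R, φ x := abs_of_nonneg hφnn
    _ ≤ ∫ x : ℝ, φ x := step2
    _ ≤ 36 * (|a - a'| + |b - b'|) := hbound
end

section
/- Let β > 0, N ∈ ℕ with N ≥ 1, γ, ξ, η, D, R > 0, C̄(z) = γξR² e^{-R²/(4zD) - ηz}/(8z²D²) for z > 0, and g(t) = N ∫₀^t C̄(z) dz. Suppose (V_i, X_i) : [0,∞) → ℝ × ℝ, i = 1, …, N, are C¹ functions satisfying V_i'(t) = (β/N)·Σ_{j=1}^N (V_j(t) - V_i(t)) - ∫₀^t C̄(t-τ)·Σ_{j=1}^N (X_i(t) - X_j(τ)) dτ and X_i'(t) = V_i(t). Define X_CM = (1/N)ΣX_i, V_CM = (1/N)ΣV_i, and the deviations X̄_i = X_i - X_CM, V̄_i = V_i - V_CM. Then for each i the deviations satisfy the decoupled planar system V̄_i'(t)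 = -β·V̄_i(t) - g(t)·X̄_i(t) and X̄_i'(t) = V̄_i(t). -/
open MeasureTheory

/-- **Reduction to the decoupled planar system (5.23)–(5.24)**: in the variables
relative to the centre of mass, the linearized alignment–chemotaxis system becomes,
for each particle, `V̄' = -βV̄ - g(t)X̄`, `X̄' = V̄`, where `g(t) = N∫₀ᵗ C̄(z)dz`. -/
theorem deviation_system
    (β : ℝ) (hβ : 0 < β) (N : ℕ) (hN : 1 ≤ N)
    (γ ξ η D R : ℝ) (hγ : 0 < γ) (hξ : 0 < ξ) (hη : 0 < η) (hD : 0 < D) (hR : 0 < R)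
    (Cb : ℝ → ℝ)
    (hCb : ∀ z > 0, Cb z =
      γ * ξ * R ^ 2 * Real.exp (-R ^ 2 / (4 * z * D) - η * z) / (8 * z ^ 2 * D ^ 2))
    (g : ℝ → ℝ) (hg : ∀ t, g t = (N : ℝ) * ∫ z in (0 : ℝ)..t, Cb z)
    (V X : Fin N → ℝ → ℝ)
    (hV : ∀ i, ∀ t ≥ (0 : ℝ), HasDerivAt (V i)
      ((β / N) * ∑ j : Fin N, (V j t - V i t) -
        ∫ τ in (0 : ℝ)..t, Cb (t - τ) * ∑ j : Fin N, (X i t - X j τ)) t)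
    (hX : ∀ i, ∀ t ≥ (0 : ℝ), HasDerivAt (X i) (V i t) t) :
    ∀ i, ∀ t ≥ (0 : ℝ),
      HasDerivAt (fun s => V i s - (1 / N : ℝ) * ∑ j : Fin N, V j s)
        (-β * (V i t - (1 / N : ℝ) * ∑ j : Fin N, V j t) -
          g t * (X i t - (1 / N : ℝ) * ∑ j : Fin N, X j t)) t ∧
      HasDerivAt (fun s => X i s - (1 / N : ℝ) * ∑ j : Fin N, X j s)
        (V i t - (1 / N : ℝ) * ∑ j : Fin N, V j t) t := by
  intro i t ht
  have hNpos : (0 : ℝ) < N := by exact_mod_cast Nat.lt_of_lt_of_le Nat.zero_lt_one hN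
  have hNne : (N : ℝ) ≠ 0 := ne_of_gt hNpos
  -- derivative of the deviation of X
  have hXbar : HasDerivAt (fun s => X i s - (1 / N : ℝ) * ∑ j : Fin N, X j s)
      (V i t - (1 / N : ℝ) * ∑ j : Fin N, V j t) t := by
    have h1 : HasDerivAt (fun s => ∑ j : Fin N, X j s) (∑ j : Fin N, V j t) t :=
      HasDerivAt.fun_sum (fun j _ => hX j t ht)
    exact (hX i t ht).sub (h1.const_mul _)
  refine ⟨?_, hXbar⟩
  -- integrability of Cb on (0, t]
  have ha : (0 : ℝ) < R ^ 2 / (4 * D) := by positivity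
  set a : ℝ := R ^ 2 / (4 * D) with ha_def
  have hCbInt : IntervalIntegrable Cb volume 0 t := by
    rw [intervalIntegrable_iff_integrableOn_Ioc_of_le ht]
    set φ : ℝ → ℝ := fun z =>
      γ * ξ * R ^ 2 * Real.exp (-R ^ 2 / (4 * z * D) - η * z) / (8 * z ^ 2 * D ^ 2) with hφ
    have hφmeas : Measurable φ := by
      apply Measurable.div
      · exact (measurable_const.mul
          (((measurable_const.div
              ((measurable_const.mul measurable_id).mul measurable_const)).sub
            (measurable_const.mul measurable_id)).exp))
      · exact (measurable_const.mul (measurable_id.pow_const 2)).mul measurable_const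
    have hφbound : ∀ z ∈ Set.Ioc (0 : ℝ) t, ‖φ z‖ ≤ γ * ξ * R ^ 2 * (4 / a ^ 2) / (8 * D ^ 2) := by
      intro z hz
      have hz0 : 0 < z := hz.1
      have hy : 0 < a / (2 * z) := by positivity
      have hexp1 : Real.exp (a / (2 * z)) ≥ a / (2 * z) := by
        have := Real.add_one_le_exp (a / (2 * z))
        linarith
      have hexp2 : Real.exp (-(a / (2 * z))) ≤ 2 * z / a := by
        rw [Real.exp_neg]
        rw [inv_le_comm₀ (Real.exp_pos _) (by positivity)] at *
        calc (2 * z / a)⁻¹ = a / (2 * z) := by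
              rw [inv_div]
            _ ≤ Real.exp (a / (2 * z)) := hexp1
      have haz : -R ^ 2 / (4 * z * D) = -(a / (2 * z)) + -(a / (2 * z)) := by
        rw [ha_def]; field_simp; ring
      have hE : Real.exp (-R ^ 2 / (4 * z * D) - η * z) ≤ (2 * z / a) ^ 2 := by
        calc Real.exp (-R ^ 2 / (4 * z * D) - η * z)
            ≤ Real.exp (-R ^ 2 / (4 * z * D)) := by
              apply Real.exp_le_exp.2
              nlinarith [hη.le, hz0.le]
          _ = Real.exp (-(a / (2 * z))) * Real.exp (-(a / (2 * z))) := by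
              rw [← Real.exp_add, haz]
          _ ≤ (2 * z / a) * (2 * z / a) := by
              apply mul_le_mul hexp2 hexp2 (Real.exp_pos _).le (by positivity)
          _ = (2 * z / a) ^ 2 := (sq _).symm
      have hφz : φ z ≤ γ * ξ * R ^ 2 * (4 / a ^ 2) / (8 * D ^ 2) := by
        have h1 : φ z ≤ γ * ξ * R ^ 2 * ((2 * z / a) ^ 2) / (8 * z ^ 2 * D ^ 2) := by
          apply div_le_div_of_nonneg_right ?_ ?_ |>.trans_eq rfl
          · exact mul_le_mul_of_nonneg_left hE (by positivity)
          · positivity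
        calc φ z ≤ γ * ξ * R ^ 2 * ((2 * z / a) ^ 2) / (8 * z ^ 2 * D ^ 2) := h1
          _ = γ * ξ * R ^ 2 * (4 / a ^ 2) / (8 * D ^ 2) := by
              field_simp
              ring
      have hφnn : 0 ≤ φ z := by positivity
      rwa [Real.norm_eq_abs, abs_of_nonneg hφnn]
    have hφint : IntegrableOn φ (Set.Ioc (0 : ℝ) t) volume := by
      apply Measure.integrableOn_of_bounded (M := γ * ξ * R ^ 2 * (4 / a ^ 2) / (8 * D ^ 2))
        measure_Ioc_lt_top.ne hφmeas.aestronglyMeasurable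
      exact (ae_restrict_iff' measurableSet_Ioc).2 (Filter.Eventually.of_forall hφbound)
    exact hφint.congr_fun (fun z hz => (hCb z hz.1).symm) measurableSet_Ioc
  -- integrability of τ ↦ Cb (t - τ)
  have hCbt : IntervalIntegrable (fun τ => Cb (t - τ)) volume 0 t := by
    have := (hCbInt.comp_sub_left t).symm
    simpa using this
  -- continuity of the position sums
  have hXcont : ∀ k : Fin N, ContinuousOn (fun τ => ∑ j : Fin N, (X k t - X j τ))
      (Set.uIcc (0 : ℝ) t) := by
    intro k
    rw [Set.uIcc_of_le ht]
    intro τ hτ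
    have hd : HasDerivAt (fun τ => ∑ j : Fin N, (X k t - X j τ))
        (∑ j : Fin N, -V j τ) τ :=
      HasDerivAt.fun_sum (fun j _ => (hasDerivAt_const τ (X k t)).sub (hX j τ hτ.1) |>.congr_deriv
        (by ring))
    exact hd.continuousAt.continuousWithinAt
  have hIint : ∀ k : Fin N, IntervalIntegrable
      (fun τ => Cb (t - τ) * ∑ j : Fin N, (X k t - X j τ)) volume 0 t :=
    fun k => hCbt.mul_continuousOn (hXcont k)
  -- value of ∫₀ᵗ Cb (t - τ) dτ
  set c0 : ℝ := ∫ τ in (0 : ℝ)..t, Cb (t - τ) with hc0_def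
  have hc0 : c0 = ∫ z in (0 : ℝ)..t, Cb z := by
    rw [hc0_def, intervalIntegral.integral_comp_sub_left Cb t]
    simp
  -- shift identity for the integrals
  have hfk : ∀ k : Fin N,
      (∫ τ in (0 : ℝ)..t, Cb (t - τ) * ∑ j : Fin N, (X k t - X j τ)) =
      (∫ τ in (0 : ℝ)..t, Cb (t - τ) * ∑ j : Fin N, (X i t - X j τ)) +
        ((N : ℝ) * (X k t - X i t)) * c0 := by
    intro k
    have hfun : (fun τ => Cb (t - τ) * ∑ j : Fin N, (X k t - X j τ)) =
        (fun τ => Cb (t - τ) * ∑ j : Fin N, (X i t - X j τ) +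
          ((N : ℝ) * (X k t - X i t)) * Cb (t - τ)) := by
      funext τ
      have hsum : ∑ j : Fin N, (X k t - X j τ) =
          (∑ j : Fin N, (X i t - X j τ)) + (N : ℝ) * (X k t - X i t) := by
        simp only [Finset.sum_sub_distrib, Finset.sum_const, Finset.card_univ,
          Fintype.card_fin, nsmul_eq_mul]
        ring
      rw [hsum]; ring
    rw [hfun, intervalIntegral.integral_add (hIint i) (hCbt.const_mul _),
      intervalIntegral.integral_const_mul]
  -- sum of the integrals
  have hsum : ∑ k : Fin N, (∫ τ in (0 : ℝ)..t, Cb (t - τ) * ∑ j : Fin N, (X k t - X j τ)) =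
      (N : ℝ) * (∫ τ in (0 : ℝ)..t, Cb (t - τ) * ∑ j : Fin N, (X i t - X j τ)) +
        ((N : ℝ) * (∑ k : Fin N, X k t) - (N : ℝ) * (N : ℝ) * X i t) * c0 := by
    rw [Finset.sum_congr rfl (fun k _ => hfk k), Finset.sum_add_distrib, Finset.sum_const,
      Finset.card_univ, Fintype.card_fin, nsmul_eq_mul, ← Finset.sum_mul]
    congr 1
    simp only [mul_sub, Finset.sum_sub_distrib, ← Finset.mul_sum, Finset.sum_const,
      Finset.card_univ, Fintype.card_fin, nsmul_eq_mul]
    ring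
  -- alignment terms sum to zero
  have hAsum : ∑ k : Fin N, ((β / N) * ∑ j : Fin N, (V j t - V k t)) = 0 := by
    rw [← Finset.mul_sum]
    have h0 : ∑ k : Fin N, ∑ j : Fin N, (V j t - V k t) = 0 := by
      simp only [Finset.sum_sub_distrib]
      rw [sub_eq_zero]
      exact Finset.sum_comm
    rw [h0, mul_zero]
  -- alignment term for particle i
  have hAi : ∑ j : Fin N, (V j t - V i t) = (∑ j : Fin N, V j t) - (N : ℝ) * V i t := by
    rw [Finset.sum_sub_distrib, Finset.sum_const, Finset.card_univ, Fintype.card_fin,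
      nsmul_eq_mul]
  -- derivative of the sum of velocities
  have hVsum : HasDerivAt (fun s => ∑ j : Fin N, V j s)
      (∑ k : Fin N, ((β / N) * ∑ j : Fin N, (V j t - V k t) -
        ∫ τ in (0 : ℝ)..t, Cb (t - τ) * ∑ j : Fin N, (X k t - X j τ))) t :=
    HasDerivAt.fun_sum (fun k _ => hV k t ht)
  have hmain := (hV i t ht).sub (hVsum.const_mul (1 / N : ℝ))
  convert hmain using 1
  case e'_4 => rfl
  case e'_5 => rfl
  case e'_8 => rfl
  have hsplit : ∑ k : Fin N, ((β / N) * ∑ j : Fin N, (V j t - V k t) -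
        ∫ τ in (0 : ℝ)..t, Cb (t - τ) * ∑ j : Fin N, (X k t - X j τ)) =
      (∑ k : Fin N, (β / N) * ∑ j : Fin N, (V j t - V k t)) -
        ∑ k : Fin N, ∫ τ in (0 : ℝ)..t, Cb (t - τ) * ∑ j : Fin N, (X k t - X j τ) :=
    Finset.sum_sub_distrib _ _
  rw [hsplit, hAsum, hsum, hg t, ← hc0, hAi, zero_sub]
  field_simp
  ring
end
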